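/- arXiv:2409.09064 — 10 statements merged into one kernel-verified Lean document; each statement's English description precedes it below -/
import Mathlib

section
/- Let p : ℕ⁺ → ℝ be a sequence of box prices with p_n ≥ 0 and ∑_{n=1}^∞ p_n = 1. If ∑_{n=1}^∞ n·p_n < ∞, then a strategy exists: there is a sequence a : ℕ⁺ → ℝ with a_n ≥ 0 and ∑_{n=1}^∞ a_n = 1 such that for every finite-cycle-permutation σ of the positive integers, the set {n : a_n ≥ ∑_{m ∈ orbit_σ(n)} p_m} is infinite. -/
open scoped BigOperators ENNReal

/-- A permutation of the positive integers all of whose cycles (orbits) are finite. -/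
def FiniteCycles (s : Equiv.Perm ℕ+) : Prop :=
  ∀ n : ℕ+, {m : ℕ+ | s.SameCycle n m}.Finite

/-- The price of the cycle of `n` under the permutation `s`, for box prices `p`. -/
noncomputable def cyclePrice (s : Equiv.Perm ℕ+) (p : ℕ+ → ℝ) (n : ℕ+) : ℝ :=
  ∑' m : {m : ℕ+ | s.SameCycle n m}, p m

/-- Monotonicity of subtype tsums for nonneg summable functions. -/
lemma tsum_subtype_mono {f : ℕ+ → ℝ} (hf0 : ∀ n, 0 ≤ f n) (hf : Summable f)
    {A B : Set ℕ+} (hAB : A ⊆ B) : ∑' x : A, f x ≤ ∑' x : B, f x := by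
  rw [tsum_subtype A f, tsum_subtype B f]
  exact Summable.tsum_le_tsum
    (fun n => Set.indicator_le_indicator_of_subset hAB hf0 n)
    (hf.indicator _) (hf.indicator _)

theorem stmt_0 (p : ℕ+ → ℝ) (hp : ∀ n, 0 ≤ p n) (hpsum : HasSum p 1)
    (h : Summable fun n : ℕ+ => (n : ℝ) * p n) :
    ∃ a : ℕ+ → ℝ, (∀ n, 0 ≤ a n) ∧ HasSum a 1 ∧
      ∀ σ : Equiv.Perm ℕ+, FiniteCycles σ →
        {n : ℕ+ | cyclePrice σ p n ≤ a n}.Infinite := by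
  have hsp : Summable p := hpsum.summable
  -- the tail sums
  set t : ℕ+ → ℝ := fun n => ∑' m : {m : ℕ+ | n ≤ m}, p m with ht_def
  have ht_ind : ∀ n, t n = ∑' m, Set.indicator {m : ℕ+ | n ≤ m} p m :=
    fun n => tsum_subtype _ _
  have ht_nonneg : ∀ n, 0 ≤ t n := fun n => tsum_nonneg (fun m => hp m)
  -- t is summable (its sum is ∑ n p n, via Tonelli in ℝ≥0∞)
  set P : ℕ+ → ℝ≥0∞ := fun m => ENNReal.ofReal (p m) with hP_def
  have hofReal : ∀ n : ℕ+,
      ENNReal.ofReal (t n) = ∑' m : ℕ+, Set.indicator {m : ℕ+ | n ≤ m} P m := by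
    intro n
    rw [ht_ind n, ENNReal.ofReal_tsum_of_nonneg
      (fun m => Set.indicator_nonneg (fun m _ => hp m) m) (hsp.indicator _)]
    congr 1; ext m
    by_cases hm : m ∈ {m : ℕ+ | n ≤ m} <;>
      simp [Set.indicator, hm, hP_def]
  have hinner : ∀ m : ℕ+,
      (∑' n : ℕ+, Set.indicator {m' : ℕ+ | n ≤ m'} P m) ≤ (m : ℕ) * P m := by
    intro m
    set g : ℕ → ℝ≥0∞ := fun k => if k < (m : ℕ) then P m else 0 with hg_def
    have hkey : ∀ n : ℕ+, Set.indicator {m' : ℕ+ | n ≤ m'} P m = g n.natPred := by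
      intro n
      have hn : 0 < (n : ℕ) := n.pos
      by_cases hnm : n ≤ m
      · have hnm' : (n : ℕ) ≤ (m : ℕ) := (PNat.coe_le_coe n m).mpr hnm
        have : n.natPred < (m : ℕ) := by rw [PNat.natPred]; omega
        simp [Set.indicator, hnm, hg_def, this]
      · have hnm' : ¬ (n : ℕ) ≤ (m : ℕ) := fun hc => hnm ((PNat.coe_le_coe n m).mp hc)
        have : ¬ n.natPred < (m : ℕ) := by rw [PNat.natPred]; omega
        simp [Set.indicator, hnm, hg_def, this]
    calc (∑' n : ℕ+, Set.indicator {m' : ℕ+ | n ≤ m'} P m)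
        = ∑' n : ℕ+, g n.natPred := by simp_rw [hkey]
      _ ≤ ∑' k : ℕ, g k := ENNReal.tsum_comp_le_tsum_of_injective PNat.natPred_injective g
      _ = ∑ k ∈ Finset.range (m : ℕ), g k := by
          apply tsum_eq_sum
          intro k hk
          simp only [Finset.mem_range] at hk
          simp [hg_def, hk]
      _ = (m : ℕ) • P m := by
          rw [Finset.sum_congr rfl (fun k hk => ?_), Finset.sum_const, Finset.card_range]
          simp only [Finset.mem_range] at hk
          simp [hg_def, hk]
      _ = (m : ℕ) * P m := nsmul_eq_mul _ _
  have htotal : (∑' n : ℕ+, ENNReal.ofReal (t n)) ≠ ⊤ := by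
    have hb : (∑' n : ℕ+, ENNReal.ofReal (t n)) ≤ ENNReal.ofReal (∑' m : ℕ+, (m : ℝ) * p m) := by
      calc (∑' n : ℕ+, ENNReal.ofReal (t n))
          = ∑' (n : ℕ+) (m : ℕ+), Set.indicator {m' : ℕ+ | n ≤ m'} P m := by
            simp_rw [hofReal]
        _ = ∑' (m : ℕ+) (n : ℕ+), Set.indicator {m' : ℕ+ | n ≤ m'} P m := ENNReal.tsum_comm
        _ ≤ ∑' m : ℕ+, ((m : ℕ) : ℝ≥0∞) * P m := ENNReal.tsum_le_tsum hinner
        _ = ∑' m : ℕ+, ENNReal.ofReal ((m : ℝ) * p m) := by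
            congr 1; ext m
            rw [ENNReal.ofReal_mul (by positivity), hP_def]
            norm_num
        _ = ENNReal.ofReal (∑' m : ℕ+, (m : ℝ) * p m) :=
            (ENNReal.ofReal_tsum_of_nonneg (fun m => mul_nonneg (by positivity) (hp m)) h).symm
    exact ne_top_of_le_ne_top ENNReal.ofReal_ne_top hb
  have ht_sum : Summable t := by
    have := ENNReal.summable_toReal htotal
    refine this.congr (fun n => ?_)
    exact ENNReal.toReal_ofReal (ht_nonneg n)
  -- choose N with small tail
  obtain ⟨s, hs⟩ : ∃ s : Finset ℕ+, (∑' x : {x : ℕ+ // x ∉ s}, t x) < 1 := by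
    have := (tendsto_tsum_compl_atTop_zero t).eventually_lt_const (one_pos)
    exact this.exists
  set N : ℕ+ := s.sup id + 1 with hN_def
  set S1 : Set ℕ+ := {n : ℕ+ | N ≤ n} with hS1_def
  have hS1s : S1 ⊆ {x : ℕ+ | x ∉ s} := by
    intro n hn hns
    have h1 : n ≤ s.sup id := Finset.le_sup (f := id) hns
    have h2 : N ≤ n := hn
    have : N ≤ s.sup id := le_trans h2 h1
    simp only [hN_def] at this
    exact absurd this (by simp [PNat.lt_add_one_iff.symm, lt_irrefl] <;> omega)
  set T' : ℝ := ∑' n : S1, t n with hT'_def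
  have hT'_le : T' ≤ ∑' x : {x : ℕ+ // x ∉ s}, t x := by
    exact tsum_subtype_mono ht_nonneg ht_sum hS1s
  have hT'_lt : T' < 1 := lt_of_le_of_lt hT'_le hs
  have hT'_nonneg : 0 ≤ T' := tsum_nonneg (fun n => ht_nonneg n)
  set c : ℝ := 1 - T' with hc_def
  have hc_nonneg : 0 ≤ c := by simp [hc_def]; linarith
  -- the strategy
  refine ⟨fun n => (if n = 1 then c else 0) + Set.indicator S1 t n, ?_, ?_, ?_⟩
  · intro n
    have h1 : (0:ℝ) ≤ if n = 1 then c else 0 := by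
      by_cases hn : n = 1 <;> simp [hn, hc_nonneg]
    have h2 : 0 ≤ Set.indicator S1 t n := Set.indicator_nonneg (fun m _ => ht_nonneg m) n
    exact add_nonneg h1 h2
  · have h1 : HasSum (fun n : ℕ+ => if n = 1 then c else 0) c := hasSum_ite_eq 1 c
    have h2 : HasSum (Set.indicator S1 t) T' := by
      apply hasSum_subtype_iff_indicator.mp
      exact (ht_sum.subtype S1).hasSum
    have := h1.add h2
    simpa [hc_def] using this
  · intro σ hσ
    apply Set.infinite_of_forall_exists_gt
    intro K
    set L : ℕ+ := max (K + 1) N with hL_def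
    -- the union of cycles of elements below L is finite
    have hB : (⋃ k ∈ {k : ℕ+ | k < L}, {m : ℕ+ | σ.SameCycle k m}).Finite :=
      (Set.finite_Iio L).biUnion (fun k _ => hσ k)
    have hinf : ({x : ℕ+ | L ≤ x}).Infinite := by
      apply Set.infinite_of_forall_exists_gt
      intro a
      refine ⟨max a L + 1, ?_, ?_⟩
      · exact le_trans (le_max_right a L) (le_of_lt (PNat.lt_add_one_iff.mpr le_rfl))
      · exact lt_of_le_of_lt (le_max_left a L) (PNat.lt_add_one_iff.mpr le_rfl)
    obtain ⟨x, hxL, hxB⟩ := (hinf.diff hB).nonempty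
    have hxL : L ≤ x := hxL
    -- every element of x's cycle is ≥ L
    have horb : ∀ m : ℕ+, σ.SameCycle x m → L ≤ m := by
      intro m hm
      by_contra hc'
      push_neg at hc'
      exact hxB (Set.mem_biUnion (show m ∈ {k : ℕ+ | k < L} from hc') hm.symm)
    -- take n the minimum of x's cycle
    obtain ⟨n, hn_mem, hn_min⟩ := Set.exists_min_image {m : ℕ+ | σ.SameCycle x m}
      (fun m => m) (hσ x) ⟨x, Equiv.Perm.SameCycle.refl σ x⟩
    have hxn : σ.SameCycle x n := hn_mem
    have horb_eq : {m : ℕ+ | σ.SameCycle n m} = {m : ℕ+ | σ.SameCycle x m} := by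
      ext m
      exact ⟨fun hm => hxn.trans hm, fun hm => hxn.symm.trans hm⟩
    have hnL : L ≤ n := horb n hxn
    have hsub : {m : ℕ+ | σ.SameCycle n m} ⊆ {m : ℕ+ | n ≤ m} := by
      intro m hm
      rw [horb_eq] at hm
      exact hn_min m hm
    have hprice : cyclePrice σ p n ≤ t n := by
      rw [ht_def]
      exact tsum_subtype_mono hp hsp hsub
    have hNn : N ≤ n := le_trans (le_max_right (K + 1) N) hnL
    have han : t n ≤ (if n = 1 then c else 0) + Set.indicator S1 t n := by
      have hmem : n ∈ S1 := hNn
      have : Set.indicator S1 t n = t n := Set.indicator_of_mem hmem t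
      rw [this]
      have : (0:ℝ) ≤ if n = 1 then c else 0 := by
        by_cases hn : n = 1 <;> simp [hn, hc_nonneg]
      linarith
    refine ⟨n, le_trans hprice han, ?_⟩
    calc K < K + 1 := PNat.lt_add_one_iff.mpr le_rfl
      _ ≤ L := le_max_left _ _
      _ ≤ n := hnL
end

section
/- Let p : ℕ⁺ → ℝ be a sequence of box prices with p_n ≥ 0 and ∑_{n=1}^∞ p_n = 1. If there exists a permutation δ of the positive integers such that ∑_{n=1}^∞ n·p_{δ(n)} < ∞, then a strategy exists: there is a sequence a : ℕ⁺ → ℝ with a_n ≥ 0 and ∑_{n=1}^∞ a_n = 1 such that for every finite-cycle-permutation σ of the positive integers, the set {n : a_n ≥ ∑_{m ∈ orbit_σ(n)} p_m} is infinite. -/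
open scoped BigOperators ENNReal

private lemma tsum_ite_le_card (f : ℕ+ → ℝ≥0∞) (i : ℕ+) :
    ∑' n : ℕ+, (if n ≤ i then f i else 0) = ((i:ℕ) : ℝ≥0∞) * f i := by
  rw [tsum_eq_sum (s := Finset.Iic i) (fun n hn => if_neg (by simpa using hn))]
  rw [Finset.sum_congr rfl (fun n hn => if_pos (Finset.mem_Iic.mp hn))]
  rw [Finset.sum_const, Finset.Iic_eq_Icc, PNat.card_Icc]
  simp [nsmul_eq_mul]

private lemma tsum_finite_set {S : Set ℕ+} (h : S.Finite) (f : ℕ+ → ℝ) :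
    ∑' x : S, f x = ∑ x ∈ h.toFinset, f x := by
  rw [tsum_subtype, tsum_eq_sum (s := h.toFinset)
    (fun n hn => Set.indicator_of_notMem (by simpa using hn) f)]
  exact Finset.sum_congr rfl fun n hn => Set.indicator_of_mem (by simpa using hn) f

theorem stmt_1 (p : ℕ+ → ℝ) (hp : ∀ n, 0 ≤ p n) (hpsum : HasSum p 1)
    (h : ∃ δ : Equiv.Perm ℕ+, Summable fun n : ℕ+ => (n : ℝ) * p (δ n)) :
    ∃ a : ℕ+ → ℝ, (∀ n, 0 ≤ a n) ∧ HasSum a 1 ∧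
      ∀ σ : Equiv.Perm ℕ+, FiniteCycles σ →
        {n : ℕ+ | cyclePrice σ p n ≤ a n}.Infinite := by
  obtain ⟨δ, hδ⟩ := h
  set q : ℕ+ → ℝ := fun n => p (δ n) with hqdef
  have hq0 : ∀ n, 0 ≤ q n := fun n => hp _
  set Q : ℕ+ → ℝ≥0∞ := fun n => ENNReal.ofReal (q n) with hQdef
  set T : ℕ+ → ℝ≥0∞ := fun n => ∑' i : ℕ+, if n ≤ i then Q i else 0 with hTdef
  -- total of tails is finite
  have hwQ : ∑' i : ℕ+, ((i:ℕ) : ℝ≥0∞) * Q i ≠ ⊤ := by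
    have h1 : ∀ i : ℕ+, ((i:ℕ) : ℝ≥0∞) * Q i = ENNReal.ofReal ((i : ℝ) * q i) := by
      intro i
      rw [ENNReal.ofReal_mul (by positivity)]
      norm_cast
    rw [tsum_congr h1, ← ENNReal.ofReal_tsum_of_nonneg
      (fun i => mul_nonneg (by positivity) (hq0 i)) hδ]
    exact ENNReal.ofReal_ne_top
  have htot : ∑' n : ℕ+, T n ≠ ⊤ := by
    have : ∑' n : ℕ+, T n = ∑' i : ℕ+, ((i:ℕ) : ℝ≥0∞) * Q i := by
      rw [hTdef]
      rw [ENNReal.tsum_comm]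
      exact tsum_congr fun i => tsum_ite_le_card Q i
    rw [this]; exact hwQ
  have hTfin : ∀ n, T n ≠ ⊤ := fun n => ne_top_of_le_ne_top htot (ENNReal.le_tsum n)
  -- choose N with tail of tails ≤ 1
  obtain ⟨N, hN⟩ : ∃ N : ℕ+, ∑' n : ℕ+, (if N < n then T n else 0) ≤ 1 := by
    obtain ⟨s, hs⟩ : ∃ s : Finset ℕ+, ∑' n : ℕ+, T n ≤ ∑ n ∈ s, T n + 1 := by
      rcases le_or_gt (∑' n : ℕ+, T n) 1 with h1 | h1
      · exact ⟨∅, by rw [Finset.sum_empty, zero_add]; exact h1⟩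
      · have hsub : (∑' n : ℕ+, T n) - 1 < ∑' n : ℕ+, T n :=
          ENNReal.sub_lt_self htot (by positivity) one_ne_zero
        have h2 : (∑' n : ℕ+, T n) - 1 < ⨆ s : Finset ℕ+, ∑ n ∈ s, T n := by
          rw [← ENNReal.tsum_eq_iSup_sum]; exact hsub
        obtain ⟨s, hs⟩ := lt_iSup_iff.mp h2
        refine ⟨s, ?_⟩
        exact ((ENNReal.sub_lt_iff_lt_right ENNReal.one_ne_top (le_of_lt h1)).mp hs).le
    refine ⟨s.sup id, ?_⟩
    have hsub : s ⊆ Finset.Iic (s.sup id) := fun n hn =>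
      Finset.mem_Iic.mpr (Finset.le_sup (f := id) hn)
    have hsplit : ∑' n : ℕ+, T n
        = ∑ n ∈ Finset.Iic (s.sup id), T n + ∑' n : ℕ+, (if s.sup id < n then T n else 0) := by
      have h2 : ∀ n : ℕ+, T n = (if n ≤ s.sup id then T n else 0) + (if s.sup id < n then T n else 0) := by
        intro n
        rcases le_or_gt n (s.sup id) with hle | hlt
        · rw [if_pos hle, if_neg (not_lt.mpr hle), add_zero]
        · rw [if_neg (not_le.mpr hlt), if_pos hlt, zero_add]
      rw [tsum_congr h2, ENNReal.tsum_add]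
      congr 1
      exact tsum_eq_sum (fun n hn => if_neg (by simpa using hn)) |>.trans
        (Finset.sum_congr rfl fun n hn => if_pos (Finset.mem_Iic.mp hn))
    have hle2 : ∑ n ∈ Finset.Iic (s.sup id), T n + ∑' n : ℕ+, (if s.sup id < n then T n else 0)
        ≤ ∑ n ∈ Finset.Iic (s.sup id), T n + 1 := by
      rw [← hsplit]
      exact hs.trans (add_le_add_left (Finset.sum_le_sum_of_subset hsub) 1)
    have hfin : ∑ n ∈ Finset.Iic (s.sup id), T n ≠ ⊤ :=
      ne_top_of_le_ne_top htot (ENNReal.sum_le_tsum _)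
    exact (ENNReal.add_le_add_iff_left hfin).mp hle2
  set g : ℕ+ → ℝ := fun n => if N < n then (T n).toReal else 0 with hgdef
  have hg0 : ∀ n, 0 ≤ g n := by
    intro n; rw [hgdef]; dsimp only; split <;> simp [ENNReal.toReal_nonneg]
  have hgsum : Summable g := by
    have := ENNReal.summable_toReal (ne_top_of_le_ne_top ENNReal.one_ne_top hN)
    refine this.congr fun n => ?_
    simp only [Function.comp, apply_ite ENNReal.toReal, ENNReal.toReal_zero, hgdef]
  set R : ℝ := ∑' n, g n with hRdef
  have hR1 : R ≤ 1 := by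
    have h1 : R = (∑' n : ℕ+, (if N < n then T n else 0)).toReal := by
      rw [ENNReal.tsum_toReal_eq (fun n => by split <;> simp [hTfin])]
      exact tsum_congr fun n => by rw [hgdef]; dsimp only; split <;> simp
    rw [h1]
    calc (∑' n : ℕ+, (if N < n then T n else 0)).toReal
        ≤ (1 : ℝ≥0∞).toReal := ENNReal.toReal_mono ENNReal.one_ne_top hN
      _ = 1 := by simp
  have hR0 : 0 ≤ R := tsum_nonneg hg0
  set b : ℕ+ → ℝ := fun n => (if n = 1 then 1 - R else 0) + g n with hbdef
  clear_value q Q T g R b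
  refine ⟨fun m => b (δ.symm m), ?_, ?_, ?_⟩
  · intro m
    have h1 : (0:ℝ) ≤ if δ.symm m = 1 then 1 - R else 0 := by
      split
      · linarith
      · exact le_rfl
    simp only [hbdef]
    exact add_nonneg h1 (hg0 _)
  · have hb : HasSum b 1 := by
      have h1 : HasSum (fun n : ℕ+ => if n = 1 then 1 - R else 0) (1 - R) := by
        simpa using hasSum_ite_eq (1 : ℕ+) (1 - R)
      have h2 : HasSum g R := hRdef ▸ hgsum.hasSum
      rw [hbdef]
      simpa using h1.add h2
    exact (Equiv.hasSum_iff δ.symm).mpr hb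
  · intro σ hσ
    set S := {n : ℕ+ | cyclePrice σ p n ≤ b (δ.symm n)} with hSdef
    have key : ∀ F : Set ℕ+, F.Finite → ∃ m, m ∈ S ∧ m ∉ F := by
      intro F hF
      have hinj : Function.Injective δ := δ.injective
      set F1 : Set ℕ+ := δ ⁻¹' F ∪ Set.Iic N with hF1def
      have hF1 : F1.Finite := (hF.preimage hinj.injOn).union (Set.finite_Iic N)
      set W : Set ℕ+ := ⋃ n ∈ F1, {m : ℕ+ | σ.SameCycle (δ n) m} with hWdef
      have hW : W.Finite := hF1.biUnion (fun n _ => hσ (δ n))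
      have hG : (δ ⁻¹' W).Finite := hW.preimage hinj.injOn
      obtain ⟨n₀, hn₀⟩ := hG.infinite_compl.nonempty
      set C : Set ℕ+ := {m : ℕ+ | σ.SameCycle (δ n₀) m} with hCdef
      have hC : C.Finite := hσ (δ n₀)
      have hD : (δ ⁻¹' C).Finite := hC.preimage hinj.injOn
      have hDne : (hD.toFinset).Nonempty :=
        ⟨n₀, by simp only [Set.Finite.mem_toFinset, Set.mem_preimage, hCdef,
          Set.mem_setOf_eq]; exact Equiv.Perm.SameCycle.refl σ (δ n₀)⟩
      set n1 : ℕ+ := hD.toFinset.min' hDne with hn1def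
      have hn1D : n1 ∈ δ ⁻¹' C := hD.mem_toFinset.mp (hD.toFinset.min'_mem hDne)
      have hmin : ∀ i ∈ δ ⁻¹' C, n1 ≤ i := fun i hi =>
        Finset.min'_le _ _ (hD.mem_toFinset.mpr hi)
      have hcyc : σ.SameCycle (δ n₀) (δ n1) := hn1D
      have hsetEq : {m : ℕ+ | σ.SameCycle (δ n1) m} = C := by
        ext m
        simp only [Set.mem_setOf_eq, hCdef]
        exact ⟨fun hm => hcyc.trans hm, fun hm => hcyc.symm.trans hm⟩
      have hn1F1 : n1 ∉ F1 := by
        intro hmem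
        apply hn₀
        have hmem2 : δ n₀ ∈ {m : ℕ+ | σ.SameCycle (δ n1) m} := hcyc.symm
        exact Set.mem_preimage.mpr (Set.mem_biUnion hmem hmem2)
      have hNn1 : N < n1 := by
        by_contra hle
        exact hn1F1 (Or.inr (not_lt.mp hle))
      have hn1F : δ n1 ∉ F := fun hmem => hn1F1 (Or.inl hmem)
      refine ⟨δ n1, ?_, hn1F⟩
      show cyclePrice σ p (δ n1) ≤ b (δ.symm (δ n1))
      rw [Equiv.symm_apply_apply, hbdef]
      have hn1ne1 : n1 ≠ 1 := (lt_of_le_of_lt N.one_le hNn1).ne'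
      dsimp only
      rw [if_neg hn1ne1, zero_add, hgdef]
      dsimp only
      rw [if_pos hNn1]
      have h1 : cyclePrice σ p (δ n1) = ∑ m ∈ hC.toFinset, p m := by
        unfold cyclePrice
        rw [hsetEq]
        exact tsum_finite_set hC p
      rw [h1]
      have himg : hC.toFinset = hD.toFinset.image δ := by
        ext m
        simp only [Finset.mem_image, Set.Finite.mem_toFinset, Set.mem_preimage]
        constructor
        · exact fun hm => ⟨δ.symm m, by simpa using hm, by simp⟩
        · rintro ⟨i, hi, rfl⟩; exact hi
      rw [himg, Finset.sum_image (fun x _ y _ hxy => hinj hxy)]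
      have h2 : ENNReal.ofReal (∑ i ∈ hD.toFinset, p (δ i)) = ∑ i ∈ hD.toFinset, Q i := by
        rw [ENNReal.ofReal_sum_of_nonneg (fun i _ => hp _)]
        exact Finset.sum_congr rfl fun i _ => by rw [hQdef, hqdef]
      have h3 : ∑ i ∈ hD.toFinset, Q i ≤ T n1 := by
        rw [hTdef]
        calc ∑ i ∈ hD.toFinset, Q i
            = ∑ i ∈ hD.toFinset, (if n1 ≤ i then Q i else 0) :=
              Finset.sum_congr rfl fun i hi =>
                (if_pos (hmin i (hD.mem_toFinset.mp hi))).symm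
          _ ≤ ∑' i : ℕ+, (if n1 ≤ i then Q i else 0) := ENNReal.sum_le_tsum _
      calc ∑ i ∈ hD.toFinset, p (δ i)
          = (ENNReal.ofReal (∑ i ∈ hD.toFinset, p (δ i))).toReal :=
            (ENNReal.toReal_ofReal (Finset.sum_nonneg fun i _ => hp _)).symm
        _ ≤ (T n1).toReal := ENNReal.toReal_mono (hTfin n1) (h2 ▸ h3)
    intro hfin
    obtain ⟨m, hm, hm'⟩ := key S hfin
    exact hm' hm
end

section
/- Let p_n = 1/n² for every positive integer n. Then for every permutation δ of the positive integers, ∑_{n=1}^∞ n·p_{δ(n)} = ∞ (the series of nonnegative terms n·δ(n)^{-2}... i.e. n/δ(n)² diverges). -/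
open scoped BigOperators

/-- A strictly monotone `Fin n → ℕ+` satisfies `v + 1 ≤ f v`. -/
lemma aux_strictMono_le {n : ℕ} (f : Fin n → ℕ+) (hf : StrictMono f) :
    ∀ (v : ℕ) (hv : v < n), v + 1 ≤ ((f ⟨v, hv⟩ : ℕ+) : ℕ) := by
  intro v
  induction v with
  | zero => intro hv; exact (f ⟨0, hv⟩).one_le
  | succ k ih =>
    intro hv
    have hk : k < n := Nat.lt_of_succ_lt hv
    have h1 : f ⟨k, hk⟩ < f ⟨k + 1, hv⟩ := hf (by simp [Fin.lt_def])
    have h2 : k + 1 ≤ ((f ⟨k, hk⟩ : ℕ+) : ℕ) := ih hk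
    have h3 : ((f ⟨k, hk⟩ : ℕ+) : ℕ) < ((f ⟨k + 1, hv⟩ : ℕ+) : ℕ) := PNat.coe_lt_coe _ _ |>.2 h1
    omega

/-- A finset of `N` distinct positive integers has sum at least `N² / 2`. -/
lemma aux_sum_ge (T : Finset ℕ+) : (T.card : ℝ) ^ 2 / 2 ≤ ∑ t ∈ T, (t : ℝ) := by
  -- first a ℕ-version: T.card ^ 2 ≤ 2 * ∑ t in T, (t : ℕ)
  have hnat : T.card ^ 2 ≤ 2 * ∑ t ∈ T, (t : ℕ) := by
    set n := T.card with hn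
    let e := T.orderEmbOfFin hn.symm
    have hsum : ∑ t ∈ T, (t : ℕ) = ∑ i : Fin n, ((e i : ℕ+) : ℕ) := by
      refine (Finset.sum_bij (fun (i : Fin n) _ => (e i : ℕ+)) ?_ ?_ ?_ ?_).symm
      · intro i _; exact T.orderEmbOfFin_mem hn.symm i
      · intro a _ b _ hab; exact e.injective hab
      · intro b hb
        have : b ∈ Set.range (T.orderEmbOfFin hn.symm) := by
          rw [T.range_orderEmbOfFin hn.symm]; exact hb
        obtain ⟨i, hi⟩ := this
        exact ⟨i, Finset.mem_univ i, hi⟩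
      · intro i _; rfl
    have hlb : ∀ i : Fin n, (i : ℕ) + 1 ≤ ((e i : ℕ+) : ℕ) := by
      intro i
      exact aux_strictMono_le (fun j => e j) (fun a b hab => e.strictMono hab) i i.2
    have : ∑ i : Fin n, ((i : ℕ) + 1) ≤ ∑ i : Fin n, ((e i : ℕ+) : ℕ) :=
      Finset.sum_le_sum fun i _ => hlb i
    have hgauss : ∑ i : Fin n, ((i : ℕ) + 1) = ∑ i ∈ Finset.range n, (i + 1) := by
      rw [Finset.sum_range fun i => i + 1]
    have hgauss2 : (∑ i ∈ Finset.range (n + 1), i) * 2 = (n + 1) * n :=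
      Finset.sum_range_id_mul_two (n + 1)
    have hshift : ∑ i ∈ Finset.range (n + 1), i = ∑ i ∈ Finset.range n, (i + 1) := by
      rw [Finset.sum_range_succ']
      simp
    have hsq : n ^ 2 ≤ (n + 1) * n := by nlinarith
    calc n ^ 2 ≤ (n + 1) * n := hsq
      _ = (∑ i ∈ Finset.range n, (i + 1)) * 2 := by rw [← hgauss2, hshift]
      _ = 2 * ∑ i : Fin n, ((i : ℕ) + 1) := by rw [← hgauss]; ring
      _ ≤ 2 * ∑ i : Fin n, ((e i : ℕ+) : ℕ) := by omega
      _ = 2 * ∑ t ∈ T, (t : ℕ) := by rw [hsum]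
  have := (Nat.cast_le (α := ℝ)).2 hnat
  push_cast at this
  linarith

/-- Each dyadic block contributes at least 1/8. -/
lemma aux_block (σ : Equiv.Perm ℕ+) (j : ℕ) :
    (1 : ℝ) / 8 ≤ ∑ k ∈ Finset.Ioc ((2 : ℕ+) ^ j) ((2 : ℕ+) ^ (j + 1)),
      (σ k : ℝ) * (1 / (k : ℝ) ^ 2) := by
  set B := Finset.Ioc ((2 : ℕ+) ^ j) ((2 : ℕ+) ^ (j + 1)) with hB
  have hcard : B.card = 2 ^ j := by
    rw [hB, PNat.card_Ioc]
    push_cast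
    rw [pow_succ]
    omega
  -- pointwise bound : for k in B, term ≥ σ k / 4^(j+1)
  have hpt : ∀ k ∈ B, (σ k : ℝ) / (4 : ℝ) ^ (j + 1) ≤ (σ k : ℝ) * (1 / (k : ℝ) ^ 2) := by
    intro k hk
    rw [hB, Finset.mem_Ioc] at hk
    have hk2 : ((k : ℕ+) : ℕ) ≤ 2 ^ (j + 1) := by
      have := hk.2
      rw [← PNat.coe_le_coe] at this
      push_cast at this
      exact this
    have hkpos : (0 : ℝ) < (k : ℝ) := by exact_mod_cast k.pos
    have hkR : (k : ℝ) ≤ 2 ^ (j + 1) := by exact_mod_cast hk2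
    have h4 : (k : ℝ) ^ 2 ≤ (4 : ℝ) ^ (j + 1) := by
      have : ((2 : ℝ) ^ (j + 1)) ^ 2 = 4 ^ (j + 1) := by
        rw [← pow_mul, mul_comm]
        norm_num [pow_mul]
      rw [← this]
      exact pow_le_pow_left₀ (le_of_lt hkpos) hkR 2
    have hσpos : (0 : ℝ) ≤ (σ k : ℝ) := by positivity
    rw [mul_one_div, div_le_div_iff₀ (by positivity) (by positivity)]
    exact mul_le_mul_of_nonneg_left h4 hσpos
  have hsum1 : ∑ k ∈ B, (σ k : ℝ) / (4 : ℝ) ^ (j + 1)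
      ≤ ∑ k ∈ B, (σ k : ℝ) * (1 / (k : ℝ) ^ 2) := Finset.sum_le_sum hpt
  -- lower bound on ∑ σ k over B
  have himg : ∑ k ∈ B, (σ k : ℝ) = ∑ t ∈ B.image σ, (t : ℝ) :=
    (Finset.sum_image (s := B) (g := ⇑σ) (f := fun t : ℕ+ => (t : ℝ)) (fun a _ b _ h => σ.injective h)).symm
  have hcardimg : (B.image σ).card = 2 ^ j := by
    rw [Finset.card_image_of_injective _ σ.injective, hcard]
  have hσsum : ((2 : ℝ) ^ j) ^ 2 / 2 ≤ ∑ k ∈ B, (σ k : ℝ) := by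
    rw [himg]
    have := aux_sum_ge (B.image σ)
    rw [hcardimg] at this
    push_cast at this
    exact this
  have h48 : ((2 : ℝ) ^ j) ^ 2 / 2 / (4 : ℝ) ^ (j + 1) = 1 / 8 := by
    rw [← pow_mul, mul_comm j 2]
    have : (2 : ℝ) ^ (2 * j) = 4 ^ j := by rw [pow_mul]; norm_num
    rw [pow_mul, pow_succ]
    field_simp
    ring
  calc (1 : ℝ) / 8 = ((2 : ℝ) ^ j) ^ 2 / 2 / (4 : ℝ) ^ (j + 1) := h48.symm
    _ ≤ (∑ k ∈ B, (σ k : ℝ)) / (4 : ℝ) ^ (j + 1) := by gcongr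
    _ = ∑ k ∈ B, (σ k : ℝ) / (4 : ℝ) ^ (j + 1) := by rw [Finset.sum_div]
    _ ≤ _ := hsum1

theorem stmt_3 (δ : Equiv.Perm ℕ+) :
    ¬ Summable fun n : ℕ+ => (n : ℝ) * (1 / ((δ n : ℝ)) ^ 2) := by
  intro h
  set σ := δ.symm with hσ
  have hg : Summable (fun k : ℕ+ => (σ k : ℝ) * (1 / (k : ℝ) ^ 2)) := by
    have h2 := (Equiv.summable_iff σ).2 h
    convert h2 using 1
    funext k
    simp [Function.comp, hσ, Equiv.apply_symm_apply]
  have hgnn : ∀ k : ℕ+, 0 ≤ (σ k : ℝ) * (1 / (k : ℝ) ^ 2) := by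
    intro k; positivity
  -- partial sums over Ioc 1 (2^m) are at least m/8
  have hpartial : ∀ m : ℕ, (m : ℝ) / 8 ≤
      ∑ k ∈ Finset.Ioc (1 : ℕ+) ((2 : ℕ+) ^ m), (σ k : ℝ) * (1 / (k : ℝ) ^ 2) := by
    intro m
    induction m with
    | zero => simp
    | succ m ih =>
      have h1 : (1 : ℕ+) ≤ (2 : ℕ+) ^ m := (1 : ℕ+).one_le.trans ((2 : ℕ+) ^ m).one_le
      have h2 : (2 : ℕ+) ^ m ≤ (2 : ℕ+) ^ (m + 1) := by
        rw [← PNat.coe_le_coe]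
        push_cast
        exact Nat.pow_le_pow_right (by norm_num) (Nat.le_succ m)
      have hunion : Finset.Ioc (1 : ℕ+) ((2 : ℕ+) ^ m) ∪
          Finset.Ioc ((2 : ℕ+) ^ m) ((2 : ℕ+) ^ (m + 1)) =
          Finset.Ioc (1 : ℕ+) ((2 : ℕ+) ^ (m + 1)) :=
        Finset.Ioc_union_Ioc_eq_Ioc h1 h2
      have hdisj : Disjoint (Finset.Ioc (1 : ℕ+) ((2 : ℕ+) ^ m))
          (Finset.Ioc ((2 : ℕ+) ^ m) ((2 : ℕ+) ^ (m + 1))) := by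
        rw [Finset.disjoint_left]
        intro a ha ha'
        rw [Finset.mem_Ioc] at ha ha'
        exact absurd ha.2 (not_le.2 ha'.1)
      have hsum : ∑ k ∈ Finset.Ioc (1 : ℕ+) ((2 : ℕ+) ^ (m + 1)),
            (σ k : ℝ) * (1 / (k : ℝ) ^ 2)
          = (∑ k ∈ Finset.Ioc (1 : ℕ+) ((2 : ℕ+) ^ m), (σ k : ℝ) * (1 / (k : ℝ) ^ 2))
            + ∑ k ∈ Finset.Ioc ((2 : ℕ+) ^ m) ((2 : ℕ+) ^ (m + 1)),
              (σ k : ℝ) * (1 / (k : ℝ) ^ 2) := by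
        rw [← hunion, Finset.sum_union hdisj]
      rw [hsum]
      have hblock := aux_block σ m
      push_cast
      linarith
  -- but partial sums are bounded by the tsum
  obtain ⟨m, hm⟩ := exists_nat_gt ((∑' k : ℕ+, (σ k : ℝ) * (1 / (k : ℝ) ^ 2)) * 8)
  have hle : ∑ k ∈ Finset.Ioc (1 : ℕ+) ((2 : ℕ+) ^ m), (σ k : ℝ) * (1 / (k : ℝ) ^ 2)
      ≤ ∑' k : ℕ+, (σ k : ℝ) * (1 / (k : ℝ) ^ 2) :=
    Summable.sum_le_tsum _ (fun k _ => hgnn k) hg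
  have := hpartial m
  linarith
end

section
/- Let p_n = 1/n² for every positive integer n. Then for every permutation δ of the positive integers and every positive integer m, one has ∑_{n=1}^{m} 1/n ≤ ∑_{n=1}^∞ δ(n)·p_n = ∑_{n=1}^∞ δ(n)/n², where the right-hand side is taken in [0, ∞] (i.e., the identity permutation gives the minimum of ∑ δ(n)/n² over all permutations δ). -/
open scoped BigOperators ENNReal

private noncomputable def blk (δ : Equiv.Perm ℕ+) (N : ℕ+) : Finset ℕ+ :=
  (Finset.Icc (2*N+1) (4*N)).filter (fun k => N < δ k)

private lemma blk_card (δ : Equiv.Perm ℕ+) (N : ℕ+) : (N:ℕ) ≤ (blk δ N).card := by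
  classical
  unfold blk
  have h1 : (Finset.Icc (2*N+1) (4*N)).card = 2*(N:ℕ) := by
    rw [PNat.card_Icc]
    have h2 : ((2*N+1 : ℕ+):ℕ) = 2*(N:ℕ)+1 := by push_cast; ring
    have h4 : ((4*N : ℕ+):ℕ) = 4*(N:ℕ) := by push_cast; ring
    omega
  have h2 : ((Finset.Icc (2*N+1) (4*N)).filter (fun k => ¬ N < δ k)).card ≤ (N:ℕ) := by
    have : ((Finset.Icc (2*N+1) (4*N)).filter (fun k => ¬ N < δ k)).card
        ≤ (Finset.Icc (1:ℕ+) N).card := by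
      apply Finset.card_le_card_of_injOn δ
      · intro k hk
        simp only [Finset.mem_coe, Finset.mem_filter, not_lt] at hk
        simp [Finset.mem_Icc, hk.2, (δ k).one_le]
      · exact fun a _ b _ h => δ.injective h
    simpa [PNat.card_Icc] using this
  have h3 := Finset.card_filter_add_card_filter_not
    (s := Finset.Icc (2*N+1) (4*N)) (p := fun k => N < δ k)
  omega

private lemma blk_sum (δ : Equiv.Perm ℕ+) (N : ℕ+) :
    (1:ℝ≥0∞)/16 ≤ ∑ k ∈ blk δ N, ((δ k : ℕ) : ℝ≥0∞) / (((k : ℕ) : ℝ≥0∞)) ^ 2 := by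
  set x : ℝ≥0∞ := ((N:ℕ) : ℝ≥0∞) with hx
  have hx0 : x ≠ 0 := by simp [hx, (PNat.pos N).ne']
  have hxt : x ≠ ⊤ := ENNReal.natCast_ne_top _
  have hterm : ∀ k ∈ blk δ N,
      x / (16*x^2) ≤ ((δ k : ℕ) : ℝ≥0∞) / (((k : ℕ) : ℝ≥0∞)) ^ 2 := by
    intro k hk
    simp only [blk, Finset.mem_filter, Finset.mem_Icc] at hk
    have hk4 : (k:ℕ) ≤ 4*(N:ℕ) := by exact_mod_cast hk.1.2
    have hδ : (N:ℕ) ≤ (δ k : ℕ) := by exact_mod_cast hk.2.le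
    have hnum : x ≤ ((δ k : ℕ) : ℝ≥0∞) := by rw [hx]; exact_mod_cast hδ
    have hden : (((k : ℕ) : ℝ≥0∞)) ^ 2 ≤ 16*x^2 := by
      have h2 : (k:ℕ)^2 ≤ 16*(N:ℕ)^2 := by nlinarith
      calc (((k : ℕ) : ℝ≥0∞)) ^ 2 = (((k:ℕ)^2 : ℕ) : ℝ≥0∞) := by push_cast; ring
        _ ≤ ((16*(N:ℕ)^2 : ℕ) : ℝ≥0∞) := by exact_mod_cast h2
        _ = 16*x^2 := by push_cast; ring
    exact ENNReal.div_le_div hnum hden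
  have key : x * (x / (16*x^2)) = 1/16 := by
    have hx20 : x^2 ≠ 0 := pow_ne_zero _ hx0
    have hx2t : x^2 ≠ ⊤ := ENNReal.pow_ne_top hxt
    calc x * (x / (16*x^2)) = x^2 * (16*x^2)⁻¹ := by rw [div_eq_mul_inv]; ring
      _ = x^2 * (16⁻¹ * (x^2)⁻¹) := by
          rw [ENNReal.mul_inv (Or.inl (by norm_num)) (Or.inl (by norm_num))]
      _ = 16⁻¹ * (x^2 * (x^2)⁻¹) := by ring
      _ = 1/16 := by rw [ENNReal.mul_inv_cancel hx20 hx2t, mul_one, one_div]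
  calc (1:ℝ≥0∞)/16 = (N:ℕ) • (x / (16*x^2)) := by rw [nsmul_eq_mul]; exact_mod_cast key.symm
    _ ≤ (blk δ N).card • (x / (16*x^2)) := nsmul_le_nsmul_left (by positivity) (blk_card δ N)
    _ ≤ ∑ k ∈ blk δ N, ((δ k : ℕ) : ℝ≥0∞) / (((k : ℕ) : ℝ≥0∞)) ^ 2 :=
        Finset.card_nsmul_le_sum _ _ _ hterm

theorem stmt_4 (δ : Equiv.Perm ℕ+) (m : ℕ+) :
    ∑ n ∈ Finset.Icc 1 m, (1 : ℝ≥0∞) / ((n : ℕ) : ℝ≥0∞) ≤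
      ∑' n : ℕ+, ((δ n : ℕ) : ℝ≥0∞) / (((n : ℕ) : ℝ≥0∞)) ^ 2 := by
  classical
  have htop : ∑' n : ℕ+, ((δ n : ℕ) : ℝ≥0∞) / (((n : ℕ) : ℝ≥0∞)) ^ 2 = ⊤ := by
    have hdis : ∀ i j : ℕ, i < j → Disjoint (blk δ (4^i)) (blk δ (4^j)) := by
      intro i j hij
      rw [Finset.disjoint_left]
      intro k hki hkj
      simp only [blk, Finset.mem_filter, Finset.mem_Icc] at hki hkj
      have h1 : (k:ℕ) ≤ 4*4^i := by exact_mod_cast hki.1.2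
      have h2 : 2*4^j+1 ≤ (k:ℕ) := by exact_mod_cast hkj.1.1
      have h3 : (4:ℕ)^(i+1) ≤ 4^j := Nat.pow_le_pow_right (by norm_num) hij
      rw [pow_succ] at h3
      omega
    have hJ : ∀ J : ℕ, (J : ℝ≥0∞)/16 ≤
        ∑' n : ℕ+, ((δ n : ℕ) : ℝ≥0∞) / (((n : ℕ) : ℝ≥0∞)) ^ 2 := by
      intro J
      have hpd : (↑(Finset.range J) : Set ℕ).PairwiseDisjoint (fun j => blk δ (4^j)) := by
        intro i _ j _ hne
        rcases hne.lt_or_gt with h | h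
        · exact hdis i j h
        · exact (hdis j i h).symm
      calc (J:ℝ≥0∞)/16 = ∑ _j ∈ Finset.range J, (1:ℝ≥0∞)/16 := by
            simp [Finset.sum_const, nsmul_eq_mul, mul_one_div, ENNReal.div_eq_inv_mul, mul_comm]
        _ ≤ ∑ j ∈ Finset.range J, ∑ k ∈ blk δ (4^j),
              ((δ k : ℕ) : ℝ≥0∞) / (((k : ℕ) : ℝ≥0∞)) ^ 2 :=
            Finset.sum_le_sum fun j _ => blk_sum δ (4^j)
        _ = ∑ k ∈ (Finset.range J).biUnion (fun j => blk δ (4^j)),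
              ((δ k : ℕ) : ℝ≥0∞) / (((k : ℕ) : ℝ≥0∞)) ^ 2 :=
            (Finset.sum_biUnion hpd).symm
        _ ≤ _ := ENNReal.sum_le_tsum _
    apply ENNReal.eq_top_of_forall_nnreal_le
    intro r
    obtain ⟨n, hn⟩ := exists_nat_ge r
    calc (r:ℝ≥0∞) ≤ (n:ℝ≥0∞) := by exact_mod_cast hn
      _ = ((16*n : ℕ):ℝ≥0∞)/16 := by
          push_cast
          rw [mul_comm, mul_div_assoc, ENNReal.div_self (by norm_num) (by norm_num), mul_one]
      _ ≤ _ := hJ (16*n)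
  rw [htop]
  exact le_top
end

section
/- Let p : ℕ⁺ → ℝ be a sequence with p_n ≥ 0 and ∑_{n=1}^∞ p_n = 1, and suppose that for every permutation δ of the positive integers, ∑_{n=1}^∞ n·p_{δ(n)} = ∞. Then there is no strategy: for every sequence a : ℕ⁺ → ℝ with a_n ≥ 0 and ∑_{n=1}^∞ a_n = 1, there exists a finite-cycle-permutation σ of the positive integers such that the set {n : a_n ≥ ∑_{m ∈ orbit_σ(n)} p_m} is finite. -/
open scoped BigOperators ENNReal

lemma exists_antitone_enum (c : ℕ+ → ℝ) (hpos : ∀ n, 0 < c n) (hsum : Summable c) :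
    ∃ e : ℕ ≃ ℕ+, Antitone (fun j => c (e j)) := by
  classical
  set r : ℕ+ → ℕ+ → Prop := fun m n => c n < c m ∨ (c m = c n ∧ m < n) with hr
  have hfin : ∀ n : ℕ+, {m : ℕ+ | r m n}.Finite := by
    intro n
    have h1 : {m : ℕ+ | ¬ c m < c n}.Finite := by
      have := hsum.tendsto_cofinite_zero
      have hev : ∀ᶠ m in Filter.cofinite, c m < c n :=
        this.eventually (Filter.eventually_iff_exists_mem.2
          ⟨Set.Iio (c n), Iio_mem_nhds (hpos n), fun x hx => hx⟩)
      simpa [Filter.eventually_cofinite] using hev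
    refine h1.subset ?_
    intro m hm
    simp only [Set.mem_setOf_eq, not_lt]
    rcases hm with h | ⟨h, _⟩
    · exact h.le
    · exact h.ge
  set rank : ℕ+ → ℕ := fun n => (hfin n).toFinset.card with hrank
  have hirr : ∀ m, ¬ r m m := by
    intro m hm
    rcases hm with h | ⟨_, h⟩
    · exact lt_irrefl _ h
    · exact lt_irrefl _ h
  have htrans : ∀ {x y z}, r x y → r y z → r x z := by
    rintro x y z (h1 | ⟨h1, h1'⟩) (h2 | ⟨h2, h2'⟩)
    · exact Or.inl (h2.trans h1)
    · exact Or.inl (h2 ▸ h1)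
    · exact Or.inl (h1 ▸ h2)
    · exact Or.inr ⟨h1.trans h2, h1'.trans h2'⟩
  have htot : ∀ {x y : ℕ+}, x ≠ y → r x y ∨ r y x := by
    intro x y hxy
    rcases lt_trichotomy (c x) (c y) with h | h | h
    · exact Or.inr (Or.inl h)
    · rcases lt_or_gt_of_ne hxy with h' | h'
      · exact Or.inl (Or.inr ⟨h, h'⟩)
      · exact Or.inr (Or.inr ⟨h.symm, h'⟩)
    · exact Or.inl (Or.inl h)
  have hmono : ∀ {m n}, r m n → rank m < rank n := by
    intro m n hmn
    apply Finset.card_lt_card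
    rw [Finset.ssubset_iff_of_subset]
    · exact ⟨m, by simp [hmn], by simpa using hirr m⟩
    · intro x hx
      simp only [Set.Finite.mem_toFinset, Set.mem_setOf_eq] at hx ⊢
      exact htrans hx hmn
  have hinj : Function.Injective rank := by
    intro m n hmn
    by_contra hne
    rcases htot hne with h | h
    · exact absurd hmn (hmono h).ne
    · exact absurd hmn.symm (hmono h).ne
  have hdown : ∀ (n : ℕ+) (k : ℕ), rank n = k + 1 → ∃ m, rank m = k := by
    intro n k hk
    have hne : ((hfin n).toFinset).Nonempty := by
      rw [← Finset.card_pos, show (hfin n).toFinset.card = rank n from rfl, hk]; omega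
    obtain ⟨m, hm, hmax⟩ := (hfin n).toFinset.exists_max_image rank hne
    have hmem : r m n := by simpa using hm
    refine ⟨m, ?_⟩
    have hset : (hfin m).toFinset = (hfin n).toFinset.erase m := by
      ext x
      simp only [Set.Finite.mem_toFinset, Set.mem_setOf_eq, Finset.mem_erase]
      constructor
      · intro hx
        refine ⟨?_, htrans hx hmem⟩
        rintro rfl; exact hirr _ hx
      · rintro ⟨hxm, hxn⟩
        rcases htot hxm with h | h
        · exact h
        · exact absurd (hmax x (by simpa using hxn)) (not_le.2 (hmono h))
    have h2 : rank m = (hfin n).toFinset.card - 1 := by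
      rw [show rank m = (hfin m).toFinset.card from rfl, hset,
        Finset.card_erase_of_mem hm]
    rw [show (hfin n).toFinset.card = rank n from rfl, hk] at h2
    omega
  have hsurj : Function.Surjective rank := by
    intro k
    have hge : ∃ n, k ≤ rank n := by
      by_contra hlt
      push_neg at hlt
      have : Function.Injective (fun n : ℕ+ => (⟨rank n, hlt n⟩ : Fin k)) := by
        intro x y hxy
        exact hinj (congrArg Fin.val hxy)
      exact not_injective_infinite_finite _ this
    obtain ⟨n, hn⟩ := hge
    obtain ⟨d, hd⟩ := Nat.exists_eq_add_of_le hn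
    clear hn
    induction d generalizing n with
    | zero => exact ⟨n, by omega⟩
    | succ d ih =>
      obtain ⟨m, hm⟩ := hdown n (k + d) (by omega)
      exact ih m hm
  set e := (Equiv.ofBijective rank ⟨hinj, hsurj⟩).symm with he
  refine ⟨e, ?_⟩
  have herank : ∀ j, rank (e j) = j := fun j =>
    (Equiv.ofBijective rank ⟨hinj, hsurj⟩).apply_symm_apply j
  intro j j' hjj'
  rcases eq_or_lt_of_le hjj' with rfl | hlt
  · exact le_refl _
  · simp only
    have hne : e j ≠ e j' := fun hEq => by
      have := herank j; rw [hEq, herank j'] at this; omega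
    rcases htot hne with h | h
    · rcases h with h | ⟨h, _⟩
      · exact h.le
      · exact h.ge
    · exfalso
      have := hmono h
      rw [herank j, herank j'] at this
      omega

section blocks

variable (J : ℕ → ℕ)

/-- index of the block containing `m` -/
def bidx (m : ℕ) : ℕ := Nat.findGreatest (fun i => J i ≤ m) m

variable (hJ : StrictMono J)
include hJ

omit hJ in
lemma bidx_le {m : ℕ} (hm : J 0 ≤ m) : J (bidx J m) ≤ m := by
  unfold bidx
  exact Nat.findGreatest_spec (P := fun i => J i ≤ m) (m := 0) (Nat.zero_le _) hm

lemma lt_bidx_next {m : ℕ} (hm : J 0 ≤ m) : m < J (bidx J m + 1) := by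
  rcases eq_or_lt_of_le (Nat.findGreatest_le (P := fun i => J i ≤ m) m) with heq | hlt
  · calc m < m + 1 := Nat.lt_succ_self m
      _ ≤ J (m + 1) := hJ.le_apply
      _ = J (bidx J m + 1) := by rw [bidx, heq]
  · by_contra hcon
    exact Nat.findGreatest_is_greatest (Nat.lt_succ_self _) hlt (not_lt.1 hcon)

lemma bidx_eq {i m : ℕ} (h1 : J i ≤ m) (h2 : m < J (i + 1)) : bidx J m = i := by
  have hge : i ≤ bidx J m := Nat.le_findGreatest (le_trans hJ.le_apply h1) h1
  have hm : J 0 ≤ m := le_trans (hJ.monotone (Nat.zero_le i)) h1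
  have hle : bidx J m < i + 1 := by
    by_contra hcon
    exact absurd (le_trans (hJ.monotone (not_lt.1 hcon)) (bidx_le J hm)) (not_le.2 h2)
  omega

/-- the permutation of `ℕ` which cycles each block `[J i, J (i+1))` and fixes `[0, J 0)`. -/
def blockPerm : Equiv.Perm ℕ where
  toFun m := if m < J 0 then m else
    if m + 1 < J (bidx J m + 1) then m + 1 else J (bidx J m)
  invFun m := if m < J 0 then m else
    if J (bidx J m) = m then J (bidx J m + 1) - 1 else m - 1
  left_inv := by
    intro m
    by_cases hm : m < J 0
    · simp [hm]
    · push_neg at hm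
      simp only [if_neg (not_lt.2 hm)]
      set i := bidx J m with hi
      have hi1 : J i ≤ m := bidx_le J hm
      have hi2 : m < J (i + 1) := lt_bidx_next J hJ hm
      have h0i : J 0 ≤ J i := hJ.monotone (Nat.zero_le i)
      by_cases hA : m + 1 < J (i + 1)
      · rw [if_pos hA]
        have hb : bidx J (m + 1) = i := bidx_eq J hJ (by omega) hA
        rw [if_neg (by omega), hb, if_neg (by omega)]
        omega
      · rw [if_neg hA]
        have hJi1 : J (i + 1) = m + 1 := by omega
        have hb : bidx J (J i) = i := bidx_eq J hJ le_rfl (hJ (Nat.lt_succ_self i))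
        rw [if_neg (by omega), hb, if_pos rfl, hJi1]
        omega
  right_inv := by
    intro m
    by_cases hm : m < J 0
    · simp [hm]
    · push_neg at hm
      simp only [if_neg (not_lt.2 hm)]
      set i := bidx J m with hi
      have hi1 : J i ≤ m := bidx_le J hm
      have hi2 : m < J (i + 1) := lt_bidx_next J hJ hm
      have h0i : J 0 ≤ J i := hJ.monotone (Nat.zero_le i)
      by_cases hC : J i = m
      · rw [if_pos hC]
        have hlt : J i < J (i + 1) := hJ (Nat.lt_succ_self i)
        have hb : bidx J (J (i + 1) - 1) = i := bidx_eq J hJ (by omega) (by omega)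
        rw [if_neg (by omega), hb, if_neg (by omega)]
        omega
      · rw [if_neg hC]
        have hJim : J i < m := lt_of_le_of_ne hi1 hC
        have hb : bidx J (m - 1) = i := bidx_eq J hJ (by omega) (by omega)
        rw [if_neg (by omega), hb, if_pos (by omega)]
        omega

lemma blockPerm_fix {m : ℕ} (hm : m < J 0) : blockPerm J hJ m = m := by
  simp [blockPerm, hm]

lemma blockPerm_mem_iff (i : ℕ) (x : ℕ) :
    blockPerm J hJ x ∈ Set.Ico (J i) (J (i + 1)) ↔ x ∈ Set.Ico (J i) (J (i + 1)) := by
  by_cases hx : x < J 0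
  · rw [blockPerm_fix J hJ hx]
  · push_neg at hx
    set k := bidx J x with hk
    have hk1 : J k ≤ x := bidx_le J hx
    have hk2 : x < J (k + 1) := lt_bidx_next J hJ hx
    have hmem : blockPerm J hJ x ∈ Set.Ico (J k) (J (k + 1)) := by
      show (if x < J 0 then x else
        if x + 1 < J (bidx J x + 1) then x + 1 else J (bidx J x)) ∈ _
      rw [if_neg (not_lt.2 hx), ← hk]
      by_cases hA : x + 1 < J (k + 1)
      · rw [if_pos hA]; exact ⟨by omega, hA⟩
      · rw [if_neg hA]; exact ⟨le_rfl, hJ (Nat.lt_succ_self k)⟩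
    constructor
    · intro hmem'
      have h1 := bidx_eq J hJ hmem'.1 hmem'.2
      have h2 := bidx_eq J hJ hmem.1 hmem.2
      rw [h1] at h2
      rw [h2]
      exact ⟨hk1, hk2⟩
    · intro hxi
      have : k = i := by rw [hk]; exact bidx_eq J hJ hxi.1 hxi.2
      rwa [← this]

lemma blockPerm_apply_succ {m : ℕ} (hm : J 0 ≤ m) (h2 : m + 1 < J (bidx J m + 1)) :
    blockPerm J hJ m = m + 1 := by
  simp only [blockPerm, Equiv.coe_fn_mk]
  rw [if_neg (not_lt.2 hm), if_pos h2]

omit hJ in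
lemma zpow_mem_iff {e : Equiv.Perm ℕ} {s : Set ℕ} (h : ∀ x, e x ∈ s ↔ x ∈ s) :
    ∀ (z : ℤ) (x : ℕ), (e ^ z) x ∈ s ↔ x ∈ s := by
  have hinv : ∀ x, e⁻¹ x ∈ s ↔ x ∈ s := by
    intro x
    have := h (e⁻¹ x)
    rw [show e (e⁻¹ x) = x from e.apply_symm_apply x] at this
    exact this.symm
  intro z
  induction z using Int.induction_on with
  | zero => simp
  | succ n ih =>
    intro x
    rw [zpow_add_one, Equiv.Perm.mul_apply, ih (e x), h]
  | pred n ih =>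
    intro x
    rw [zpow_sub_one, Equiv.Perm.mul_apply, ih (e⁻¹ x), hinv]

lemma blockPerm_pow {i : ℕ} :
    ∀ k, J i + k < J (i + 1) → ((blockPerm J hJ) ^ k) (J i) = J i + k := by
  intro k
  induction k with
  | zero => intro _; simp
  | succ k ih =>
    intro hk
    have hk' : J i + k < J (i + 1) := by omega
    rw [pow_succ', Equiv.Perm.mul_apply, ih hk']
    have hm : J 0 ≤ J i + k := le_trans (hJ.monotone (Nat.zero_le i)) (by omega)
    have hb : bidx J (J i + k) = i := bidx_eq J hJ (by omega) hk'
    rw [blockPerm_apply_succ J hJ hm (by rw [hb]; omega)]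
    omega

lemma blockPerm_sameCycle_start {i m : ℕ} (h1 : J i ≤ m) (h2 : m < J (i + 1)) :
    (blockPerm J hJ).SameCycle (J i) m := by
  refine ⟨((m - J i : ℕ) : ℤ), ?_⟩
  rw [zpow_natCast, blockPerm_pow J hJ (m - J i) (by omega)]
  omega

lemma blockPerm_cycleSet {i m : ℕ} (h1 : J i ≤ m) (h2 : m < J (i + 1)) :
    {x : ℕ | (blockPerm J hJ).SameCycle m x} = Set.Ico (J i) (J (i + 1)) := by
  ext y
  simp only [Set.mem_setOf_eq]
  constructor
  · rintro ⟨z, rfl⟩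
    exact (zpow_mem_iff (blockPerm_mem_iff J hJ i) z m).2 ⟨h1, h2⟩
  · intro hy
    exact ((blockPerm_sameCycle_start J hJ h1 h2).symm.trans
      (blockPerm_sameCycle_start J hJ hy.1 hy.2))

lemma blockPerm_cycleSet_fix {m : ℕ} (hm : m < J 0) :
    {x : ℕ | (blockPerm J hJ).SameCycle m x} = {m} := by
  have hfix : blockPerm J hJ m = m := blockPerm_fix J hJ hm
  have h : ∀ x, blockPerm J hJ x ∈ ({m} : Set ℕ) ↔ x ∈ ({m} : Set ℕ) := by
    intro x
    simp only [Set.mem_singleton_iff]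
    constructor
    · intro hx
      exact (blockPerm J hJ).injective (by rw [hx, hfix])
    · rintro rfl; exact hfix
  ext y
  simp only [Set.mem_setOf_eq, Set.mem_singleton_iff]
  constructor
  · rintro ⟨z, rfl⟩
    have := (zpow_mem_iff h z m).2 rfl
    simpa using this
  · rintro rfl
    exact Equiv.Perm.SameCycle.refl _ _

end blocks

lemma summable_iff_tsum_ofReal_ne_top {α : Type*} {f : α → ℝ} (h0 : ∀ x, 0 ≤ f x) :
    Summable f ↔ ∑' x, ENNReal.ofReal (f x) ≠ ⊤ := by
  constructor
  · intro hs
    rw [← ENNReal.ofReal_tsum_of_nonneg h0 hs]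
    exact ENNReal.ofReal_ne_top
  · intro hne
    have h1 : (∑' x, ((f x).toNNReal : ℝ≥0∞)) ≠ ⊤ := hne
    have h2 := ENNReal.tsum_coe_ne_top_iff_summable.1 h1
    have h3 := NNReal.summable_coe.2 h2
    exact h3.congr (fun x => Real.coe_toNNReal _ (h0 x))
theorem stmt_5 (p : ℕ+ → ℝ) (hp : ∀ n, 0 ≤ p n) (hpsum : HasSum p 1)
    (h : ∀ δ : Equiv.Perm ℕ+, ¬ Summable fun n : ℕ+ => (n : ℝ) * p (δ n)) :
    ∀ a : ℕ+ → ℝ, (∀ n, 0 ≤ a n) → HasSum a 1 →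
      ∃ σ : Equiv.Perm ℕ+, FiniteCycles σ ∧
        {n : ℕ+ | cyclePrice σ p n ≤ a n}.Finite := by
  intro a ha hasum
  classical
  -- perturbed amounts
  set a' : ℕ+ → ℝ := fun n => a n + (1/2 : ℝ) ^ (n : ℕ) with ha'def
  have ha'pos : ∀ n, 0 < a' n := fun n =>
    add_pos_of_nonneg_of_pos (ha n) (by positivity)
  have hgeo : Summable (fun n : ℕ+ => (1/2 : ℝ) ^ (n : ℕ)) :=
    summable_geometric_two.comp_injective PNat.coe_injective
  have ha'sum : Summable a' := hasum.summable.add hgeo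
  have halt : ∀ n, a n < a' n := fun n => lt_add_of_pos_right _ (by positivity)
  -- antitone enumeration
  obtain ⟨e, hbmono⟩ := exists_antitone_enum a' ha'pos ha'sum
  set b : ℕ → ℝ := fun j => a' (e j) with hbdef
  have hbpos : ∀ j, 0 < b j := fun j => ha'pos _
  have hbsum : Summable b := e.summable_iff.2 ha'sum
  -- prices in ℝ≥0∞ along the enumeration
  set P : ℕ → ℝ≥0∞ := fun m => ENNReal.ofReal (p (e m)) with hPdef
  have hpe : Summable (fun m => p (e m)) := e.summable_iff.2 hpsum.summable
  have hPtot : ∑' m, P m ≠ ⊤ :=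
    (summable_iff_tsum_ofReal_ne_top (fun m => hp (e m))).1 hpe
  -- divergence
  have hdiv2 : ∑' m : ℕ, ((m + 1 : ℕ) : ℝ≥0∞) * P m = ⊤ := by
    by_contra hne
    have hkey : ∀ m : ℕ, ENNReal.ofReal (((m + 1 : ℕ) : ℝ) * p (e m))
        = ((m + 1 : ℕ) : ℝ≥0∞) * P m := by
      intro m
      rw [ENNReal.ofReal_mul (by positivity), ENNReal.ofReal_natCast]
    have hsum2 : Summable (fun m : ℕ => ((m + 1 : ℕ) : ℝ) * p (e m)) := by
      refine (summable_iff_tsum_ofReal_ne_top ?_).2 ?_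
      · intro m
        exact mul_nonneg (by positivity) (hp _)
      · rw [tsum_congr hkey]
        exact hne
    set ν : ℕ+ ≃ ℕ := Equiv.pnatEquivNat with hν
    have hsum3 : Summable ((fun m : ℕ => ((m + 1 : ℕ) : ℝ) * p (e m)) ∘ ν) :=
      ν.summable_iff.2 hsum2
    refine h (ν.trans e) (hsum3.congr ?_)
    intro n
    show ((ν n + 1 : ℕ) : ℝ) * p (e (ν n)) = (n : ℝ) * p ((ν.trans e) n)
    have h1 : (ν n + 1 : ℕ) = (n : ℕ) := PNat.natPred_add_one n
    rw [h1]
    rfl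
  -- tails
  set R : ℕ → ℝ≥0∞ := fun j => ∑' m, if j ≤ m then P m else 0 with hRdef
  have hRle : ∀ j, R j ≤ ∑' m, P m := fun j =>
    ENNReal.tsum_le_tsum (fun m => by split_ifs <;> simp)
  have hRtot : ∑' j, R j = ⊤ := by
    calc ∑' j, R j = ∑' (j) (m), (if j ≤ m then P m else 0) := rfl
      _ = ∑' (m) (j), (if j ≤ m then P m else 0) := ENNReal.tsum_comm
      _ = ∑' m, ((m + 1 : ℕ) : ℝ≥0∞) * P m := by
          refine tsum_congr (fun m => ?_)
          rw [tsum_eq_sum (s := Finset.range (m + 1))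
            (fun j hj => if_neg (fun hle => hj (Finset.mem_range.2 (by omega))))]
          rw [Finset.sum_congr rfl
            (fun j hj => if_pos (Nat.lt_succ_iff.1 (Finset.mem_range.1 hj)))]
          rw [Finset.sum_const, Finset.card_range, nsmul_eq_mul]
      _ = ⊤ := hdiv2
  -- infinitely many good cut points
  have hgood : ∀ N, ∃ j, N ≤ j ∧ ENNReal.ofReal (b j) < R j := by
    intro N
    by_contra hcon
    push_neg at hcon
    have hle : ∀ j, R j ≤ ENNReal.ofReal (b j) + (if j < N then R j else 0) := by
      intro j
      by_cases hj : j < N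
      · rw [if_pos hj]
        exact le_add_self
      · rw [if_neg hj, add_zero]
        exact hcon j (by omega)
    have h2 : ∑' j, R j ≤ ∑' j, (ENNReal.ofReal (b j) + (if j < N then R j else 0)) :=
      ENNReal.tsum_le_tsum hle
    rw [ENNReal.tsum_add] at h2
    have h3 : (∑' j, ENNReal.ofReal (b j)) ≠ ⊤ := by
      rw [← ENNReal.ofReal_tsum_of_nonneg (fun j => (hbpos _).le) hbsum]
      exact ENNReal.ofReal_ne_top
    have h4 : (∑' j, (if j < N then R j else 0)) ≠ ⊤ := by
      rw [tsum_eq_sum (s := Finset.range N)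
        (fun j hj => if_neg (fun hlt => hj (Finset.mem_range.2 hlt)))]
      refine (ENNReal.sum_lt_top.2 (fun j _ => ?_)).ne
      split_ifs
      · exact lt_of_le_of_lt (hRle j) (lt_top_iff_ne_top.2 hPtot)
      · exact lt_of_le_of_lt le_rfl (lt_top_iff_ne_top.2 (by simp))
    exact (ne_top_of_le_ne_top (ENNReal.add_ne_top.2 ⟨h3, h4⟩) h2) hRtot
  -- the step construction
  have hstep : ∀ j, ENNReal.ofReal (b j) < R j →
      ∃ j', j < j' ∧ ENNReal.ofReal (b j') < R j' ∧
        ENNReal.ofReal (b j) < ∑ m ∈ Finset.Ico j j', P m := by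
    intro j hj
    rw [hRdef] at hj
    simp only [ENNReal.tsum_eq_iSup_sum] at hj
    obtain ⟨s, hs⟩ := lt_iSup_iff.1 hj
    obtain ⟨j', hj'N, hj'good⟩ := hgood (max (s.sup id + 1) (j + 1))
    refine ⟨j', by omega, hj'good, ?_⟩
    calc ENNReal.ofReal (b j) < ∑ m ∈ s, (if j ≤ m then P m else 0) := hs
      _ = ∑ m ∈ s.filter (fun m => j ≤ m), P m := (Finset.sum_filter _ _).symm
      _ ≤ ∑ m ∈ Finset.Ico j j', P m := by
          refine Finset.sum_le_sum_of_subset ?_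
          intro m hm
          rw [Finset.mem_filter] at hm
          rw [Finset.mem_Ico]
          have : m ≤ s.sup id := Finset.le_sup (f := id) hm.1
          exact ⟨hm.2, by omega⟩
  -- the cut sequence
  obtain ⟨j0, -, hj0⟩ := hgood 0
  let T := {j : ℕ // ENNReal.ofReal (b j) < R j}
  let nxt : T → T := fun x =>
    ⟨(hstep x.1 x.2).choose, (hstep x.1 x.2).choose_spec.2.1⟩
  let Fa : ℕ → T := fun i => nxt^[i] ⟨j0, hj0⟩
  set F : ℕ → ℕ := fun i => (Fa i).1 with hFdef
  have hFsucc : ∀ i, Fa (i + 1) = nxt (Fa i) := fun i =>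
    Function.iterate_succ_apply' nxt i _
  have hFlt : ∀ i, F i < F (i + 1) ∧
      ENNReal.ofReal (b (F i)) < ∑ m ∈ Finset.Ico (F i) (F (i + 1)), P m := by
    intro i
    have h1 := (hstep (Fa i).1 (Fa i).2).choose_spec
    have h2 : F (i + 1) = (hstep (Fa i).1 (Fa i).2).choose :=
      congrArg Subtype.val (hFsucc i)
    rw [h2]
    exact ⟨h1.1, h1.2.2⟩
  have hFmono : StrictMono F := strictMono_nat_of_lt_succ (fun i => (hFlt i).1)
  -- the permutation
  set f : Equiv.Perm ℕ := blockPerm F hFmono with hfdef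
  set σ : Equiv.Perm ℕ+ := (e.symm.trans f).trans e with hσdef
  have hσz : ∀ (z : ℤ) (n : ℕ+), (σ ^ z) n = e ((f ^ z) (e.symm n)) := by
    intro z
    induction z using Int.induction_on with
    | zero => intro n; simp
    | succ k ih =>
      intro n
      have hs : e.symm (σ n) = f (e.symm n) := by
        show e.symm (e (f (e.symm n))) = f (e.symm n)
        exact e.symm_apply_apply _
      rw [zpow_add_one, zpow_add_one, Equiv.Perm.mul_apply, Equiv.Perm.mul_apply,
        ih (σ n), hs]
    | pred k ih =>
      intro n
      have hs : e.symm (σ⁻¹ n) = f⁻¹ (e.symm n) := by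
        show e.symm (e (f⁻¹ (e.symm n))) = f⁻¹ (e.symm n)
        exact e.symm_apply_apply _
      rw [zpow_sub_one, zpow_sub_one, Equiv.Perm.mul_apply, Equiv.Perm.mul_apply,
        ih (σ⁻¹ n), hs]
  have hSC : ∀ n m : ℕ+, σ.SameCycle n m ↔ f.SameCycle (e.symm n) (e.symm m) := by
    intro n m
    constructor
    · rintro ⟨z, hz⟩
      refine ⟨z, ?_⟩
      rw [hσz z n] at hz
      rw [← hz]
      simp
    · rintro ⟨z, hz⟩
      refine ⟨z, ?_⟩
      rw [hσz z n, hz]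
      simp
  have hsetEq : ∀ n : ℕ+, {m : ℕ+ | σ.SameCycle n m}
      = e.symm ⁻¹' {x : ℕ | f.SameCycle (e.symm n) x} := by
    intro n
    ext m
    simp only [Set.mem_setOf_eq, Set.mem_preimage, hSC]
  -- cycle sets
  have hcycle_small : ∀ n : ℕ+, (e.symm n) < F 0 →
      {m : ℕ+ | σ.SameCycle n m} = {n} := by
    intro n hn
    rw [hsetEq n, blockPerm_cycleSet_fix F hFmono hn]
    ext m
    simp [Equiv.symm_apply_eq, eq_comm]
  have hcycle_block : ∀ (n : ℕ+) (i : ℕ), F i ≤ e.symm n → e.symm n < F (i + 1) →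
      {m : ℕ+ | σ.SameCycle n m} = e.symm ⁻¹' (Set.Ico (F i) (F (i + 1))) := by
    intro n i h1 h2
    rw [hsetEq n, blockPerm_cycleSet F hFmono h1 h2]
  have hfin : FiniteCycles σ := by
    intro n
    by_cases hn : e.symm n < F 0
    · rw [hcycle_small n hn]
      exact Set.finite_singleton n
    · push_neg at hn
      set i := bidx F (e.symm n) with hi
      rw [hcycle_block n i (bidx_le F hn) (lt_bidx_next F hFmono hn)]
      exact (Set.finite_Ico _ _).preimage (e.symm.injective.injOn)
  refine ⟨σ, hfin, ?_⟩
  -- the main estimate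
  have hmain : ∀ n : ℕ+, F 0 ≤ e.symm n → a n < cyclePrice σ p n := by
    intro n hn
    set x := e.symm n with hx
    set i := bidx F x with hi
    have h1 : F i ≤ x := bidx_le F hn
    have h2 : x < F (i + 1) := lt_bidx_next F hFmono hn
    have hG : {m : ℕ+ | σ.SameCycle n m}
        = ((Finset.Ico (F i) (F (i + 1))).image e : Finset ℕ+) := by
      rw [hcycle_block n i h1 h2]
      ext m
      simp only [Set.mem_preimage, Set.mem_Ico, Finset.coe_image, Set.mem_image,
        Finset.mem_coe, Finset.mem_Ico]
      constructor
      · intro hm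
        exact ⟨e.symm m, hm, e.apply_symm_apply m⟩
      · rintro ⟨k, hk, rfl⟩
        rwa [e.symm_apply_apply]
    have hprice : cyclePrice σ p n = ∑ k ∈ Finset.Ico (F i) (F (i + 1)), p (e k) := by
      rw [cyclePrice, hG, Finset.tsum_subtype']
      exact Finset.sum_image (fun x _ y _ hxy => e.injective hxy)
    have hbound := (hFlt i).2
    have hPsum : ∑ m ∈ Finset.Ico (F i) (F (i + 1)), P m
        = ENNReal.ofReal (∑ k ∈ Finset.Ico (F i) (F (i + 1)), p (e k)) :=
      (ENNReal.ofReal_sum_of_nonneg (fun k _ => hp (e k))).symm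
    rw [hPsum] at hbound
    have hblt : b (F i) < ∑ k ∈ Finset.Ico (F i) (F (i + 1)), p (e k) :=
      (ENNReal.ofReal_lt_ofReal_iff'.1 hbound).1
    have hax : a n < b x := by
      have hbx' : b x = a' n := by
        show a' (e (e.symm n)) = a' n
        rw [e.apply_symm_apply]
      rw [hbx']
      exact halt n
    have hbx : b x ≤ b (F i) := hbmono h1
    rw [hprice]
    exact lt_of_lt_of_le hax (le_trans hbx hblt.le)
  refine Set.Finite.subset ((Set.finite_Iio (F 0)).preimage
    (e.symm.injective.injOn)) ?_
  intro n hn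
  simp only [Set.mem_setOf_eq] at hn
  simp only [Set.mem_preimage, Set.mem_Iio]
  by_contra hcon
  push_neg at hcon
  exact absurd hn (not_le.2 (hmain n hcon))
end

section
/- Let p : ℕ⁺ → ℝ be a sequence of box prices with p_n ≥ 0 and ∑_{n=1}^∞ p_n = 1. Then a strategy exists if and only if there exists a permutation δ of the positive integers such that ∑_{n=1}^∞ n·p_{δ(n)} < ∞. -/
open scoped BigOperators ENNReal
set_option maxHeartbeats 1000000

namespace Stmt6Aux

lemma finite_ge_of_summable {f : ℕ+ → ℝ} (hf : Summable f) {c : ℝ} (hc : 0 < c) :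
    {x : ℕ+ | c ≤ f x}.Finite := by
  have h := hf.tendsto_cofinite_zero.eventually (gt_mem_nhds hc)
  rw [Filter.eventually_cofinite] at h
  exact h.subset (fun x hx => by simpa using not_lt.2 hx)

lemma exists_sorted_enum {f : ℕ+ → ℝ} (hf : Summable f) {s : Set ℕ+} (hs : s.Infinite)
    (hpos : ∀ x ∈ s, 0 < f x) :
    ∃ E : ℕ → ℕ+, Function.Injective E ∧ Set.range E = s ∧ ∀ k, f (E (k + 1)) ≤ f (E k) := by
  classical
  have hspec : ∀ F : Finset ℕ+, ∃ x, x ∈ s ∧ x ∉ F ∧ ∀ y ∈ s, y ∉ F → f y ≤ f x := by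
    intro F
    obtain ⟨x0, hx0s, hx0F⟩ := (hs.diff F.finite_toSet).nonempty
    have hx0F' : x0 ∉ F := by simpa using hx0F
    have hAfin : {y : ℕ+ | y ∈ s ∧ y ∉ F ∧ f x0 ≤ f y}.Finite :=
      (finite_ge_of_summable hf (hpos x0 hx0s)).subset (fun y hy => hy.2.2)
    obtain ⟨x, hxA, hmax⟩ := Finset.exists_max_image hAfin.toFinset f
      ⟨x0, by rw [Set.Finite.mem_toFinset]; exact ⟨hx0s, hx0F', le_refl _⟩⟩
    rw [Set.Finite.mem_toFinset] at hxA
    refine ⟨x, hxA.1, hxA.2.1, fun y hys hyF => ?_⟩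
    by_cases hle : f x0 ≤ f y
    · exact hmax y (by rw [Set.Finite.mem_toFinset]; exact ⟨hys, hyF, hle⟩)
    · exact (not_le.1 hle).le.trans hxA.2.2
  choose pick hp1 hp2 hp3 using hspec
  let used : ℕ → Finset ℕ+ := fun k => Nat.rec ∅ (fun _ Fk => insert (pick Fk) Fk) k
  have husedsucc : ∀ k, used (k + 1) = insert (pick (used k)) (used k) := fun k => rfl
  set E : ℕ → ℕ+ := fun k => pick (used k) with hE
  have hmono : ∀ {j k}, j ≤ k → used j ⊆ used k := by
    intro j k hjk
    induction k with
    | zero => simpa [Nat.le_zero.1 hjk] using Finset.Subset.refl _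
    | succ n ih =>
      rcases Nat.lt_or_ge j (n+1) with h | h
      · exact (ih (Nat.lt_succ_iff.1 h)).trans (by rw [husedsucc]; exact Finset.subset_insert _ _)
      · have : j = n + 1 := le_antisymm hjk h
        simp [this]
  have hmemE : ∀ {j k}, j < k → E j ∈ used k := by
    intro j k hjk
    have : E j ∈ used (j+1) := by rw [husedsucc]; exact Finset.mem_insert_self _ _
    exact hmono hjk this
  have hEinj : Function.Injective E := by
    intro j k hjk
    by_contra hne
    rcases Ne.lt_or_gt hne with h | h
    · have := hmemE h; rw [hjk] at this; exact hp2 (used k) this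
    · have := hmemE h; rw [← hjk] at this; exact hp2 (used j) this
  have hEs : ∀ k, E k ∈ s := fun k => hp1 (used k)
  have hnotused : ∀ x, x ∉ Set.range E → ∀ k, x ∉ used k := by
    intro x hx k
    induction k with
    | zero => simp [used]
    | succ n ih =>
      rw [husedsucc]
      simp only [Finset.mem_insert]
      push_neg
      exact ⟨fun h => hx ⟨n, h.symm⟩, ih⟩
  refine ⟨E, hEinj, ?_, ?_⟩
  · apply Set.eq_of_subset_of_subset
    · rintro x ⟨k, rfl⟩; exact hEs k
    · intro x hxs
      by_contra hx
      have hle : ∀ k, f x ≤ f (E k) := fun k => hp3 (used k) x hxs (hnotused x hx k)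
      have : Set.range E ⊆ {y : ℕ+ | f x ≤ f y} := by rintro y ⟨k, rfl⟩; exact hle k
      exact (Set.infinite_range_of_injective hEinj).mono this
        (finite_ge_of_summable hf (hpos x hxs))
  · intro k
    have h1 : E (k+1) ∉ used (k+1) := hp2 _
    have h2 : E (k+1) ∉ used k := fun h => h1 (hmono (Nat.le_succ k) h)
    exact hp3 (used k) (E (k+1)) (hEs (k+1)) h2



noncomputable def tailT (q : ℕ → ℝ) (s : ℕ) : ℝ := ∑' m, if s ≤ m then q m else 0

variable {q : ℕ → ℝ}

lemma ite_nonneg' (hq0 : ∀ m, 0 ≤ q m) (s m : ℕ) : 0 ≤ if s ≤ m then q m else 0 := by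
  by_cases h : s ≤ m <;> simp [h, hq0 m]

lemma summable_ite (hq : Summable q) (s : ℕ) :
    Summable (fun m => if s ≤ m then q m else 0) := by
  have := hq.indicator {m : ℕ | s ≤ m}
  refine this.congr (fun m => ?_)
  simp [Set.indicator_apply]

lemma tailT_nonneg (hq0 : ∀ m, 0 ≤ q m) (s : ℕ) : 0 ≤ tailT q s :=
  tsum_nonneg (fun m => ite_nonneg' hq0 s m)

lemma tailT_eq_shift (hq : Summable q) (s : ℕ) : tailT q s = ∑' m, q (m + s) := by
  have hinj : Function.Injective (fun m : ℕ => m + s) := add_left_injective s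
  have hsupp : Function.support (fun m => if s ≤ m then q m else 0)
      ⊆ Set.range (fun m : ℕ => m + s) := by
    intro x hx
    simp only [Function.mem_support, ne_eq, ite_eq_right_iff, not_forall] at hx
    obtain ⟨hsx, -⟩ := hx
    refine ⟨x - s, ?_⟩
    simp only []
    omega
  have h := Function.Injective.tsum_eq hinj (f := fun m => if s ≤ m then q m else 0) hsupp
  rw [tailT, ← h]
  exact (tsum_congr (fun m => by simp)).symm

lemma tailT_add (hq : Summable q) (s : ℕ) :
    ∑ k ∈ Finset.range s, q k + tailT q s = ∑' m, q m := by
  rw [tailT_eq_shift hq]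
  exact Summable.sum_add_tsum_nat_add s hq

lemma le_tailT (hq : Summable q) (hq0 : ∀ m, 0 ≤ q m) {s : ℕ} {F : Finset ℕ}
    (hF : ∀ m ∈ F, s ≤ m) : ∑ m ∈ F, q m ≤ tailT q s := by
  rw [tailT]
  have h1 : ∑ m ∈ F, q m = ∑ m ∈ F, (if s ≤ m then q m else 0) :=
    Finset.sum_congr rfl (fun m hm => by rw [if_pos (hF m hm)])
  rw [h1]
  exact Summable.sum_le_tsum F (fun m _ => ite_nonneg' hq0 s m) (summable_ite hq s)

lemma summable_tailT (hq0 : ∀ m, 0 ≤ q m)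
    (hs : Summable (fun m : ℕ => ((m : ℝ) + 1) * q m)) : Summable (tailT q) := by
  have hq : Summable q := by
    refine hs.of_nonneg_of_le hq0 (fun m => ?_)
    nth_rewrite 1 [show q m = 1 * q m by ring]
    exact mul_le_mul_of_nonneg_right (by exact_mod_cast Nat.le_add_left 1 m) (hq0 m)
  apply summable_of_sum_range_le (c := ∑' m : ℕ, ((m : ℝ) + 1) * q m)
    (tailT_nonneg hq0)
  intro N
  have hsw : ∑ j ∈ Finset.range N, tailT q j
      = ∑' m : ℕ, ∑ j ∈ Finset.range N, (if j ≤ m then q m else 0) := by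
    simp only [tailT]
    exact (Summable.tsum_finsetSum (fun j _ => summable_ite hq j)).symm
  rw [hsw]
  have hinner : ∀ m : ℕ, ∑ j ∈ Finset.range N, (if j ≤ m then q m else 0) ≤ ((m : ℝ) + 1) * q m := by
    intro m
    rw [Finset.sum_ite, Finset.sum_const, Finset.sum_const, smul_zero, add_zero, nsmul_eq_mul]
    have hcard : ((Finset.range N).filter (fun j => j ≤ m)).card ≤ m + 1 := by
      have hss : (Finset.range N).filter (fun j => j ≤ m) ⊆ Finset.range (m+1) := by
        intro j hj
        simp only [Finset.mem_filter, Finset.mem_range] at hj ⊢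
        omega
      simpa using Finset.card_le_card hss
    apply mul_le_mul_of_nonneg_right _ (hq0 m)
    exact_mod_cast hcard
  have hsnn : Summable (fun m : ℕ => ∑ j ∈ Finset.range N, (if j ≤ m then q m else 0)) := by
    refine hs.of_nonneg_of_le (fun m => Finset.sum_nonneg (fun j _ => ite_nonneg' hq0 j m)) hinner
  exact Summable.tsum_le_tsum hinner hsnn hs

lemma summable_mul_of_summable_tailT (hq0 : ∀ m, 0 ≤ q m)
    (hanti : ∀ ⦃j k : ℕ⦄, j ≤ k → q k ≤ q j) (hq : Summable q)
    (hT : Summable (tailT q)) : Summable (fun k : ℕ => ((k : ℝ) + 1) * q k) := by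
  have hg : Summable (fun k : ℕ => tailT q (k / 2)) := by
    have he : HasSum (fun k : ℕ => tailT q ((2 * k) / 2)) (∑' s, tailT q s) := by
      have h1 : (fun k : ℕ => tailT q ((2 * k) / 2)) = tailT q := by
        funext k; congr 1; omega
      rw [h1]; exact hT.hasSum
    have ho : HasSum (fun k : ℕ => tailT q ((2 * k + 1) / 2)) (∑' s, tailT q s) := by
      have h1 : (fun k : ℕ => tailT q ((2 * k + 1) / 2)) = tailT q := by
        funext k; congr 1; omega
      rw [h1]; exact hT.hasSum
    exact (he.even_add_odd ho).summable
  refine (hg.mul_left 2).of_nonneg_of_le (fun k => mul_nonneg (by positivity) (hq0 k)) (fun k => ?_)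
  have h1 : ∑ m ∈ Finset.Icc (k / 2) k, q m ≤ tailT q (k / 2) :=
    le_tailT hq hq0 (fun m hm => (Finset.mem_Icc.1 hm).1)
  have h2 : ((k + 1 - k / 2 : ℕ) : ℝ) * q k ≤ ∑ m ∈ Finset.Icc (k / 2) k, q m := by
    have hb : ∑ m ∈ Finset.Icc (k / 2) k, q k ≤ ∑ m ∈ Finset.Icc (k / 2) k, q m :=
      Finset.sum_le_sum (fun m hm => hanti (Finset.mem_Icc.1 hm).2)
    calc ((k + 1 - k / 2 : ℕ) : ℝ) * q k
        = (Finset.Icc (k / 2) k).card * q k := by rw [Nat.card_Icc]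
      _ = ∑ m ∈ Finset.Icc (k / 2) k, q k := by rw [Finset.sum_const, nsmul_eq_mul]
      _ ≤ _ := hb
  have h3 : ((k : ℝ) + 1) ≤ 2 * ((k + 1 - k / 2 : ℕ) : ℝ) := by
    have h5 : 2 * (k / 2) ≤ k := by omega
    have hc : ((k + 1 - k / 2 : ℕ) : ℝ) = (k : ℝ) + 1 - ((k / 2 : ℕ) : ℝ) := by
      rw [Nat.cast_sub (by omega)]; push_cast; ring
    rw [hc]
    have hc2 : ((k / 2 : ℕ) : ℝ) * 2 ≤ (k : ℝ) := by exact_mod_cast Nat.div_mul_le_self k 2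
    nlinarith
  calc ((k : ℝ) + 1) * q k ≤ (2 * ((k + 1 - k / 2 : ℕ) : ℝ)) * q k :=
        mul_le_mul_of_nonneg_right h3 (hq0 k)
    _ = 2 * (((k + 1 - k / 2 : ℕ) : ℝ) * q k) := by ring
    _ ≤ 2 * ∑ m ∈ Finset.Icc (k / 2) k, q m := by linarith [h2]
    _ ≤ 2 * tailT q (k / 2) := by linarith [h1]

lemma sum_finset_le_sorted (hq0 : ∀ m, 0 ≤ q m)
    (hanti : ∀ ⦃j k : ℕ⦄, j ≤ k → q k ≤ q j) (G : Finset ℕ) :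
    ∑ k ∈ G, q k ≤ ∑ k ∈ Finset.range G.card, q k := by
  classical
  induction G using Finset.strongInductionOn with
  | _ G ih =>
    rcases G.eq_empty_or_nonempty with rfl | hne
    · simp
    · set M := G.max' hne with hM
      have hMmem : M ∈ G := G.max'_mem hne
      have hcard : (G.erase M).card = G.card - 1 := by rw [Finset.card_erase_of_mem hMmem]
      have hsub : G.erase M ⊂ G := Finset.erase_ssubset hMmem
      have ih1 := ih (G.erase M) hsub
      rw [hcard] at ih1
      have hcpos : 1 ≤ G.card := Finset.card_pos.2 hne
      have hsplit : ∑ k ∈ G, q k = ∑ k ∈ G.erase M, q k + q M := by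
        rw [← Finset.add_sum_erase G q hMmem]; ring
      have hr : ∑ k ∈ Finset.range G.card, q k
          = ∑ k ∈ Finset.range (G.card - 1), q k + q (G.card - 1) := by
        conv_lhs => rw [show G.card = (G.card - 1) + 1 by omega]
        rw [Finset.sum_range_succ]
      have hMbig : G.card - 1 ≤ M := by
        have hss : G ⊆ Finset.range (M + 1) := by
          intro x hx
          simp only [Finset.mem_range]
          exact Nat.lt_succ_of_le (G.le_max' x hx)
        have := Finset.card_le_card hss
        simp only [Finset.card_range] at this
        omega
      rw [hsplit, hr]
      exact add_le_add ih1 (hanti hMbig)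


open Filter

def peq : ℕ+ ≃ ℕ where
  toFun n := (n : ℕ) - 1
  invFun k := ⟨k + 1, Nat.succ_pos k⟩
  left_inv n := by
    apply PNat.coe_injective
    show (n : ℕ) - 1 + 1 = (n : ℕ)
    exact Nat.succ_pred_eq_of_pos n.pos
  right_inv k := by simp

lemma peq_symm_cast_real (k : ℕ) : ((peq.symm k : ℕ+) : ℝ) = (k : ℝ) + 1 := by
  show ((⟨k + 1, Nat.succ_pos k⟩ : ℕ+) : ℝ) = (k : ℝ) + 1
  push_cast
  norm_num

lemma easy_dir (p : ℕ+ → ℝ) (hp : ∀ n, 0 ≤ p n) (hpsum : HasSum p 1)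
    (δ : Equiv.Perm ℕ+) (hδ : Summable fun n : ℕ+ => (n : ℝ) * p (δ n)) :
    ∃ a : ℕ+ → ℝ, (∀ n, 0 ≤ a n) ∧ HasSum a 1 ∧
      ∀ σ : Equiv.Perm ℕ+, FiniteCycles σ →
        {n : ℕ+ | cyclePrice σ p n ≤ a n}.Infinite := by
  classical
  set q : ℕ → ℝ := fun k => p (δ (peq.symm k)) with hqdef
  have hq0 : ∀ k, 0 ≤ q k := fun k => hp _
  have hqsum : Summable (fun k : ℕ => ((k : ℝ) + 1) * q k) := by
    have h := (Equiv.summable_iff (peq.symm)).2 hδ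
    refine h.congr (fun k => ?_)
    show ((peq.symm k : ℕ+) : ℝ) * p (δ (peq.symm k)) = _
    rw [peq_symm_cast_real]
  have hqs : Summable q := by
    refine hqsum.of_nonneg_of_le hq0 (fun m => ?_)
    nth_rewrite 1 [show q m = 1 * q m by ring]
    exact mul_le_mul_of_nonneg_right (by exact_mod_cast Nat.le_add_left 1 m) (hq0 m)
  have hT : Summable (tailT q) := summable_tailT hq0 hqsum
  have htend : Tendsto (fun i => ∑' k, tailT q (k + i)) atTop (nhds 0) :=
    tendsto_sum_nat_add (tailT q)
  have hev : ∀ᶠ i in atTop, ∑' k, tailT q (k + i) < 1 :=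
    htend.eventually_lt_const one_pos
  obtain ⟨K, hK1, hKtail⟩ : ∃ K, 1 ≤ K ∧ ∑' k, tailT q (k + K) < 1 :=
    ((eventually_ge_atTop 1).and hev).exists
  set S : ℝ := ∑' k, tailT q (k + K) with hSdef
  have hS0 : 0 ≤ S := tsum_nonneg (fun k => tailT_nonneg hq0 _)
  have hS1 : S ≤ 1 := le_of_lt hKtail
  set α : ℕ → ℝ := fun s => if s = 0 then 1 - S else if K ≤ s then tailT q s else 0 with hαdef
  have hα0 : ∀ s, 0 ≤ α s := by
    intro s
    by_cases h0 : s = 0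
    · simp only [hαdef, h0, if_pos rfl]; norm_num; linarith
    · by_cases hK : K ≤ s <;>
        simp [hαdef, h0, hK, tailT_nonneg hq0]
  set a : ℕ+ → ℝ := fun x => α (peq (δ.symm x)) with hadef
  have hinjK : Function.Injective (fun k : ℕ => k + K) := add_left_injective K
  have hαsum : HasSum α 1 := by
    have h1 : HasSum (fun s : ℕ => if s = 0 then 1 - S else 0) (1 - S) := hasSum_ite_eq 0 (1 - S)
    have hTK : Summable (fun k => tailT q (k + K)) := (summable_nat_add_iff K).2 hT
    have h2' : HasSum (fun k => tailT q (k + K)) S := hTK.hasSum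
    have h2 : HasSum (fun s : ℕ => if K ≤ s then tailT q s else 0) S := by
      have hsupp : ∀ x ∉ Set.range (fun k : ℕ => k + K),
          (if K ≤ x then tailT q x else 0) = 0 := by
        intro x hx
        have hxK : ¬ K ≤ x := by
          intro h
          exact hx ⟨x - K, by simp only []; omega⟩
        rw [if_neg hxK]
      rw [← Function.Injective.hasSum_iff hinjK hsupp]
      have heq : (fun k : ℕ => if K ≤ k + K then tailT q (k + K) else 0)
          = fun k : ℕ => tailT q (k + K) := by
        funext k
        rw [if_pos (Nat.le_add_left K k)]
      show HasSum (fun k : ℕ => if K ≤ k + K then tailT q (k + K) else 0) S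
      rw [heq]
      exact h2'
    have h3 := h1.add h2
    rw [sub_add_cancel] at h3
    have heq2 : (fun s : ℕ => (if s = 0 then 1 - S else 0) + (if K ≤ s then tailT q s else 0))
        = α := by
      funext s
      by_cases h0 : s = 0
      · subst h0
        have hK0 : ¬ K ≤ 0 := by omega
        simp [hαdef, hK0]
      · simp [hαdef, h0]
    rwa [heq2] at h3
  have hasum : HasSum a 1 := by
    have := (Equiv.hasSum_iff (δ.symm.trans peq)).2 hαsum
    exact this
  refine ⟨a, fun n => hα0 _, hasum, ?_⟩
  -- success part
  intro σ hσ
  have hqx : ∀ x : ℕ+, δ (peq.symm (peq (δ.symm x))) = x := by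
    intro x
    rw [Equiv.symm_apply_apply, Equiv.apply_symm_apply]
  set C : ℕ+ → Set ℕ+ := fun x => {m | σ.SameCycle x m} with hCdef
  have hCfin : ∀ x, (C x).Finite := hσ
  have hself : ∀ x, x ∈ C x := fun x => Equiv.Perm.SameCycle.refl σ x
  set Jset : ℕ+ → Set ℕ := fun x => {k | δ (peq.symm k) ∈ C x} with hJdef
  have hJne : ∀ x, (Jset x).Nonempty := by
    intro x
    refine ⟨peq (δ.symm x), ?_⟩
    show δ (peq.symm (peq (δ.symm x))) ∈ C x
    rw [hqx x]
    exact hself x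
  set j : ℕ+ → ℕ := fun x => sInf (Jset x) with hjdef
  set f : ℕ+ → ℕ+ := fun x => δ (peq.symm (j x)) with hfdef
  have hfC : ∀ x, f x ∈ C x := fun x => Nat.sInf_mem (hJne x)
  have hCeq : ∀ {x y}, σ.SameCycle x y → C x = C y := by
    intro x y h
    ext m
    exact ⟨fun hm => h.symm.trans hm, fun hm => h.trans hm⟩
  have hfeq : ∀ {x y}, σ.SameCycle x y → f x = f y := by
    intro x y h
    simp only [hfdef, hjdef, hJdef]
    rw [hCeq h]
  have hrangeinf : Set.Infinite (Set.range f) := by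
    by_contra hfin
    rw [Set.not_infinite] at hfin
    have hcover : (Set.univ : Set ℕ+) ⊆ ⋃ y ∈ Set.range f, C y := by
      intro x _
      exact Set.mem_biUnion (⟨x, rfl⟩ : f x ∈ Set.range f)
        ((hfC x : σ.SameCycle x (f x)).symm : σ.SameCycle (f x) x)
    exact Set.infinite_univ ((hfin.biUnion (fun y _ => hCfin y)).subset hcover)
  have hfix : ∀ y ∈ Set.range f, f y = y := by
    rintro y ⟨x, rfl⟩
    exact (hfeq (hfC x : σ.SameCycle x (f x))).symm
  have hbadfin : ((fun k => δ (peq.symm k)) '' (Set.Iio K)).Finite :=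
    (Set.finite_Iio K).image _
  have hsucc : Set.range f \ ((fun k => δ (peq.symm k)) '' (Set.Iio K))
      ⊆ {n : ℕ+ | cyclePrice σ p n ≤ a n} := by
    rintro y ⟨hyr, hybad⟩
    have hy : δ (peq.symm (j y)) = y := hfix y hyr
    have hKj : K ≤ j y := by
      by_contra h
      exact hybad ⟨j y, not_le.1 h, hy⟩
    have hay : a y = tailT q (j y) := by
      have hpy : peq (δ.symm y) = j y := by
        have h1 : peq.symm (j y) = δ.symm y := by
          have h2 := congrArg δ.symm hy
          rwa [Equiv.symm_apply_apply] at h2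
        rw [← h1, Equiv.apply_symm_apply]
      show α (peq (δ.symm y)) = tailT q (j y)
      rw [hpy]
      have h0 : j y ≠ 0 := by omega
      simp only [hαdef, if_neg h0, if_pos hKj]
    have hCy := hCfin y
    haveI := hCy.to_subtype
    have hub : cyclePrice σ p y ≤ tailT q (j y) := by
      rw [cyclePrice, tailT]
      refine Summable.tsum_le_tsum_of_inj (fun m : {m : ℕ+ | σ.SameCycle y m} => peq (δ.symm (m : ℕ+)))
        ?_ (fun c _ => ite_nonneg' hq0 (j y) c) (fun m => ?_) Summable.of_finite
        (summable_ite hqs (j y))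
      · intro m1 m2 h
        apply Subtype.ext
        exact δ.symm.injective (peq.injective h)
      · have hmem : peq (δ.symm (m : ℕ+)) ∈ Jset y := by
          show δ (peq.symm (peq (δ.symm (m : ℕ+)))) ∈ C y
          rw [hqx]
          exact m.2
        have hle : j y ≤ peq (δ.symm (m : ℕ+)) := Nat.sInf_le hmem
        rw [if_pos hle]
        show p (m : ℕ+) ≤ q (peq (δ.symm (m : ℕ+)))
        show p (m : ℕ+) ≤ p (δ (peq.symm (peq (δ.symm (m : ℕ+)))))
        rw [hqx]
    exact le_trans hub (le_of_eq hay.symm)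
  exact ((hrangeinf.diff hbadfin).mono hsucc)

lemma exists_perm_of_classes (cl : ℕ+ → ℕ) (hfib : ∀ c, (cl ⁻¹' {c}).Finite) :
    ∃ σ : Equiv.Perm ℕ+, FiniteCycles σ ∧
      ∀ x : ℕ+, {m : ℕ+ | σ.SameCycle x m} = cl ⁻¹' {cl x} := by
  classical
  have hex : ∀ c : ℕ, ∃ f : Equiv.Perm ℕ+, f.IsCycleOn (cl ⁻¹' {c}) ∧
      {x : ℕ+ | f x ≠ x} ⊆ cl ⁻¹' {c} := fun c => ((hfib c).countable).exists_cycleOn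
  choose f hf1 hf2 using hex
  have hclap : ∀ x : ℕ+, cl (f (cl x) x) = cl x := by
    intro x
    by_cases h : f (cl x) x = x
    · rw [h]
    · have h2 : f (cl x) (f (cl x) x) ≠ f (cl x) x := fun he => h ((f (cl x)).injective he)
      exact hf2 (cl x) h2
  have hclinv : ∀ x : ℕ+, cl ((f (cl x)).symm x) = cl x := by
    intro x
    by_cases h : (f (cl x)).symm x = x
    · rw [h]
    · have h2 : f (cl x) ((f (cl x)).symm x) ≠ (f (cl x)).symm x := by
        rw [Equiv.apply_symm_apply]
        exact fun he => h he.symm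
      exact hf2 (cl x) h2
  set σ : Equiv.Perm ℕ+ :=
    { toFun := fun x => f (cl x) x
      invFun := fun x => (f (cl x)).symm x
      left_inv := by
        intro x
        simp only []
        rw [hclap x, Equiv.symm_apply_apply]
      right_inv := by
        intro x
        simp only []
        rw [hclinv x, Equiv.apply_symm_apply] } with hσdef
  have hσap : ∀ x, σ x = f (cl x) x := fun x => rfl
  have hσinv : ∀ x, σ⁻¹ x = (f (cl x)).symm x := fun x => rfl
  have key : ∀ (i : ℤ) (x : ℕ+), (σ ^ i) x = ((f (cl x)) ^ i) x ∧ cl ((σ ^ i) x) = cl x := by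
    intro i x
    induction i using Int.induction_on with
    | zero => simp
    | succ i ih =>
      obtain ⟨ih1, ih2⟩ := ih
      have hstep : (σ ^ ((i : ℤ) + 1)) x = σ ((σ ^ (i : ℤ)) x) := by
        rw [add_comm, zpow_add, zpow_one, Equiv.Perm.mul_apply]
      have hstep2 : ((f (cl x)) ^ ((i : ℤ) + 1)) x = (f (cl x)) (((f (cl x)) ^ (i : ℤ)) x) := by
        rw [add_comm, zpow_add, zpow_one, Equiv.Perm.mul_apply]
      have hσy : σ ((σ ^ (i : ℤ)) x) = (f (cl x)) ((σ ^ (i : ℤ)) x) := by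
        rw [hσap, ih2]
      constructor
      · rw [hstep, hstep2, hσy, ih1]
      · rw [hstep, hσy]
        calc cl ((f (cl x)) ((σ ^ (i : ℤ)) x))
            = cl ((f (cl ((σ ^ (i : ℤ)) x))) ((σ ^ (i : ℤ)) x)) := by rw [ih2]
          _ = cl ((σ ^ (i : ℤ)) x) := hclap _
          _ = cl x := ih2
    | pred i ih =>
      obtain ⟨ih1, ih2⟩ := ih
      have hstep : (σ ^ (-(i : ℤ) - 1)) x = σ⁻¹ ((σ ^ (-(i : ℤ))) x) := by
        rw [sub_eq_add_neg, add_comm, zpow_add, zpow_neg_one, Equiv.Perm.mul_apply]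
      have hstep2 : ((f (cl x)) ^ (-(i : ℤ) - 1)) x = (f (cl x))⁻¹ (((f (cl x)) ^ (-(i : ℤ))) x) := by
        rw [sub_eq_add_neg, add_comm, zpow_add, zpow_neg_one, Equiv.Perm.mul_apply]
      have hσy : σ⁻¹ ((σ ^ (-(i : ℤ))) x) = (f (cl x)).symm ((σ ^ (-(i : ℤ))) x) := by
        rw [hσinv, ih2]
      constructor
      · rw [hstep, hstep2, hσy, ih1, Equiv.Perm.inv_def]
      · rw [hstep, hσy]
        calc cl ((f (cl x)).symm ((σ ^ (-(i : ℤ))) x))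
            = cl ((f (cl ((σ ^ (-(i : ℤ))) x))).symm ((σ ^ (-(i : ℤ))) x)) := by rw [ih2]
          _ = cl ((σ ^ (-(i : ℤ))) x) := hclinv _
          _ = cl x := ih2
  refine ⟨σ, ?_, ?_⟩
  · intro x
    refine (hfib (cl x)).subset ?_
    rintro m ⟨i, hi⟩
    have h := (key i x).2
    rw [hi] at h
    exact h
  · intro x
    apply Set.eq_of_subset_of_subset
    · rintro m ⟨i, hi⟩
      have h := (key i x).2
      rw [hi] at h
      exact h
    · intro m hm
      have hsc : (f (cl x)).SameCycle x m :=
        (hf1 (cl x)).2 (show x ∈ cl ⁻¹' {cl x} from rfl) hm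
      obtain ⟨i, hi⟩ := hsc
      exact ⟨i, by rw [(key i x).1, hi]⟩
lemma tsum_set_eq_finset_sum (f : ℕ+ → ℝ) {s : Set ℕ+} {S : Finset ℕ+} (h : s = ↑S) :
    (∑' m : s, f m) = ∑ m ∈ S, f m := by
  subst h
  exact Finset.tsum_subtype S f

lemma hard_dir (p : ℕ+ → ℝ) (hp : ∀ n, 0 ≤ p n) (hpsum : HasSum p 1)
    (a : ℕ+ → ℝ) (ha0 : ∀ n, 0 ≤ a n) (ha1 : HasSum a 1)
    (hstrat : ∀ σ : Equiv.Perm ℕ+, FiniteCycles σ →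
      {n : ℕ+ | cyclePrice σ p n ≤ a n}.Infinite) :
    ∃ δ : Equiv.Perm ℕ+, Summable fun n : ℕ+ => (n : ℝ) * p (δ n) := by
  classical
  set Pos : Set ℕ+ := {n : ℕ+ | 0 < p n} with hPosdef
  by_cases hPosFin : Pos.Finite
  · refine ⟨Equiv.refl ℕ+, ?_⟩
    apply summable_of_ne_finset_zero (s := hPosFin.toFinset)
    intro n hn
    have hnp : ¬ 0 < p n := by
      intro h
      exact hn (hPosFin.mem_toFinset.2 h)
    have : p n = 0 := le_antisymm (not_lt.1 hnp) (hp n)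
    simp [this]
  · have hPosInf : Pos.Infinite := hPosFin
    have hpsummable : Summable p := hpsum.summable
    obtain ⟨E₁, hE₁inj, hE₁range, hE₁anti⟩ :=
      exists_sorted_enum hpsummable hPosInf (fun x hx => hx)
    set q : ℕ → ℝ := fun k => p (E₁ k) with hqdef
    have hq0 : ∀ k, 0 ≤ q k := fun k => hp _
    have hqanti : ∀ ⦃j k : ℕ⦄, j ≤ k → q k ≤ q j := fun j k hjk =>
      (antitone_nat_of_succ_le hE₁anti) hjk
    have hqsummable : Summable q := hpsummable.comp_injective hE₁inj
    have hq1 : HasSum q 1 := by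
      refine (Function.Injective.hasSum_iff hE₁inj ?_).2 hpsum
      intro x hx
      rw [hE₁range] at hx
      exact le_antisymm (not_lt.1 hx) (hp x)
    have hqtsum : ∑' k, q k = 1 := hq1.tsum_eq
    have hLEM : ∀ F : Finset ℕ+, ∑ x ∈ F, p x ≤ ∑ k ∈ Finset.range F.card, q k := by
      intro F
      set F' := F.filter (fun x => 0 < p x) with hF'def
      have hFF' : ∑ x ∈ F, p x = ∑ x ∈ F', p x := by
        rw [hF'def, Finset.sum_filter_of_ne]
        intro x _ hne
        exact lt_of_le_of_ne (hp x) (Ne.symm hne)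
      set κ : ℕ+ → ℕ := fun x => if h : x ∈ Set.range E₁ then h.choose else 0 with hκdef
      have hκ : ∀ x : ℕ+, 0 < p x → E₁ (κ x) = x := by
        intro x hx
        have hxr : x ∈ Set.range E₁ := by rw [hE₁range]; exact hx
        simp only [hκdef, dif_pos hxr]
        exact hxr.choose_spec
      have hmemF' : ∀ x ∈ F', 0 < p x := fun x hx => (Finset.mem_filter.1 hx).2
      have hκinj : Set.InjOn κ ↑F' := by
        intro x hx y hy hxy
        rw [← hκ x (hmemF' x hx), ← hκ y (hmemF' y hy), hxy]
      have h1 : ∑ x ∈ F', p x = ∑ k ∈ F'.image κ, q k := by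
        rw [Finset.sum_image hκinj]
        refine Finset.sum_congr rfl (fun x hx => ?_)
        show p x = p (E₁ (κ x))
        rw [hκ x (hmemF' x hx)]
      have hcard : (F'.image κ).card = F'.card := Finset.card_image_of_injOn hκinj
      have h2 : ∑ k ∈ F'.image κ, q k ≤ ∑ k ∈ Finset.range (F'.image κ).card, q k :=
        sum_finset_le_sorted hq0 hqanti _
      have h3 : ∑ k ∈ Finset.range (F'.image κ).card, q k ≤ ∑ k ∈ Finset.range F.card, q k := by
        apply Finset.sum_le_sum_of_subset_of_nonneg
        · apply Finset.range_subset_range.2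
          rw [hcard]
          exact Finset.card_le_card (Finset.filter_subset _ _)
        · exact fun k _ _ => hq0 k
      rw [hFF', h1]
      exact h2.trans h3
    have hTsum : Summable (tailT q) := by
      by_contra hTns
      set β : ℕ+ → ℝ := fun x => a x + (1/2 : ℝ) ^ (x : ℕ) with hβdef
      have hβpos : ∀ x, 0 < β x := fun x =>
        add_pos_of_nonneg_of_pos (ha0 x) (by positivity)
      have hgeo : Summable (fun x : ℕ+ => (1/2 : ℝ) ^ (x : ℕ)) :=
        (summable_geometric_two).comp_injective PNat.coe_injective
      have hβsummable : Summable β := ha1.summable.add hgeo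
      obtain ⟨E₂, hE₂inj, hE₂range, hE₂anti⟩ :=
        exists_sorted_enum hβsummable Set.infinite_univ (fun x _ => hβpos x)
      have hE₂surj : Function.Surjective E₂ := by
        intro x
        have hx : x ∈ Set.range E₂ := by rw [hE₂range]; trivial
        exact hx
      set EE : ℕ ≃ ℕ+ := Equiv.ofBijective E₂ ⟨hE₂inj, hE₂surj⟩ with hEEdef
      have hEEap : ∀ k, EE k = E₂ k := fun k => rfl
      set b : ℕ → ℝ := fun s => β (E₂ s) with hbdef
      have hbanti : Antitone b := antitone_nat_of_succ_le hE₂anti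
      have hbsummable : Summable b := hβsummable.comp_injective hE₂inj
      set G : Set ℕ := {s : ℕ | b s < tailT q s} with hGdef
      have hGinf : G.Infinite := by
        by_contra hGfin
        rw [Set.not_infinite] at hGfin
        obtain ⟨N0, hN0⟩ := hGfin.bddAbove
        apply hTns
        rw [← summable_nat_add_iff (N0 + 1)]
        refine Summable.of_nonneg_of_le (fun s => tailT_nonneg hq0 _) (fun s => ?_)
          ((summable_nat_add_iff (N0 + 1)).2 hbsummable)
        have hnot : s + (N0 + 1) ∉ G := by
          intro hmem
          have := hN0 hmem
          omega
        exact not_lt.1 hnot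
      have hpE₂sum : Summable (fun s : ℕ => p (E₂ s)) := hpsummable.comp_injective hE₂inj
      have hpE₂total : ∑' s : ℕ, p (E₂ s) = 1 := by
        have := (Equiv.hasSum_iff EE).2 hpsum
        exact this.tsum_eq
      have hRem : ∀ s : ℕ, tailT q s ≤ ∑' m : ℕ, p (E₂ (m + s)) := by
        intro s
        have e1 : ∑ k ∈ Finset.range s, p (E₂ k) + ∑' m : ℕ, p (E₂ (m + s)) = 1 := by
          rw [Summable.sum_add_tsum_nat_add s hpE₂sum, hpE₂total]
        have e2 : ∑ k ∈ Finset.range s, q k + tailT q s = 1 := by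
          rw [tailT_add hqsummable, hqtsum]
        have e3 : ∑ k ∈ Finset.range s, p (E₂ k) ≤ ∑ k ∈ Finset.range s, q k := by
          have h4 := hLEM ((Finset.range s).image E₂)
          rw [Finset.sum_image (fun x _ y _ h => hE₂inj h),
            Finset.card_image_of_injective _ hE₂inj, Finset.card_range] at h4
          exact h4
        linarith
      have hstep : ∀ s ∈ G, ∃ t, t ∈ G ∧ s < t ∧
          b s < ∑ u ∈ Finset.Ico s t, p (E₂ u) := by
        intro s hs
        have hsh : Summable (fun m : ℕ => p (E₂ (m + s))) := (summable_nat_add_iff s).2 hpE₂sum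
        have hlim : Filter.Tendsto (fun n => ∑ i ∈ Finset.range n, p (E₂ (i + s)))
            Filter.atTop (nhds (∑' m : ℕ, p (E₂ (m + s)))) := hsh.hasSum.tendsto_sum_nat
        have hevent : ∀ᶠ n in Filter.atTop,
            b s < ∑ i ∈ Finset.range n, p (E₂ (i + s)) :=
          hlim.eventually_const_lt (lt_of_lt_of_le hs (hRem s))
        obtain ⟨n, hn⟩ := hevent.exists
        obtain ⟨t, htG, htn⟩ := hGinf.exists_gt (s + n)
        refine ⟨t, htG, by omega, ?_⟩
        have hIco : ∑ i ∈ Finset.range n, p (E₂ (i + s)) = ∑ u ∈ Finset.Ico s (s + n), p (E₂ u) := by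
          rw [Finset.sum_Ico_eq_sum_range]
          have hsn : s + n - s = n := by omega
          rw [hsn]
          exact Finset.sum_congr rfl (fun i _ => by rw [add_comm])
        have hsub : Finset.Ico s (s + n) ⊆ Finset.Ico s t := by
          apply Finset.Ico_subset_Ico le_rfl
          omega
        calc b s < ∑ i ∈ Finset.range n, p (E₂ (i + s)) := hn
          _ = ∑ u ∈ Finset.Ico s (s + n), p (E₂ u) := hIco
          _ ≤ ∑ u ∈ Finset.Ico s t, p (E₂ u) :=
            Finset.sum_le_sum_of_subset_of_nonneg hsub (fun u _ _ => hp _)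
      obtain ⟨g0, hg0⟩ := hGinf.nonempty
      choose step hstepG hstepLT hstepSum using hstep
      set g : ℕ → {s : ℕ // s ∈ G} :=
        fun i => Nat.rec ⟨g0, hg0⟩ (fun _ prev => ⟨step prev.1 prev.2, hstepG prev.1 prev.2⟩) i
        with hgdef
      set G' : ℕ → ℕ := fun i => (g i).1 with hG'def
      have hgsucc : ∀ i, G' (i + 1) = step (G' i) (g i).2 := fun i => rfl
      have hglt : ∀ i, G' i < G' (i + 1) := fun i => by
        rw [hgsucc]; exact hstepLT _ _
      have hgblock : ∀ i, b (G' i) < ∑ u ∈ Finset.Ico (G' i) (G' (i + 1)), p (E₂ u) := fun i => by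
        conv_lhs => rw [hG'def]
        rw [hgsucc]
        exact hstepSum _ _
      have hGmono : StrictMono G' := strictMono_nat_of_lt_succ hglt
      set blk : ℕ → ℕ := fun s => Nat.findGreatest (fun i => G' i ≤ s) s with hblkdef
      have hblk1 : ∀ s, G' 0 ≤ s → G' (blk s) ≤ s := by
        intro s hs
        exact Nat.findGreatest_spec (P := fun i => G' i ≤ s) (m := 0) (Nat.zero_le s) hs
      have hblk2 : ∀ s, s < G' (blk s + 1) := by
        intro s
        by_contra hcon
        push_neg at hcon
        have hle : blk s + 1 ≤ s := le_trans (hGmono.le_apply) hcon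
        exact (Nat.findGreatest_is_greatest (Nat.lt_succ_self _) hle) hcon
      have hblk_eq : ∀ s i, G' 0 ≤ s → G' i ≤ s → s < G' (i + 1) → blk s = i := by
        intro s i _ h1 h2
        have hge : i ≤ blk s := Nat.le_findGreatest (le_trans hGmono.le_apply h1) h1
        have hlt : blk s < i + 1 := by
          by_contra hcon
          push_neg at hcon
          have := hGmono.monotone hcon
          have h3 := hblk1 s (le_trans (hGmono.monotone (Nat.zero_le i)) h1)
          omega
        omega
      set cl : ℕ+ → ℕ := fun x => if EE.symm x < G' 0 then 0 else blk (EE.symm x) + 1 with hcldef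
      have hclbound : ∀ x, EE.symm x < G' (cl x + 1) := by
        intro x
        by_cases h : EE.symm x < G' 0
        · simp only [hcldef, if_pos h]
          exact lt_of_lt_of_le h (hGmono.monotone (Nat.zero_le 1))
        · simp only [hcldef, if_neg h]
          have hmm : G' (blk (EE.symm x) + 1) ≤ G' (blk (EE.symm x) + 1 + 1) :=
            hGmono.monotone (Nat.le_succ (blk (EE.symm x) + 1))
          exact lt_of_lt_of_le (hblk2 (EE.symm x)) hmm
      have hfib : ∀ c, (cl ⁻¹' {c}).Finite := by
        intro c
        refine ((Set.finite_Iio (G' (c + 1))).image (fun k => EE k)).subset ?_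
        intro x hx
        have hcx : cl x = c := hx
        refine ⟨EE.symm x, ?_, ?_⟩
        · rw [← hcx]
          exact hclbound x
        · exact EE.apply_symm_apply x
      obtain ⟨σ, hσFC, hσcycles⟩ := exists_perm_of_classes cl hfib
      have hsuccess := hstrat σ hσFC
      refine hsuccess ((hfib 0).subset ?_)
      intro x hx
      by_contra hx0
      have hxge : ¬ (EE.symm x < G' 0) := by
        intro h
        exact hx0 (by simp only [Set.mem_preimage, Set.mem_singleton_iff, hcldef, if_pos h])
      set s := EE.symm x with hsdef
      set i := blk s with hidef
      have hcl : cl x = i + 1 := by simp only [hcldef, ← hsdef, if_neg hxge, hidef]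
      have hsint : G' i ≤ s ∧ s < G' (i + 1) :=
        ⟨hblk1 s (not_lt.1 hxge), hblk2 s⟩
      -- fiber as finset
      have hfibeq : cl ⁻¹' {cl x} = ↑((Finset.Ico (G' i) (G' (i + 1))).image E₂) := by
        ext y
        simp only [Set.mem_preimage, Set.mem_singleton_iff, Finset.coe_image, Set.mem_image,
          Finset.mem_coe, Finset.mem_Ico]
        constructor
        · intro hy
          rw [hcl] at hy
          have hyge : ¬ (EE.symm y < G' 0) := by
            intro h
            rw [hcldef] at hy
            simp only [if_pos h] at hy
            omega
          have hy2 : blk (EE.symm y) = i := by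
            rw [hcldef] at hy
            simp only [if_neg hyge] at hy
            omega
          refine ⟨EE.symm y, ?_, EE.apply_symm_apply y⟩
          rw [← hy2]
          exact ⟨hblk1 _ (not_lt.1 hyge), hblk2 _⟩
        · rintro ⟨u, ⟨hu1, hu2⟩, rfl⟩
          have hEu : EE.symm (E₂ u) = u := by
            rw [← hEEap]
            exact EE.symm_apply_apply u
          have hu0 : G' 0 ≤ u := le_trans (hGmono.monotone (Nat.zero_le i)) hu1
          have hblku : blk u = i := hblk_eq u i hu0 hu1 hu2
          rw [hcl, hcldef]
          simp only [hEu, if_neg (not_lt.2 hu0)]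
          omega
      have hprice : cyclePrice σ p x = ∑ u ∈ Finset.Ico (G' i) (G' (i + 1)), p (E₂ u) := by
        have hps := tsum_set_eq_finset_sum p ((hσcycles x).trans hfibeq)
        rw [cyclePrice, hps]
        exact Finset.sum_image (fun y _ z _ h => hE₂inj h)
      have h1 : b (G' i) < ∑ u ∈ Finset.Ico (G' i) (G' (i + 1)), p (E₂ u) := hgblock i
      have h2 : b s ≤ b (G' i) := hbanti hsint.1
      have h3 : a x < b s := by
        have hE₂s : E₂ s = x := by
          rw [← hEEap, hsdef]
          exact EE.apply_symm_apply x
        rw [hbdef]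
        simp only [hE₂s]
        rw [hβdef]
        have : (0:ℝ) < (1/2) ^ (x : ℕ) := by positivity
        linarith
      have hxs : cyclePrice σ p x ≤ a x := hx
      rw [hprice] at hxs
      linarith
    have hmul : Summable (fun k : ℕ => ((k : ℝ) + 1) * q k) :=
      summable_mul_of_summable_tailT hq0 hqanti hqsummable hTsum
    set Z : Set ℕ+ := {n : ℕ+ | ¬ 0 < p n} with hZdef
    have hpZ : ∀ x ∈ Z, p x = 0 := fun x hx => le_antisymm (not_lt.1 hx) (hp x)
    have hE₁Pos : ∀ k, 0 < p (E₁ k) := by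
      intro k
      have : E₁ k ∈ Set.range E₁ := ⟨k, rfl⟩
      rw [hE₁range] at this
      exact this
    have hunify : ∀ (D : ℕ → ℕ+) (hD : Function.Bijective D),
        Summable (fun k : ℕ => ((k : ℝ) + 1) * p (D k)) →
        ∃ δ : Equiv.Perm ℕ+, Summable fun n : ℕ+ => (n : ℝ) * p (δ n) := by
      intro D hD hsum
      refine ⟨peq.trans (Equiv.ofBijective D hD), ?_⟩
      apply (Equiv.summable_iff peq.symm).1
      refine hsum.congr (fun k => ?_)
      show ((k : ℝ) + 1) * p (D k)
        = ((peq.symm k : ℕ+) : ℝ) * p ((peq.trans (Equiv.ofBijective D hD)) (peq.symm k))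
      rw [peq_symm_cast_real]
      congr 2
    by_cases hZfin : Z.Finite
    · set N := hZfin.toFinset.card with hNdef
      set eZ := hZfin.toFinset.equivFin with heZdef
      set D : ℕ → ℕ+ := fun k =>
        if h : k < N then ((eZ.symm ⟨k, h⟩ : ↥hZfin.toFinset) : ℕ+) else E₁ (k - N) with hDdef
      have hDZ : ∀ k, ∀ h : k < N, (D k) ∈ Z := by
        intro k h
        simp only [hDdef, dif_pos h]
        exact hZfin.mem_toFinset.1 (eZ.symm ⟨k, h⟩).2
      have hDP : ∀ k, ¬ k < N → D k = E₁ (k - N) := by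
        intro k h
        simp only [hDdef, dif_neg h]
      have hDbij : Function.Bijective D := by
        constructor
        · intro k1 k2 h12
          by_cases h1 : k1 < N <;> by_cases h2 : k2 < N
          · simp only [hDdef, dif_pos h1, dif_pos h2] at h12
            have he : eZ.symm ⟨k1, h1⟩ = eZ.symm ⟨k2, h2⟩ := Subtype.ext h12
            have := eZ.symm.injective he
            exact congrArg Fin.val this
          · exfalso
            have hz := hDZ k1 h1
            rw [h12, hDP k2 h2] at hz
            exact hz (hE₁Pos _)
          · exfalso
            have hz := hDZ k2 h2
            rw [← h12, hDP k1 h1] at hz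
            exact hz (hE₁Pos _)
          · rw [hDP k1 h1, hDP k2 h2] at h12
            have := hE₁inj h12
            omega
        · intro x
          by_cases hx : 0 < p x
          · have hxr : x ∈ Set.range E₁ := by rw [hE₁range]; exact hx
            obtain ⟨j, hj⟩ := hxr
            refine ⟨j + N, ?_⟩
            rw [hDP _ (by omega), show j + N - N = j from by omega]
            exact hj
          · have hxZ : x ∈ hZfin.toFinset := hZfin.mem_toFinset.2 hx
            have hlt : ((eZ ⟨x, hxZ⟩ : Fin N) : ℕ) < N := (eZ ⟨x, hxZ⟩).2
            refine ⟨(eZ ⟨x, hxZ⟩ : Fin N), ?_⟩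
            simp only [hDdef, dif_pos hlt]
            rw [show (⟨((eZ ⟨x, hxZ⟩ : Fin N) : ℕ), hlt⟩ : Fin N) = eZ ⟨x, hxZ⟩ from Fin.ext rfl]
            rw [Equiv.symm_apply_apply]
      clear hDdef heZdef
      apply hunify D hDbij
      clear_value D eZ
      rw [← summable_nat_add_iff N]
      refine Summable.of_nonneg_of_le (fun j => mul_nonneg (by positivity) (hp _)) (fun j => ?_)
        (hmul.mul_left ((N : ℝ) + 1))
      rw [hDP (j + N) (by omega), show j + N - N = j from by omega]
      have hc : (((j + N : ℕ) : ℝ) + 1) ≤ ((N : ℝ) + 1) * ((j : ℝ) + 1) := by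
        push_cast
        nlinarith [Nat.cast_nonneg (α := ℝ) j, Nat.cast_nonneg (α := ℝ) N]
      calc (((j + N : ℕ) : ℝ) + 1) * p (E₁ j)
          ≤ (((N : ℝ) + 1) * ((j : ℝ) + 1)) * q j :=
            mul_le_mul_of_nonneg_right hc (hp _)
        _ = ((N : ℝ) + 1) * (((j : ℝ) + 1) * q j) := by ring
    · have hZinf : Z.Infinite := hZfin
      haveI := hZinf.to_subtype
      obtain ⟨eZ⟩ : Nonempty (ℕ ≃ ↥Z) := nonempty_equiv_of_countable
      set D : ℕ → ℕ+ := fun k =>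
        if k % 2 = 0 then E₁ (k / 2) else ((eZ (k / 2) : ↥Z) : ℕ+) with hDdef
      have hDE : ∀ j : ℕ, D (2 * j) = E₁ j := by
        intro j
        simp only [hDdef]
        rw [if_pos (by omega), show 2 * j / 2 = j from by omega]
      have hDO : ∀ j : ℕ, D (2 * j + 1) = ((eZ j : ↥Z) : ℕ+) := by
        intro j
        simp only [hDdef]
        rw [if_neg (by omega), show (2 * j + 1) / 2 = j from by omega]
      have hDbij : Function.Bijective D := by
        constructor
        · intro k1 k2 h12
          by_cases h1 : k1 % 2 = 0 <;> by_cases h2 : k2 % 2 = 0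
          · simp only [hDdef, if_pos h1, if_pos h2] at h12
            have := hE₁inj h12
            omega
          · exfalso
            simp only [hDdef, if_pos h1, if_neg h2] at h12
            have hz : ((eZ (k2 / 2) : ↥Z) : ℕ+) ∈ Z := (eZ (k2 / 2)).2
            rw [← h12] at hz
            exact hz (hE₁Pos _)
          · exfalso
            simp only [hDdef, if_neg h1, if_pos h2] at h12
            have hz : ((eZ (k1 / 2) : ↥Z) : ℕ+) ∈ Z := (eZ (k1 / 2)).2
            rw [h12] at hz
            exact hz (hE₁Pos _)
          · simp only [hDdef, if_neg h1, if_neg h2] at h12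
            have he : eZ (k1 / 2) = eZ (k2 / 2) := Subtype.ext h12
            have := eZ.injective he
            omega
        · intro x
          by_cases hx : 0 < p x
          · have hxr : x ∈ Set.range E₁ := by rw [hE₁range]; exact hx
            obtain ⟨j, hj⟩ := hxr
            exact ⟨2 * j, by rw [hDE]; exact hj⟩
          · refine ⟨2 * (eZ.symm ⟨x, hx⟩) + 1, ?_⟩
            rw [hDO, Equiv.apply_symm_apply]
      apply hunify D hDbij
      have hEv : Summable (fun j : ℕ => (((2 * j : ℕ) : ℝ) + 1) * p (D (2 * j))) := by
        refine Summable.of_nonneg_of_le (fun j => mul_nonneg (by positivity) (hp _)) (fun j => ?_)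
          (hmul.mul_left 2)
        rw [hDE j]
        have hc : (((2 * j : ℕ) : ℝ) + 1) ≤ 2 * ((j : ℝ) + 1) := by push_cast; linarith
        calc (((2 * j : ℕ) : ℝ) + 1) * p (E₁ j)
            ≤ (2 * ((j : ℝ) + 1)) * q j := mul_le_mul_of_nonneg_right hc (hp _)
          _ = 2 * (((j : ℝ) + 1) * q j) := by ring
      have hOd : (fun j : ℕ => (((2 * j + 1 : ℕ) : ℝ) + 1) * p (D (2 * j + 1)))
          = fun _ => (0 : ℝ) := by
        funext j
        rw [hDO j, hpZ _ (eZ j).2, mul_zero]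
      have hOdS : Summable (fun j : ℕ => (((2 * j + 1 : ℕ) : ℝ) + 1) * p (D (2 * j + 1))) := by
        rw [hOd]
        exact summable_zero
      exact (hEv.hasSum.even_add_odd hOdS.hasSum).summable



end Stmt6Aux

theorem stmt_6 (p : ℕ+ → ℝ) (hp : ∀ n, 0 ≤ p n) (hpsum : HasSum p 1) :
    (∃ a : ℕ+ → ℝ, (∀ n, 0 ≤ a n) ∧ HasSum a 1 ∧
        ∀ σ : Equiv.Perm ℕ+, FiniteCycles σ →
          {n : ℕ+ | cyclePrice σ p n ≤ a n}.Infinite) ↔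
      ∃ δ : Equiv.Perm ℕ+, Summable fun n : ℕ+ => (n : ℝ) * p (δ n) := by
  constructor
  · rintro ⟨a, ha0, ha1, hstrat⟩
    exact Stmt6Aux.hard_dir p hp hpsum a ha0 ha1 hstrat
  · rintro ⟨δ, hδ⟩
    exact Stmt6Aux.easy_dir p hp hpsum δ hδ
end

section
/- Let p : ℕ⁺ → ℝ be a sequence with p_n > 0 for all n, and let σ be a permutation of the positive integers such that the rearranged sequence (p_{σ(n)}) is descending, i.e. p_{σ(n+1)} ≤ p_{σ(n)} for all n. Then ∑_{n=1}^∞ n·p_{δ(n)} = ∞ holds for every permutation δ of the positive integers if and only if ∑_{n=1}^∞ n·p_{σ(n)} = ∞. -/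
open scoped BigOperators


lemma key_rearrange (q : ℕ → ℝ) (hq0 : ∀ n, 0 < q n) (hq : Antitone q) (π : Equiv.Perm ℕ)
    (h : Summable fun m : ℕ => ((π m : ℝ) + 1) * q m) :
    Summable fun m : ℕ => ((m : ℝ) + 1) * q m := by
  set f : ℕ → ℝ := fun m : ℕ => ((m : ℝ) + 1) * q m with hf
  set g : ℕ → ℝ := fun m : ℕ => ((π m : ℝ) + 1) * q m with hg
  have hg0 : ∀ m, 0 ≤ g m := fun m => by
    have := (hq0 m).le
    simp only [hg]
    positivity
  have hf0 : ∀ m, 0 ≤ f m := fun m => by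
    have := (hq0 m).le
    simp only [hf]
    positivity
  set T := ∑' m, g m with hT
  have cardC : ∀ k : ℕ, (Finset.Ico (2^(k+1)-1) (2^(k+2)-1)).card = 2^(k+1) := by
    intro k
    have h1 : (1:ℕ) ≤ 2^(k+1) := Nat.one_le_two_pow
    have h2 : (2:ℕ)^(k+2) = 2 * 2^(k+1) := by ring
    rw [Nat.card_Ico]; omega
  have upper : ∀ k : ℕ, ∑ m ∈ Finset.Ico (2^(k+1)-1) (2^(k+2)-1), f m
      ≤ 2^(2*k+3) * q (2^(k+1)-1) := by
    intro k
    have step : ∀ m ∈ Finset.Ico (2^(k+1)-1) (2^(k+2)-1),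
        f m ≤ (2:ℝ)^(k+2) * q (2^(k+1)-1) := by
      intro m hm
      rw [Finset.mem_Ico] at hm
      have hm1 : ((m:ℝ)+1) ≤ (2:ℝ)^(k+2) := by
        have hh : (m:ℕ)+1 ≤ 2^(k+2) := by omega
        calc ((m:ℝ)+1) = ((m+1 : ℕ) : ℝ) := by push_cast; ring
          _ ≤ ((2^(k+2) : ℕ) : ℝ) := by exact_mod_cast hh
          _ = (2:ℝ)^(k+2) := by push_cast; ring
      have hm2 : q m ≤ q (2^(k+1)-1) := hq hm.1
      have hqm := (hq0 m).le
      simp only [hf]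
      exact mul_le_mul hm1 hm2 hqm (by positivity)
    calc ∑ m ∈ Finset.Ico (2^(k+1)-1) (2^(k+2)-1), f m
        ≤ (Finset.Ico (2^(k+1)-1) (2^(k+2)-1)).card • ((2:ℝ)^(k+2) * q (2^(k+1)-1)) :=
          Finset.sum_le_card_nsmul _ _ _ step
      _ = 2^(2*k+3) * q (2^(k+1)-1) := by
          rw [cardC k, nsmul_eq_mul]
          push_cast
          ring
  have lower : ∀ k : ℕ, (4:ℝ)^k * q (2^(k+2)-1)
      ≤ ∑ m ∈ Finset.Ico (2^(k+1)-1) (2^(k+2)-1), g m := by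
    intro k
    have hcardBc : ((Finset.Ico (2^(k+1)-1) (2^(k+2)-1)).filter
        (fun m => ¬ (2^k ≤ π m + 1))).card ≤ 2^k - 1 := by
      have hcc : ((Finset.Ico (2^(k+1)-1) (2^(k+2)-1)).filter
          (fun m => ¬ (2^k ≤ π m + 1))).card ≤ (Finset.range (2^k - 1)).card := by
        apply Finset.card_le_card_of_injOn (fun m => π m)
        · intro m hm
          rw [Finset.mem_coe, Finset.mem_filter] at hm
          simp only [Finset.mem_coe, Finset.mem_range]
          omega
        · exact fun a _ b _ hab => π.injective hab
      simpa using hcc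
    have hcardA : 2^k ≤ ((Finset.Ico (2^(k+1)-1) (2^(k+2)-1)).filter
        (fun m => 2^k ≤ π m + 1)).card := by
      have hfc := Finset.card_filter_add_card_filter_not
        (s := Finset.Ico (2^(k+1)-1) (2^(k+2)-1)) (p := fun m => 2^k ≤ π m + 1)
      have hBcard := cardC k
      have h2 : (2:ℕ)^(k+1) = 2 * 2^k := by ring
      have h1 : (1:ℕ) ≤ 2^k := Nat.one_le_two_pow
      omega
    have step : ∀ m ∈ (Finset.Ico (2^(k+1)-1) (2^(k+2)-1)).filter
        (fun m => 2^k ≤ π m + 1), (2:ℝ)^k * q (2^(k+2)-1) ≤ g m := by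
      intro m hm
      rw [Finset.mem_filter, Finset.mem_Ico] at hm
      have h1 : (2:ℝ)^k ≤ (π m : ℝ) + 1 := by
        calc (2:ℝ)^k = ((2^k : ℕ) : ℝ) := by push_cast; ring
          _ ≤ ((π m + 1 : ℕ) : ℝ) := by exact_mod_cast hm.2
          _ = (π m : ℝ) + 1 := by push_cast; ring
      have h2 : q (2^(k+2)-1) ≤ q m := hq (by omega)
      simp only [hg]
      exact mul_le_mul h1 h2 (hq0 _).le (by positivity)
    calc (4:ℝ)^k * q (2^(k+2)-1) = (2^k : ℕ) • ((2:ℝ)^k * q (2^(k+2)-1)) := by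
          rw [nsmul_eq_mul]; push_cast
          rw [show (4:ℝ) = 2*2 by norm_num, mul_pow]; ring
      _ ≤ ((Finset.Ico (2^(k+1)-1) (2^(k+2)-1)).filter
            (fun m => 2^k ≤ π m + 1)).card • ((2:ℝ)^k * q (2^(k+2)-1)) :=
          nsmul_le_nsmul_left (by have := (hq0 (2^(k+2)-1)).le; positivity) hcardA
      _ ≤ ∑ m ∈ (Finset.Ico (2^(k+1)-1) (2^(k+2)-1)).filter
            (fun m => 2^k ≤ π m + 1), g m := Finset.card_nsmul_le_sum _ _ _ step
      _ ≤ ∑ m ∈ Finset.Ico (2^(k+1)-1) (2^(k+2)-1), g m :=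
          Finset.sum_le_sum_of_subset_of_nonneg (Finset.filter_subset _ _)
          (fun i _ _ => hg0 i)
  have main : ∀ K : ℕ, ∑ m ∈ Finset.range (2^(K+1)-1), f m
      ≤ 9 * q 0 + 32 * ∑ m ∈ Finset.Ico 1 (2^K - 1), g m := by
    intro K
    induction K with
    | zero =>
      norm_num
      simp only [hf]
      norm_num
      linarith [hq0 0]
    | succ K ih =>
      have hsplit : ∑ m ∈ Finset.range (2^(K+1)-1), f m
          + ∑ m ∈ Finset.Ico (2^(K+1)-1) (2^(K+2)-1), f m
          = ∑ m ∈ Finset.range (2^(K+2)-1), f m := by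
        rw [Finset.range_eq_Ico, Finset.range_eq_Ico]
        apply Finset.sum_Ico_consecutive
        · omega
        · have h2 : (2:ℕ)^(K+2) = 2*2^(K+1) := by ring
          have h1 := Nat.one_le_two_pow (n := K+1)
          omega
      rcases Nat.eq_zero_or_pos K with hK | hK
      · subst hK
        have e0 : (2:ℕ)^(0+2)-1 = 3 := by norm_num
        rw [e0]
        have e1 : ∑ m ∈ Finset.range 3, f m = q 0 + 2 * q 1 + 3 * q 2 := by
          simp [hf, Finset.sum_range_succ]; ring
        have h1 : q 1 ≤ q 0 := hq (by norm_num)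
        have h2 : q 2 ≤ q 0 := hq (by norm_num)
        have h3 : (0:ℝ) ≤ ∑ m ∈ Finset.Ico 1 (2^(0+1) - 1), g m :=
          Finset.sum_nonneg fun i _ => hg0 i
        rw [e1]
        linarith [hq0 0]
      · obtain ⟨j, rfl⟩ : ∃ j, K = j + 1 := ⟨K - 1, by omega⟩
        have hb : ∑ m ∈ Finset.Ico (2^(j+2)-1) (2^(j+3)-1), f m
            ≤ 32 * ∑ m ∈ Finset.Ico (2^(j+1)-1) (2^(j+2)-1), g m := by
          calc ∑ m ∈ Finset.Ico (2^(j+2)-1) (2^(j+3)-1), f m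
              ≤ 2^(2*(j+1)+3) * q (2^(j+2)-1) := upper (j+1)
            _ = 32 * ((4:ℝ)^j * q (2^(j+2)-1)) := by
                rw [show 2*(j+1)+3 = 2*j+5 by ring, pow_add, pow_mul]
                norm_num
                ring
            _ ≤ 32 * ∑ m ∈ Finset.Ico (2^(j+1)-1) (2^(j+2)-1), g m := by
                linarith [lower j]
        have hgsplit : ∑ m ∈ Finset.Ico 1 (2^(j+1) - 1), g m
            + ∑ m ∈ Finset.Ico (2^(j+1)-1) (2^(j+2)-1), g m
            = ∑ m ∈ Finset.Ico 1 (2^(j+2)-1), g m := by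
          apply Finset.sum_Ico_consecutive
          · have h2 : (2:ℕ)^(j+1) = 2*2^j := by ring
            have h1 := Nat.one_le_two_pow (n := j)
            omega
          · have h2 : (2:ℕ)^(j+2) = 2*2^(j+1) := by ring
            have h1 := Nat.one_le_two_pow (n := j+1)
            omega
        linarith [hsplit, ih]
  apply summable_of_sum_range_le (c := 9 * q 0 + 32 * T) hf0
  intro n
  have h1 : ∑ m ∈ Finset.range n, f m ≤ ∑ m ∈ Finset.range (2^(n+1)-1), f m := by
    apply Finset.sum_le_sum_of_subset_of_nonneg
    · apply Finset.range_subset_range.mpr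
      have h3 := Nat.lt_two_pow_self (n := n)
      have h4 : (2:ℕ)^(n+1) = 2*2^n := by ring
      omega
    · intro i _ _
      exact hf0 i
  have h2 := main n
  have h3 : ∑ m ∈ Finset.Ico 1 (2^n - 1), g m ≤ T :=
    h.sum_le_tsum _ (fun i _ => hg0 i)
  linarith
theorem stmt_7 (p : ℕ+ → ℝ) (hp : ∀ n, 0 < p n) (σ : Equiv.Perm ℕ+)
    (hσ : ∀ n : ℕ+, p (σ (n + 1)) ≤ p (σ n)) :
    (∀ δ : Equiv.Perm ℕ+, ¬ Summable fun n : ℕ+ => (n : ℝ) * p (δ n)) ↔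
      ¬ Summable fun n : ℕ+ => (n : ℝ) * p (σ n) := by
  constructor
  · intro h
    exact h σ
  · intro hns δ hsum
    apply hns
    set e : ℕ+ ≃ ℕ := Equiv.pnatEquivNat with he
    set q : ℕ → ℝ := fun k => p (σ k.succPNat) with hq
    have hq0 : ∀ k, 0 < q k := fun k => hp _
    have hqa : Antitone q := by
      apply antitone_nat_of_succ_le
      intro k
      have : (k+1).succPNat = k.succPNat + 1 := rfl
      simpa [hq, this] using hσ k.succPNat
    set τ : Equiv.Perm ℕ+ := δ.trans σ.symm with hτ
    have hF : Summable fun m : ℕ+ => ((τ.symm m : ℕ+) : ℝ) * p (σ m) := by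
      apply (Equiv.summable_iff τ).mp
      have : ((fun m : ℕ+ => ((τ.symm m : ℕ+) : ℝ) * p (σ m)) ∘ τ)
          = fun n : ℕ+ => (n : ℝ) * p (δ n) := by
        funext n
        simp [hτ, Function.comp]
      rw [this]
      exact hsum
    set π : Equiv.Perm ℕ := Equiv.permCongr e τ.symm with hπ
    have hG : Summable fun k : ℕ => ((π k : ℝ) + 1) * q k := by
      have hcomp := (Equiv.summable_iff (f := fun m : ℕ+ => ((τ.symm m : ℕ+) : ℝ) * p (σ m)) e.symm).mpr hF
      have heq : ((fun m : ℕ+ => ((τ.symm m : ℕ+) : ℝ) * p (σ m)) ∘ e.symm)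
          = fun k : ℕ => ((π k : ℝ) + 1) * q k := by
        funext k
        simp only [Function.comp, hπ, hq, he, Equiv.permCongr_apply]
        have h1 : Equiv.pnatEquivNat.symm k = k.succPNat := rfl
        rw [h1]
        have h2 : ((Equiv.pnatEquivNat (τ.symm k.succPNat) : ℕ) : ℝ) + 1
            = ((τ.symm k.succPNat : ℕ+) : ℝ) := by
          have hpn := PNat.natPred_add_one (τ.symm k.succPNat)
          have h3 : Equiv.pnatEquivNat (τ.symm k.succPNat) = (τ.symm k.succPNat).natPred := rfl
          rw [h3]
          exact_mod_cast hpn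
        rw [h2]
      rwa [heq] at hcomp
    have hend := key_rearrange q hq0 hqa π hG
    have h7 : Summable ((fun k : ℕ => ((k : ℝ) + 1) * q k) ∘ e) :=
      (Equiv.summable_iff e).mpr hend
    have heq2 : ((fun k : ℕ => ((k : ℝ) + 1) * q k) ∘ e)
        = fun n : ℕ+ => (n : ℝ) * p (σ n) := by
      funext n
      simp only [Function.comp, hq, he]
      have h4 : (Equiv.pnatEquivNat n).succPNat = n := by
        have hx : (Equiv.pnatEquivNat n).succPNat = Equiv.pnatEquivNat.symm (Equiv.pnatEquivNat n) := rfl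
        rw [hx, Equiv.symm_apply_apply]
      rw [h4]
      have h5 : ((Equiv.pnatEquivNat n : ℕ) : ℝ) + 1 = ((n : ℕ+) : ℝ) := by
        have := PNat.natPred_add_one n
        have hx : Equiv.pnatEquivNat n = n.natPred := rfl
        rw [hx]
        exact_mod_cast this
      rw [h5]
    rwa [heq2] at h7
end

section
/- Let p : ℕ⁺ → ℝ be a sequence with p_n ≥ 0 for all n, having infinitely many indices n with p_n > 0, and suppose p is summable. Let e : ℕ⁺ → ℕ⁺ be the strictly increasing enumeration of the set {n : p_n > 0} and let q_n = p_{e(n)} (the sequence obtained by omitting the zero terms of p). Then the following are equivalent: (1) ∑_{n=1}^∞ n·p_{δ(n)} = ∞ for every permutation δ of the positive integers; (2) ∑_{n=1}^∞ n·p_{δ(n)} = ∞ for every permutation δ such that (p_{δ(n)}) is quasi-descending; (3) ∑_{n=1}^∞ n·q_{δ(n)} = ∞ for every permutation δ of the positive integers; (4) ∑_{n=1}^∞ n·q_{δ(n)} = ∞ for every permutation δ such that (q_{δ(n)}) is descending (q_{δ(n+1)} ≤ q_{δ(n)} for all n). -/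
open scoped BigOperators

/-- A nonnegative sequence is quasi-descending if whenever `x n > 0` and `n < m`,
then `x m ≤ x n`. -/
def QuasiDescending (x : ℕ+ → ℝ) : Prop :=
  ∀ n m : ℕ+, 0 < x n → n < m → x m ≤ x n

section Enum
variable {α : Type*} [LinearOrder α]

lemma exists_min_of_finite_segments (T : Set α) (hne : T.Nonempty)
    (hfin : ∀ x ∈ T, {y ∈ T | y < x}.Finite) : ∃ m ∈ T, ∀ y ∈ T, m ≤ y := by
  obtain ⟨x, hx⟩ := hne
  have hsub : {y ∈ T | y ≤ x}.Finite := ((hfin x hx).union (Set.finite_singleton x)).subset (by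
    intro y hy
    rcases lt_or_eq_of_le hy.2 with h | h
    · exact Or.inl ⟨hy.1, h⟩
    · exact Or.inr h)
  have hne' : {y ∈ T | y ≤ x}.Nonempty := ⟨x, hx, le_rfl⟩
  obtain ⟨m, hm, hmin⟩ := Set.exists_min_image _ (fun y => y) hsub hne'
  refine ⟨m, hm.1, fun y hy => ?_⟩
  rcases le_or_gt y x with h | h
  · exact hmin y ⟨hy, h⟩
  · exact hm.2.trans h.le

lemma exists_strictMono_enum (S : Set α) (hinf : S.Infinite)
    (hfin : ∀ x ∈ S, {y ∈ S | y < x}.Finite) :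
    ∃ f : ℕ → α, StrictMono f ∧ Set.range f = S := by
  classical
  have hnext : ∀ x ∈ S, ∃ m ∈ {y ∈ S | x < y}, ∀ y ∈ {y ∈ S | x < y}, m ≤ y := by
    intro x hx
    have hne : {y ∈ S | x < y}.Nonempty := by
      have : ¬ S ⊆ {y ∈ S | y < x} ∪ {x} :=
        fun h => hinf (((hfin x hx).union (Set.finite_singleton x)).subset h)
      obtain ⟨y, hyS, hy⟩ := Set.not_subset.1 this
      refine ⟨y, hyS, ?_⟩
      rcases lt_trichotomy x y with h | h | h
      · exact h
      · exact absurd (Or.inr h.symm) hy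
      · exact absurd (Or.inl ⟨hyS, h⟩) hy
    refine exists_min_of_finite_segments _ hne (fun z hz => (hfin z hz.1).subset ?_)
    intro y hy
    exact ⟨hy.1.1, hy.2⟩
  -- the "next" function
  set μ : α → α := fun x =>
    if h : ∃ m ∈ {y ∈ S | x < y}, ∀ y ∈ {y ∈ S | x < y}, m ≤ y then h.choose else x with hμ
  have hμ1 : ∀ x ∈ S, μ x ∈ S ∧ x < μ x ∧ ∀ y ∈ S, x < y → μ x ≤ y := by
    intro x hx
    have h := hnext x hx
    simp only [hμ, dif_pos h]
    obtain ⟨hm, hmin⟩ := h.choose_spec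
    exact ⟨hm.1, hm.2, fun y hyS hy => hmin y ⟨hyS, hy⟩⟩
  obtain ⟨m0, hm0S, hm0⟩ := exists_min_of_finite_segments S hinf.nonempty hfin
  set f : ℕ → α := fun k => Nat.rec m0 (fun _ x => μ x) k with hf
  have hfS : ∀ k, f k ∈ S := by
    intro k; induction k with
    | zero => exact hm0S
    | succ k ih => exact (hμ1 _ ih).1
  have hstep : ∀ k, f k < f (k + 1) := fun k => (hμ1 _ (hfS k)).2.1
  have hmono : StrictMono f := strictMono_nat_of_lt_succ hstep
  refine ⟨f, hmono, Set.Subset.antisymm (Set.range_subset_iff.2 hfS) ?_⟩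
  intro x hx
  by_contra hno
  have hlt : ∀ k, f k < x := by
    intro k; induction k with
    | zero =>
      rcases lt_or_eq_of_le (hm0 x hx) with h | h
      · exact h
      · exact absurd ⟨0, h⟩ hno
    | succ k ih =>
      rcases lt_or_eq_of_le ((hμ1 _ (hfS k)).2.2 x hx ih) with h | h
      · exact h
      · exact absurd ⟨k + 1, h⟩ hno
  exact (Set.infinite_of_injective_forall_mem (s := {y ∈ S | y < x}) hmono.injective
    (fun k => ⟨hfS k, hlt k⟩)) (hfin x hx)
end Enum

section Abel

lemma abel_compare : ∀ (K : ℕ) (c d w : ℕ → ℝ),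
    (∀ t, t ≤ K → ∑ i ∈ Finset.range t, c i ≤ ∑ i ∈ Finset.range t, d i) →
    (∀ i j, i ≤ j → j < K → w j ≤ w i) →
    (∀ i, i < K → 0 ≤ w i) →
    ∑ i ∈ Finset.range K, c i * w i ≤ ∑ i ∈ Finset.range K, d i * w i := by
  intro K
  induction K with
  | zero => intro c d w _ _ _; simp
  | succ K ih =>
    intro c d w hcd hanti hw0
    set w' : ℕ → ℝ := fun i => w i - w K with hw'
    have key : ∀ u : ℕ → ℝ, ∑ i ∈ Finset.range (K + 1), u i * w i
        = ∑ i ∈ Finset.range K, u i * w' i + (∑ i ∈ Finset.range (K + 1), u i) * w K := by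
      intro u
      have h1 : ∑ i ∈ Finset.range (K + 1), u i * w i
          = ∑ i ∈ Finset.range (K + 1), (u i * w' i + u i * w K) :=
        Finset.sum_congr rfl (fun i _ => by simp only [hw']; ring)
      rw [h1, Finset.sum_add_distrib, ← Finset.sum_mul,
        Finset.sum_range_succ (fun i => u i * w' i)]
      have : w' K = 0 := by simp [hw']
      rw [this]; ring
    have hK0 : 0 ≤ w K := hw0 K (Nat.lt_succ_self K)
    rw [key c, key d]
    have hmain : ∑ i ∈ Finset.range K, c i * w' i ≤ ∑ i ∈ Finset.range K, d i * w' i := by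
      refine ih c d w' (fun t ht => hcd t (ht.trans (Nat.le_succ K))) ?_ ?_
      · intro i j hij hj
        have := hanti i j hij (hj.trans (Nat.lt_succ_self K))
        simp only [hw']; linarith
      · intro i hi
        have := hanti i K (Nat.le_of_lt hi) (Nat.lt_succ_self K)
        simp only [hw']; linarith
    have hsum : (∑ i ∈ Finset.range (K + 1), c i) * w K
        ≤ (∑ i ∈ Finset.range (K + 1), d i) * w K :=
      mul_le_mul_of_nonneg_right (hcd (K + 1) le_rfl) hK0
    linarith
end Abel

lemma sum_range_succ_le_sum_finset : ∀ (n : ℕ) (S : Finset ℕ), S.card = n →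
    (∀ x ∈ S, 1 ≤ x) → ∑ i ∈ Finset.range n, (i + 1) ≤ ∑ x ∈ S, x := by
  intro n
  induction n with
  | zero => intro S _ _; simp
  | succ n ih =>
    intro S hcard h1
    have hne : S.Nonempty := Finset.card_pos.1 (hcard ▸ Nat.succ_pos n)
    set M := S.max' hne with hM
    have hMS : M ∈ S := S.max'_mem hne
    have hsub : S ⊆ Finset.Icc 1 M := by
      intro x hx
      exact Finset.mem_Icc.2 ⟨h1 x hx, S.le_max' x hx⟩
    have hMcard : n + 1 ≤ M := by
      have := Finset.card_le_card hsub
      rwa [Nat.card_Icc, hcard, Nat.add_sub_cancel] at this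
    have herase : (S.erase M).card = n := by
      rw [Finset.card_erase_of_mem hMS, hcard]; omega
    have h1' : ∀ x ∈ S.erase M, 1 ≤ x := fun x hx => h1 x (Finset.mem_of_mem_erase hx)
    have := ih (S.erase M) herase h1'
    rw [Finset.sum_range_succ, ← Finset.sum_erase_add S _ hMS]
    omega

lemma sum_range_succ_le_sum_inj (g : ℕ → ℕ) (hg : Function.Injective g)
    (h1 : ∀ i, 1 ≤ g i) (t : ℕ) :
    ∑ i ∈ Finset.range t, ((i : ℝ) + 1) ≤ ∑ i ∈ Finset.range t, (g i : ℝ) := by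
  have hnat : ∑ i ∈ Finset.range t, (i + 1) ≤ ∑ i ∈ Finset.range t, g i := by
    have himg : ((Finset.range t).image g).card = t := by
      rw [Finset.card_image_of_injective _ hg, Finset.card_range]
    have := sum_range_succ_le_sum_finset t ((Finset.range t).image g) himg
      (by intro x hx; obtain ⟨i, _, rfl⟩ := Finset.mem_image.1 hx; exact h1 i)
    rwa [Finset.sum_image (fun a _ b _ h => hg h)] at this
  calc ∑ i ∈ Finset.range t, ((i : ℝ) + 1) = ((∑ i ∈ Finset.range t, (i + 1) : ℕ) : ℝ) := by
        push_cast
        exact Finset.sum_congr rfl (fun x _ => by ring)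
    _ ≤ ((∑ i ∈ Finset.range t, g i : ℕ) : ℝ) := by exact_mod_cast hnat
    _ = ∑ i ∈ Finset.range t, (g i : ℝ) := by push_cast; ring

section Desc

lemma pnat_le_exists (k k' : ℕ+) (h : k ≤ k') : ∃ d : ℕ, (k' : ℕ) = (k : ℕ) + d :=
  ⟨(k' : ℕ) - (k : ℕ), by have h' : (k : ℕ) ≤ (k' : ℕ) := h; omega⟩

lemma desc_chain (v : ℕ+ → ℝ) (ρ : Equiv.Perm ℕ+)
    (h : ∀ n : ℕ+, v (ρ (n + 1)) ≤ v (ρ n)) :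
    ∀ k k' : ℕ+, k ≤ k' → v (ρ k') ≤ v (ρ k) := by
  have key : ∀ (d : ℕ) (k k' : ℕ+), (k' : ℕ) = (k : ℕ) + d → v (ρ k') ≤ v (ρ k) := by
    intro d
    induction d with
    | zero => intro k k' hh; have : k' = k := PNat.coe_injective (by omega); rw [this]
    | succ d ih =>
      intro k k' hh
      set k'' : ℕ+ := ⟨(k : ℕ) + d, Nat.add_pos_left k.pos d⟩ with hk''
      have h1 : k' = k'' + 1 := PNat.coe_injective (by
        rw [PNat.add_coe, PNat.one_coe, hk'', PNat.mk_coe]; omega)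
      calc v (ρ k') = v (ρ (k'' + 1)) := by rw [h1]
        _ ≤ v (ρ k'') := h k''
        _ ≤ v (ρ k) := ih k k'' (by simp [hk''])
  intro k k' hk
  obtain ⟨d, hd⟩ := pnat_le_exists k k' hk
  exact key d k k' hd

lemma summable_weight_of_desc (v : ℕ+ → ℝ) (hv : ∀ n, 0 ≤ v n) (ρ σ : Equiv.Perm ℕ+)
    (hdesc : ∀ n : ℕ+, v (ρ (n + 1)) ≤ v (ρ n))
    (hσ : Summable fun k : ℕ+ => (k : ℝ) * v (σ k)) :
    Summable fun k : ℕ+ => (k : ℝ) * v (ρ k) := by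
  classical
  set c := ∑' k : ℕ+, (k : ℝ) * v (σ k) with hc
  have hnn : ∀ k : ℕ+, 0 ≤ (k : ℝ) * v (σ k) :=
    fun k => mul_nonneg (by positivity) (hv _)
  have hnnρ : ∀ k : ℕ+, 0 ≤ (k : ℝ) * v (ρ k) :=
    fun k => mul_nonneg (by positivity) (hv _)
  apply summable_of_sum_le (fun k => hnnρ k)
  intro u
  set K := u.sup (fun k => (k : ℕ)) with hK
  have hsub : u ⊆ (Finset.range K).image Nat.succPNat := by
    intro k hk
    refine Finset.mem_image.2 ⟨k.natPred, Finset.mem_range.2 ?_, PNat.succPNat_natPred k⟩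
    have h1 : (k : ℕ) ≤ K := Finset.le_sup (f := fun k : ℕ+ => (k : ℕ)) hk
    have h2 : 1 ≤ (k : ℕ) := k.one_le
    have : k.natPred = (k : ℕ) - 1 := rfl
    omega
  have hsPinj : Function.Injective Nat.succPNat := fun a b hab => by
    have := congrArg PNat.natPred hab; simpa [Nat.natPred_succPNat] using this
  set g' : ℕ → ℕ+ := fun i => σ.symm (ρ (Nat.succPNat i)) with hg'
  have hg'inj : Function.Injective g' :=
    fun a b hab => hsPinj (ρ.injective (σ.symm.injective hab))
  set w : ℕ → ℝ := fun i => v (ρ (Nat.succPNat i)) with hw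
  have step1 : ∑ k ∈ u, (k : ℝ) * v (ρ k)
      ≤ ∑ k ∈ (Finset.range K).image Nat.succPNat, (k : ℝ) * v (ρ k) :=
    Finset.sum_le_sum_of_subset_of_nonneg hsub (fun k _ _ => hnnρ k)
  have step2 : ∑ k ∈ (Finset.range K).image Nat.succPNat, (k : ℝ) * v (ρ k)
      = ∑ i ∈ Finset.range K, ((i : ℝ) + 1) * w i := by
    rw [Finset.sum_image (fun a _ b _ hab => hsPinj hab)]
    refine Finset.sum_congr rfl (fun i _ => ?_)
    have : ((Nat.succPNat i : ℕ+) : ℝ) = (i : ℝ) + 1 := by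
      have := Nat.succPNat_coe i
      exact_mod_cast congrArg (fun n : ℕ => (n : ℝ)) this
    rw [this]
  have step3 : ∑ i ∈ Finset.range K, ((i : ℝ) + 1) * w i
      ≤ ∑ i ∈ Finset.range K, ((g' i : ℕ) : ℝ) * w i := by
    refine abel_compare K _ _ w ?_ ?_ ?_
    · intro t _
      exact sum_range_succ_le_sum_inj (fun i => (g' i : ℕ))
        (fun a b hab => hg'inj (PNat.coe_injective hab)) (fun i => (g' i).one_le) t
    · intro i j hij _
      exact desc_chain v ρ hdesc _ _ (by
        rw [← PNat.coe_le_coe, Nat.succPNat_coe, Nat.succPNat_coe]; omega)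
    · intro i _; exact hv _
  have step4 : ∑ i ∈ Finset.range K, ((g' i : ℕ) : ℝ) * w i
      = ∑ k ∈ (Finset.range K).image g', (k : ℝ) * v (σ k) := by
    rw [Finset.sum_image (fun a _ b _ hab => hg'inj hab)]
    refine Finset.sum_congr rfl (fun i _ => ?_)
    have : σ (g' i) = ρ (Nat.succPNat i) := by simp [hg']
    rw [this]
  have step5 : ∑ k ∈ (Finset.range K).image g', (k : ℝ) * v (σ k) ≤ c :=
    hσ.sum_le_tsum _ (fun k _ => hnn k)
  linarith

end Desc

section ExistsDesc

lemma exists_desc_perm (v : ℕ+ → ℝ) (hpos : ∀ n, 0 < v n) (hsum : Summable v) :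
    ∃ ρ : Equiv.Perm ℕ+, ∀ n : ℕ+, v (ρ (n + 1)) ≤ v (ρ n) := by
  classical
  set φ : ℕ+ → ℝ ×ₗ ℕ+ := fun n => toLex (-(v n), n) with hφ
  have hφ2 : ∀ n, (ofLex (φ n)).2 = n := fun n => rfl
  have hφinj : Function.Injective φ := by
    intro a b hab
    have := congrArg (fun x => (ofLex x).2) hab
    simpa [hφ2] using this
  have hlt : ∀ m n : ℕ+, φ m < φ n → v n ≤ v m := by
    intro m n hmn
    rcases (Prod.Lex.lt_iff (x := toLex (-(v m), m)) (y := toLex (-(v n), n))).1 hmn with h | ⟨h, -⟩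
    · simp only [ofLex_toLex] at h; linarith
    · simp only [ofLex_toLex] at h; linarith [le_of_eq (neg_injective h)]
  have hSinf : (Set.range φ).Infinite := Set.infinite_range_of_injective hφinj
  have hfin : ∀ x ∈ Set.range φ, {y ∈ Set.range φ | y < x}.Finite := by
    rintro x ⟨n, rfl⟩
    have hev : {m : ℕ+ | ¬ v m < v n}.Finite :=
      Filter.eventually_cofinite.1 (hsum.tendsto_cofinite_zero.eventually_lt_const (hpos n))
    refine (hev.image φ).subset ?_
    rintro y ⟨⟨m, rfl⟩, hy⟩
    exact ⟨m, not_lt.2 (hlt m n hy), rfl⟩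
  obtain ⟨f, hfmono, hfr⟩ := exists_strictMono_enum _ hSinf hfin
  set t0 : ℕ → ℕ+ := fun j => (ofLex (f j)).2 with ht0
  have hft : ∀ j, φ (t0 j) = f j := by
    intro j
    have : f j ∈ Set.range φ := hfr ▸ Set.mem_range_self j
    obtain ⟨m, hm⟩ := this
    rw [← hm]; rw [ht0]; simp only [← hm, hφ2]
  have ht0bij : Function.Bijective t0 := by
    constructor
    · intro a b hab
      have : f a = f b := by rw [← hft a, ← hft b, hab]
      exact hfmono.injective this
    · intro n
      have : φ n ∈ Set.range f := hfr.symm ▸ Set.mem_range_self n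
      obtain ⟨j, hj⟩ := this
      exact ⟨j, hφinj (by rw [hft j, hj])⟩
  set ρ : Equiv.Perm ℕ+ := Equiv.pnatEquivNat.trans (Equiv.ofBijective t0 ht0bij) with hρ
  have hρa : ∀ k : ℕ+, ρ k = t0 k.natPred := fun k => rfl
  refine ⟨ρ, fun k => ?_⟩
  have hnp : (k + 1).natPred = k.natPred + 1 := by
    have h1 : (k : ℕ) ≤ (k : ℕ) := le_rfl
    have := k.pos
    simp only [PNat.natPred, PNat.add_coe, PNat.one_coe]
    omega
  have hlt2 : φ (ρ k) < φ (ρ (k + 1)) := by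
    rw [hρa k, hρa (k + 1), hnp, hft, hft]
    exact hfmono (Nat.lt_succ_self _)
  exact hlt _ _ hlt2
end ExistsDesc

section Quasi

lemma exists_quasi_perm (p : ℕ+ → ℝ) (hp : ∀ n, 0 ≤ p n)
    (e : ℕ+ → ℕ+) (he : StrictMono e) (hrange : Set.range e = {n : ℕ+ | 0 < p n})
    (m : ℕ+ → ℕ+) (hm : StrictMono m) (C : ℝ)
    (hC : ∀ k : ℕ+, (m k : ℝ) ≤ C * (k : ℝ))
    (w : {n : ℕ+ // n ∉ Set.range m} ≃ {n : ℕ+ // ¬ 0 < p n})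
    (τ : Equiv.Perm ℕ+) (hdesc : ∀ n : ℕ+, p (e (τ (n + 1))) ≤ p (e (τ n)))
    (hsum : Summable fun k : ℕ+ => (k : ℝ) * p (e (τ k))) :
    ∃ δ : Equiv.Perm ℕ+, QuasiDescending (fun n => p (δ n)) ∧
      Summable (fun n : ℕ+ => (n : ℝ) * p (δ n)) := by
  classical
  have hmem : ∀ n : ℕ+, 0 < p (e n) := by
    intro n
    have : e n ∈ {n : ℕ+ | 0 < p n} := hrange ▸ Set.mem_range_self n
    exact this
  set eEquiv : ℕ+ ≃ {n : ℕ+ // 0 < p n} :=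
    Equiv.ofBijective (fun n => ⟨e n, hmem n⟩)
      ⟨fun a b hab => he.injective (Subtype.ext_iff.1 hab),
       fun x => by
         have : x.1 ∈ Set.range e := hrange.symm ▸ x.2
         obtain ⟨n, hn⟩ := this
         exact ⟨n, Subtype.ext hn⟩⟩ with heE
  set E₁ : {n : ℕ+ // n ∈ Set.range m} ≃ {n : ℕ+ // 0 < p n} :=
    ((Equiv.ofInjective m hm.injective).symm.trans τ).trans eEquiv with hE₁
  set δ : Equiv.Perm ℕ+ :=
    (Equiv.sumCompl (fun n => n ∈ Set.range m)).symm.trans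
      ((Equiv.sumCongr E₁ w).trans (Equiv.sumCompl (fun n => 0 < p n))) with hδ
  have hkey : ∀ k : ℕ+, δ (m k) = e (τ k) := by
    intro k
    have h1 : (Equiv.sumCompl (fun n => n ∈ Set.range m)).symm (m k)
        = Sum.inl ⟨m k, Set.mem_range_self k⟩ :=
      Equiv.sumCompl_symm_apply_of_pos (Set.mem_range_self k)
    have h2 : E₁ ⟨m k, Set.mem_range_self k⟩ = ⟨e (τ k), hmem (τ k)⟩ := by
      rw [hE₁]
      simp only [Equiv.trans_apply]
      rw [show ((Equiv.ofInjective m hm.injective).symm ⟨m k, Set.mem_range_self k⟩) = k from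
        Equiv.ofInjective_symm_apply hm.injective k]
      rfl
    rw [hδ]
    simp only [Equiv.trans_apply, h1, Equiv.sumCongr_apply, Sum.map_inl, h2,
      Equiv.sumCompl_apply_inl]
  have hzero : ∀ n : ℕ+, n ∉ Set.range m → p (δ n) = 0 := by
    intro n hn
    have h1 : (Equiv.sumCompl (fun n => n ∈ Set.range m)).symm n = Sum.inr ⟨n, hn⟩ :=
      Equiv.sumCompl_symm_apply_of_neg hn
    have h2 : δ n = (w ⟨n, hn⟩ : ℕ+) := by
      rw [hδ]
      simp only [Equiv.trans_apply, h1, Equiv.sumCongr_apply, Sum.map_inr,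
        Equiv.sumCompl_apply_inr]
    rw [h2]
    exact le_antisymm (not_lt.1 (w ⟨n, hn⟩).2) (hp _)
  refine ⟨δ, ?_, ?_⟩
  · intro n n' hpos hlt
    simp only at hpos ⊢
    by_cases hn : n ∈ Set.range m
    · obtain ⟨k, rfl⟩ := hn
      by_cases hn' : n' ∈ Set.range m
      · obtain ⟨k', rfl⟩ := hn'
        have hkk : k ≤ k' := (hm.lt_iff_lt.1 hlt).le
        rw [hkey, hkey]
        exact desc_chain (fun n => p (e n)) τ hdesc k k' hkk
      · rw [hzero n' hn']
        rw [hkey] at hpos ⊢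
        exact (hpos).le
    · rw [hzero n hn] at hpos
      exact absurd hpos (lt_irrefl 0)
  · have hvan : ∀ n, n ∉ Set.range m → (n : ℝ) * p (δ n) = 0 := by
      intro n hn; rw [hzero n hn, mul_zero]
    refine (Function.Injective.summable_iff hm.injective hvan).1 ?_
    have hcomp : ∀ k : ℕ+, ((fun n : ℕ+ => (n : ℝ) * p (δ n)) ∘ m) k
        = (m k : ℝ) * p (e (τ k)) := by
      intro k; simp only [Function.comp_apply, hkey]
    refine Summable.of_nonneg_of_le (fun k => ?_) (fun k => ?_) (hsum.mul_left C)
    · rw [hcomp]; exact mul_nonneg (by positivity) (hp _)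
    · rw [hcomp]
      calc (m k : ℝ) * p (e (τ k)) ≤ C * (k : ℝ) * p (e (τ k)) :=
            mul_le_mul_of_nonneg_right (hC k) (hp _)
        _ = C * ((k : ℝ) * p (e (τ k))) := by ring
end Quasi

section MW

lemma exists_m_w (p : ℕ+ → ℝ) :
    ∃ (m : ℕ+ → ℕ+) (C : ℝ), StrictMono m ∧ (∀ k : ℕ+, (m k : ℝ) ≤ C * (k : ℝ)) ∧
      Nonempty ({n : ℕ+ // n ∉ Set.range m} ≃ {n : ℕ+ // ¬ 0 < p n}) := by
  classical
  by_cases hZ : ({n : ℕ+ | ¬ 0 < p n}).Finite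
  · -- finite case
    haveI : Fintype ({n : ℕ+ | ¬ 0 < p n}) := hZ.fintype
    set N : ℕ := Fintype.card ({n : ℕ+ | ¬ 0 < p n}) with hN
    refine ⟨fun k => ⟨(k : ℕ) + N, by have := k.pos; omega⟩, (N : ℝ) + 1, ?_, ?_, ?_⟩
    · intro a b hab
      show (a : ℕ) + N < (b : ℕ) + N
      have : (a : ℕ) < b := hab
      omega
    · intro k
      have hk : (1 : ℝ) ≤ (k : ℝ) := by exact_mod_cast k.one_le
      rw [PNat.mk_coe]
      push_cast
      nlinarith
    · have hcompl : ∀ n : ℕ+,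
          (n ∉ Set.range (fun k : ℕ+ => (⟨(k : ℕ) + N, by have := k.pos; omega⟩ : ℕ+)))
          ↔ (n : ℕ) ≤ N := by
        intro n
        constructor
        · intro h
          by_contra hc
          push_neg at hc
          refine h ⟨⟨(n : ℕ) - N, by omega⟩, ?_⟩
          apply PNat.coe_injective
          simp only [PNat.mk_coe]
          omega
        · rintro h ⟨k, hk⟩
          have h2 : (k : ℕ) + N = (n : ℕ) := congrArg (fun x : ℕ+ => (x : ℕ)) hk
          have := k.pos
          omega
      have E : {n : ℕ+ // (n : ℕ) ≤ N} ≃ Fin N :=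
        { toFun := fun x => ⟨(x.1 : ℕ) - 1, by have := x.1.pos; have := x.2; omega⟩
          invFun := fun i => ⟨⟨(i : ℕ) + 1, Nat.succ_pos _⟩, by
            have := i.2; simp only [PNat.mk_coe]; omega⟩
          left_inv := fun x => by
            apply Subtype.ext; apply PNat.coe_injective
            simp only [PNat.mk_coe]
            have := x.1.pos; omega
          right_inv := fun i => by
            apply Fin.ext
            simp only [PNat.mk_coe]
            omega }
      exact ⟨(Equiv.subtypeEquivRight hcompl).trans
        (E.trans (Fintype.equivFinOfCardEq hN.symm).symm)⟩
  · -- infinite case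
    refine ⟨fun k => k + k, 2, ?_, ?_, ?_⟩
    · intro a b hab
      rw [← PNat.coe_lt_coe, PNat.add_coe, PNat.add_coe]
      have h1 : (a : ℕ) < b := hab
      omega
    · intro k
      have h1 : ((k + k : ℕ+) : ℕ) = (k : ℕ) + (k : ℕ) := PNat.add_coe k k
      have h2 : ((k + k : ℕ+) : ℝ) = ((((k + k : ℕ+) : ℕ)) : ℝ) := rfl
      rw [h2, h1]
      push_cast
      linarith
    · have hodd : ({n : ℕ+ | n ∉ Set.range (fun k : ℕ+ => k + k)}).Infinite := by
        apply Set.infinite_of_injective_forall_mem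
          (f := fun j : ℕ => (⟨2 * j + 1, Nat.succ_pos _⟩ : ℕ+))
        · intro a b hab
          have : (2 * a + 1 : ℕ) = 2 * b + 1 := congrArg (fun x : ℕ+ => (x : ℕ)) hab
          omega
        · intro j
          rintro ⟨k, hk⟩
          have h3 : ((k + k : ℕ+) : ℕ) = 2 * j + 1 := congrArg (fun x : ℕ+ => (x : ℕ)) hk
          rw [PNat.add_coe] at h3
          omega
      haveI : Infinite {n : ℕ+ // n ∉ Set.range (fun k : ℕ+ => k + k)} :=
        Set.infinite_coe_iff.2 hodd
      haveI : Infinite {n : ℕ+ // ¬ 0 < p n} :=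
        Set.infinite_coe_iff.2 hZ
      exact nonempty_equiv_of_countable
end MW

section Extract

lemma extract_sigma (p : ℕ+ → ℝ) (hp : ∀ n, 0 ≤ p n)
    (e : ℕ+ → ℕ+) (he : StrictMono e) (hrange : Set.range e = {n : ℕ+ | 0 < p n})
    (hinf : ({n : ℕ+ | 0 < p n}).Infinite)
    (δ : Equiv.Perm ℕ+) (hsum : Summable fun n : ℕ+ => (n : ℝ) * p (δ n)) :
    ∃ σ : Equiv.Perm ℕ+, Summable fun k : ℕ+ => (k : ℝ) * p (e (σ k)) := by
  classical
  have hmem : ∀ n : ℕ+, 0 < p (e n) := by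
    intro n
    have : e n ∈ {n : ℕ+ | 0 < p n} := hrange ▸ Set.mem_range_self n
    exact this
  set eEquiv : ℕ+ ≃ {n : ℕ+ // 0 < p n} :=
    Equiv.ofBijective (fun n => ⟨e n, hmem n⟩)
      ⟨fun a b hab => he.injective (Subtype.ext_iff.1 hab),
       fun x => by
         have : x.1 ∈ Set.range e := hrange.symm ▸ x.2
         obtain ⟨n, hn⟩ := this
         exact ⟨n, Subtype.ext hn⟩⟩ with heE
  set A : Set ℕ+ := {n : ℕ+ | 0 < p (δ n)} with hA
  have hAinf : A.Infinite := by
    have : A = δ ⁻¹' {n : ℕ+ | 0 < p n} := rfl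
    rw [this]
    exact hinf.preimage (by rw [Equiv.range_eq_univ]; exact Set.subset_univ _)
  have hAfin : ∀ x ∈ A, {y ∈ A | y < x}.Finite := by
    intro x _
    have h1 : {y ∈ A | y < x} ⊆ {y : ℕ+ | (y : ℕ) < (x : ℕ)} := by
      intro y hy
      exact (PNat.coe_lt_coe _ _).2 hy.2
    refine Set.Finite.subset ?_ h1
    have : Set.Finite ((fun y : ℕ+ => (y : ℕ)) '' {y : ℕ+ | (y : ℕ) < (x : ℕ)}) :=
      (Set.finite_Iio ((x : ℕ))).subset (by rintro z ⟨y, hy, rfl⟩; exact hy)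
    exact Set.Finite.of_finite_image this
      (fun a _ b _ h => PNat.coe_injective h)
  obtain ⟨a, hamono, har⟩ := exists_strictMono_enum A hAinf hAfin
  have haA : ∀ j, 0 < p (δ (a j)) := fun j => (har ▸ Set.mem_range_self j : a j ∈ A)
  set σf : ℕ+ → ℕ+ := fun k => eEquiv.symm ⟨δ (a k.natPred), haA _⟩ with hσf
  have hkey : ∀ k : ℕ+, e (σf k) = δ (a k.natPred) := by
    intro k
    have := eEquiv.apply_symm_apply ⟨δ (a k.natPred), haA _⟩
    have h2 := Subtype.ext_iff.1 this
    exact h2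
  have hbij : Function.Bijective σf := by
    constructor
    · intro x y hxy
      have h1 := congrArg e hxy
      rw [hkey, hkey] at h1
      have h2 := hamono.injective (δ.injective h1)
      have := congrArg Nat.succPNat h2
      rwa [PNat.succPNat_natPred, PNat.succPNat_natPred] at this
    · intro j
      have hpos : 0 < p (δ (δ.symm (e j))) := by
        rw [Equiv.apply_symm_apply]; exact hmem j
      have : δ.symm (e j) ∈ A := hpos
      rw [← har] at this
      obtain ⟨i, hi⟩ := this
      refine ⟨i.succPNat, ?_⟩
      have hnp : (i.succPNat).natPred = i := Nat.natPred_succPNat i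
      apply eEquiv.injective
      rw [hσf]
      simp only [Equiv.apply_symm_apply]
      apply Subtype.ext
      simp only [hnp, hi, Equiv.apply_symm_apply]
      rfl
  refine ⟨Equiv.ofBijective σf hbij, ?_⟩
  have hterm : ∀ k : ℕ+, (k : ℝ) * p (e (Equiv.ofBijective σf hbij k))
      = (k : ℝ) * p (δ (a k.natPred)) := by
    intro k
    rw [show (Equiv.ofBijective σf hbij) k = σf k from rfl, hkey]
  have hle : ∀ j : ℕ, j + 1 ≤ ((a j : ℕ+) : ℕ) := by
    intro j
    induction j with
    | zero => exact (a 0).pos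
    | succ j ih =>
      have := (PNat.coe_lt_coe _ _).2 (hamono (Nat.lt_succ_self j))
      simp only [Nat.succ_eq_add_one] at this
      omega
  refine Summable.of_nonneg_of_le
    (fun k => mul_nonneg (by positivity) (hp _))
    (fun k => ?_)
    (hsum.comp_injective (i := fun k : ℕ+ => a k.natPred) ?_)
  · rw [hterm]
    have h1 : (k : ℝ) ≤ ((a k.natPred : ℕ+) : ℝ) := by
      have h2 : (k : ℕ) ≤ ((a k.natPred : ℕ+) : ℕ) := by
        have := hle k.natPred
        have h3 : k.natPred + 1 = (k : ℕ) := by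
          have := k.pos
          simp only [PNat.natPred]
          omega
        omega
      exact_mod_cast h2
    exact mul_le_mul_of_nonneg_right h1 (hp _)
  · intro x y hxy
    have h2 := hamono.injective hxy
    have := congrArg Nat.succPNat h2
    rwa [PNat.succPNat_natPred, PNat.succPNat_natPred] at this
end Extract


theorem stmt_8 (p : ℕ+ → ℝ) (hp : ∀ n, 0 ≤ p n)
    (hinf : {n : ℕ+ | 0 < p n}.Infinite) (hpsum : Summable p)
    (e : ℕ+ → ℕ+) (he : StrictMono e) (hrange : Set.range e = {n : ℕ+ | 0 < p n})
    (q : ℕ+ → ℝ) (hq : ∀ n, q n = p (e n)) :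
    List.TFAE
      [∀ δ : Equiv.Perm ℕ+, ¬ Summable fun n : ℕ+ => (n : ℝ) * p (δ n),
       ∀ δ : Equiv.Perm ℕ+, QuasiDescending (fun n => p (δ n)) →
         ¬ Summable fun n : ℕ+ => (n : ℝ) * p (δ n),
       ∀ δ : Equiv.Perm ℕ+, ¬ Summable fun n : ℕ+ => (n : ℝ) * q (δ n),
       ∀ δ : Equiv.Perm ℕ+, (∀ n : ℕ+, q (δ (n + 1)) ≤ q (δ n)) →
         ¬ Summable fun n : ℕ+ => (n : ℝ) * q (δ n)] := by
  classical
  have hqpos : ∀ n, 0 < q n := fun n => by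
    rw [hq]
    have : e n ∈ {n : ℕ+ | 0 < p n} := hrange ▸ Set.mem_range_self n
    exact this
  have hqsum : Summable q := by
    have h1 : Summable (p ∘ e) := hpsum.comp_injective he.injective
    exact h1.congr (fun n => (hq n).symm)
  tfae_have 1 → 2 := fun h δ _ => h δ
  tfae_have 2 → 4 := by
    intro h2 τ hdesc hsum4
    have hdesc' : ∀ n : ℕ+, p (e (τ (n + 1))) ≤ p (e (τ n)) := by
      intro n; have := hdesc n; rwa [hq, hq] at this
    have hsum' : Summable fun k : ℕ+ => (k : ℝ) * p (e (τ k)) :=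
      hsum4.congr (fun k => by rw [hq])
    obtain ⟨m, C, hm, hC, ⟨w⟩⟩ := exists_m_w p
    obtain ⟨δ, hqd, hs⟩ := exists_quasi_perm p hp e he hrange m hm C hC w τ hdesc' hsum'
    exact h2 δ hqd hs
  tfae_have 4 → 3 := by
    intro h4 σ hsum3
    obtain ⟨ρ, hdesc⟩ := exists_desc_perm q hqpos hqsum
    exact h4 ρ hdesc (summable_weight_of_desc q (fun n => (hqpos n).le) ρ σ hdesc hsum3)
  tfae_have 3 → 1 := by
    intro h3 δ hsum1
    obtain ⟨σ, hs⟩ := extract_sigma p hp e he hrange hinf δ hsum1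
    exact h3 σ (hs.congr (fun k => by rw [hq]))
  tfae_finish
end

section
/- Let p : ℕ⁺ → ℝ be a sequence with p_n > 0 for all n, and let σ be a permutation of the positive integers such that p_{σ(n+1)} ≤ p_{σ(n)} for all n (a descending rearrangement). Then for every permutation δ of the positive integers and every positive integer m, ∑_{n=1}^{m} n·p_{σ(n)} ≤ ∑_{n=1}^∞ n·p_{δ(n)}, where the right-hand side is taken in [0, ∞]. In particular, if ∑_{n=1}^∞ n·p_{δ(n)} < ∞ for some permutation δ, then ∑_{n=1}^∞ n·p_{σ(n)} < ∞, i.e. the descending rearrangement minimizes ∑_{n=1}^∞ n·p_{δ(n)} over all permutations δ. -/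
open scoped BigOperators ENNReal

lemma key_rearrange_s9 : ∀ (m : ℕ) (q : ℕ → ℝ) (c : ℕ → ℕ),
    (∀ i, 0 ≤ q i) → (∀ i j, i ≤ j → q j ≤ q i) →
    (∀ i, 1 ≤ c i) → (Set.InjOn c (Finset.range m)) →
    ∑ j ∈ Finset.range m, ((j : ℝ) + 1) * q j ≤
      ∑ j ∈ Finset.range m, (c j : ℝ) * q j := by
  intro m
  induction m with
  | zero => intro q c _ _ _ _; simp
  | succ m ih =>
    intro q c hq0 hqa hc1 hinj
    obtain ⟨j0, hj0mem, hj0max⟩ :=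
      Finset.exists_max_image (Finset.range (m + 1)) c ⟨0, by simp⟩
    have hj0lt : j0 < m + 1 := Finset.mem_range.mp hj0mem
    -- c j0 ≥ m + 1
    have hcard : (Finset.range (m + 1)).image c ⊆ Finset.Icc 1 (c j0) := by
      intro x hx
      obtain ⟨i, hi, rfl⟩ := Finset.mem_image.mp hx
      exact Finset.mem_Icc.mpr ⟨hc1 i, hj0max i hi⟩
    have hcj0 : m + 1 ≤ c j0 := by
      have h1 := Finset.card_le_card hcard
      rwa [Finset.card_image_of_injOn hinj, Finset.card_range,
        Nat.card_Icc, Nat.add_sub_cancel] at h1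
    set c' : ℕ → ℕ := fun i => c (Equiv.swap j0 m i) with hc'
    have hswap : ∑ j ∈ Finset.range (m + 1), (c' j : ℝ) * q j ≤
        ∑ j ∈ Finset.range (m + 1), (c j : ℝ) * q j := by
      rcases eq_or_ne j0 m with rfl | hne
      · simp [hc', Equiv.swap_self]
      · have hsub : ({j0, m} : Finset ℕ) ⊆ Finset.range (m + 1) := by
          intro x hx
          rcases Finset.mem_insert.mp hx with rfl | hx
          · exact hj0mem
          · simp at hx; simp [hx]
        have hsplit : ∀ g : ℕ → ℝ, ∑ j ∈ Finset.range (m + 1), g j =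
            ∑ j ∈ Finset.range (m + 1) \ {j0, m}, g j + (g j0 + g m) := by
          intro g
          rw [← Finset.sum_sdiff hsub, Finset.sum_pair hne]
        rw [hsplit fun j => (c' j : ℝ) * q j, hsplit fun j => (c j : ℝ) * q j]
        have heq : ∀ j ∈ Finset.range (m + 1) \ {j0, m},
            (c' j : ℝ) * q j = (c j : ℝ) * q j := by
          intro j hj
          simp only [Finset.mem_sdiff, Finset.mem_insert, Finset.mem_singleton] at hj
          push_neg at hj
          rw [hc']
          simp only [Equiv.swap_apply_of_ne_of_ne hj.2.1 hj.2.2]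
        rw [Finset.sum_congr rfl heq]
        have h1 : c' j0 = c m := by simp [hc']
        have h2 : c' m = c j0 := by simp [hc', Equiv.swap_apply_right]
        rw [h1, h2]
        have hq' : q m ≤ q j0 := hqa _ _ (Nat.lt_succ_iff.mp hj0lt)
        have hc' : (c m : ℝ) ≤ c j0 := by
          exact_mod_cast hj0max m (by simp)
        nlinarith [hq0 m, hq0 j0]
    have hinj' : Set.InjOn c' (Finset.range m) := by
      intro a ha b hb hab
      simp only [Finset.coe_range, Set.mem_Iio] at ha hb
      have hmem : ∀ x, x < m → Equiv.swap j0 m x ∈ Finset.range (m + 1) := by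
        intro x hx
        rcases eq_or_ne x j0 with rfl | hxne
        · simp [Equiv.swap_apply_left]
        · rw [Equiv.swap_apply_of_ne_of_ne hxne (Nat.ne_of_lt hx)]
          exact Finset.mem_range.mpr (Nat.lt_succ_of_lt hx)
      have := hinj (by simpa using hmem a ha) (by simpa using hmem b hb) hab
      exact (Equiv.swap j0 m).injective this
    have hc1' : ∀ i, 1 ≤ c' i := fun i => hc1 _
    have hlast : c' m = c j0 := by simp [hc', Equiv.swap_apply_right]
    calc ∑ j ∈ Finset.range (m + 1), ((j : ℝ) + 1) * q j
        = ∑ j ∈ Finset.range m, ((j : ℝ) + 1) * q j + ((m : ℝ) + 1) * q m := by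
          rw [Finset.sum_range_succ]
      _ ≤ ∑ j ∈ Finset.range m, (c' j : ℝ) * q j + (c' m : ℝ) * q m := by
          refine add_le_add (ih q c' hq0 hqa hc1' hinj') ?_
          refine mul_le_mul_of_nonneg_right ?_ (hq0 m)
          rw [hlast]; exact_mod_cast hcj0
      _ = ∑ j ∈ Finset.range (m + 1), (c' j : ℝ) * q j := by
          rw [Finset.sum_range_succ]
      _ ≤ _ := hswap


theorem stmt_9 (p : ℕ+ → ℝ) (hp : ∀ n, 0 < p n) (σ : Equiv.Perm ℕ+)
    (hσ : ∀ n : ℕ+, p (σ (n + 1)) ≤ p (σ n)) :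
    (∀ δ : Equiv.Perm ℕ+, ∀ m : ℕ+,
        ∑ n ∈ Finset.Icc 1 m, ENNReal.ofReal ((n : ℝ) * p (σ n)) ≤
          ∑' n : ℕ+, ENNReal.ofReal ((n : ℝ) * p (δ n))) ∧
      ((∃ δ : Equiv.Perm ℕ+, Summable fun n : ℕ+ => (n : ℝ) * p (δ n)) →
        Summable fun n : ℕ+ => (n : ℝ) * p (σ n)) := by
  -- the index embedding ℕ → ℕ+
  set e : ℕ → ℕ+ := fun i => ⟨i + 1, Nat.succ_pos i⟩ with he
  have he_inj : Function.Injective e := by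
    intro a b hab
    have : a + 1 = b + 1 := congrArg Subtype.val hab
    omega
  have he_succ : ∀ i, e (i + 1) = e i + 1 := fun i => rfl
  set q : ℕ → ℝ := fun i => p (σ (e i)) with hqdef
  have hq0 : ∀ i, 0 ≤ q i := fun i => (hp _).le
  have hqa : ∀ i j, i ≤ j → q j ≤ q i := by
    have : Antitone q := antitone_nat_of_succ_le fun n => by
      show p (σ (e (n + 1))) ≤ p (σ (e n))
      rw [he_succ]; exact hσ (e n)
    exact fun i j h => this h
  have himg : ∀ m : ℕ+, (Finset.range (m : ℕ)).image e = Finset.Icc 1 m := by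
    intro m
    ext n
    simp only [Finset.mem_image, Finset.mem_range, Finset.mem_Icc]
    constructor
    · rintro ⟨i, hi, rfl⟩
      refine ⟨(e i).one_le, ?_⟩
      rw [← PNat.coe_le_coe]
      show i + 1 ≤ (m : ℕ)
      omega
    · rintro ⟨h1, h2⟩
      refine ⟨(n : ℕ) - 1, ?_, ?_⟩
      · have := n.pos
        have h2' : (n : ℕ) ≤ (m : ℕ) := (PNat.coe_le_coe _ _).mpr h2
        omega
      · have := n.pos
        apply PNat.coe_injective
        show (n : ℕ) - 1 + 1 = (n : ℕ)
        omega
  -- Part 1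
  have part1 : ∀ δ : Equiv.Perm ℕ+, ∀ m : ℕ+,
      ∑ n ∈ Finset.Icc 1 m, ENNReal.ofReal ((n : ℝ) * p (σ n)) ≤
        ∑' n : ℕ+, ENNReal.ofReal ((n : ℝ) * p (δ n)) := by
    intro δ m
    set c : ℕ → ℕ := fun i => ((δ.symm (σ (e i)) : ℕ+) : ℕ) with hcdef
    set g : ℕ → ℕ+ := fun i => δ.symm (σ (e i)) with hgdef
    have hg_inj : Function.Injective g :=
      δ.symm.injective.comp (σ.injective.comp he_inj)
    have hc_inj : Set.InjOn c (Finset.range (m : ℕ)) :=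
      fun a _ b _ hab => hg_inj (PNat.coe_injective hab)
    have hc1 : ∀ i, 1 ≤ c i := fun i => (g i).pos
    -- LHS rewrite over range
    have hL : ∑ n ∈ Finset.Icc 1 m, ENNReal.ofReal ((n : ℝ) * p (σ n)) =
        ∑ i ∈ Finset.range (m : ℕ), ENNReal.ofReal (((i : ℝ) + 1) * q i) := by
      rw [← himg m, Finset.sum_image (fun a _ b _ h => he_inj h)]
      refine Finset.sum_congr rfl fun i _ => ?_
      congr 1
      have : ((e i : ℕ+) : ℝ) = (i : ℝ) + 1 := by
        show ((i + 1 : ℕ) : ℝ) = (i : ℝ) + 1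
        push_cast; ring
      rw [this]
    -- key real inequality
    have hkey : ∑ i ∈ Finset.range (m : ℕ), ((i : ℝ) + 1) * q i ≤
        ∑ i ∈ Finset.range (m : ℕ), (c i : ℝ) * q i :=
      key_rearrange_s9 (m : ℕ) q c hq0 hqa hc1 hc_inj
    -- RHS finite part
    have hR : ∑ i ∈ Finset.range (m : ℕ), ENNReal.ofReal ((c i : ℝ) * q i) =
        ∑ k ∈ (Finset.range (m : ℕ)).image g,
          ENNReal.ofReal ((k : ℝ) * p (δ k)) := by
      rw [Finset.sum_image (fun a _ b _ h => hg_inj h)]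
      refine Finset.sum_congr rfl fun i _ => ?_
      have : δ (g i) = σ (e i) := δ.apply_symm_apply _
      rw [this]
    calc ∑ n ∈ Finset.Icc 1 m, ENNReal.ofReal ((n : ℝ) * p (σ n))
        = ∑ i ∈ Finset.range (m : ℕ), ENNReal.ofReal (((i : ℝ) + 1) * q i) := hL
      _ = ENNReal.ofReal (∑ i ∈ Finset.range (m : ℕ), ((i : ℝ) + 1) * q i) := by
          rw [ENNReal.ofReal_sum_of_nonneg fun i _ =>
            mul_nonneg (by positivity) (hq0 i)]
      _ ≤ ENNReal.ofReal (∑ i ∈ Finset.range (m : ℕ), (c i : ℝ) * q i) :=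
          ENNReal.ofReal_le_ofReal hkey
      _ = ∑ i ∈ Finset.range (m : ℕ), ENNReal.ofReal ((c i : ℝ) * q i) := by
          rw [ENNReal.ofReal_sum_of_nonneg fun i _ =>
            mul_nonneg (by positivity) (hq0 i)]
      _ = ∑ k ∈ (Finset.range (m : ℕ)).image g,
            ENNReal.ofReal ((k : ℝ) * p (δ k)) := hR
      _ ≤ ∑' n : ℕ+, ENNReal.ofReal ((n : ℝ) * p (δ n)) :=
          ENNReal.sum_le_tsum _
  refine ⟨part1, ?_⟩
  rintro ⟨δ, hs⟩
  have hnonneg : ∀ n : ℕ+, 0 ≤ (n : ℝ) * p (δ n) := fun n =>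
    mul_nonneg (by positivity) (hp _).le
  have hC : (∑' n : ℕ+, ENNReal.ofReal ((n : ℝ) * p (δ n))) ≠ ⊤ := by
    rw [← ENNReal.ofReal_tsum_of_nonneg hnonneg hs]
    exact ENNReal.ofReal_ne_top
  have htop : (∑' n : ℕ+, ENNReal.ofReal ((n : ℝ) * p (σ n))) ≠ ⊤ := by
    rw [← lt_top_iff_ne_top, ENNReal.tsum_eq_iSup_sum]
    refine (iSup_le fun s => ?_).trans_lt hC.lt_top
    rcases s.eq_empty_or_nonempty with rfl | hs'
    · simp
    · set m : ℕ+ := s.max' hs' with hm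
      have hsub : s ⊆ Finset.Icc 1 m := fun n hn =>
        Finset.mem_Icc.mpr ⟨n.one_le, Finset.le_max' s n hn⟩
      exact le_trans (Finset.sum_le_sum_of_subset hsub) (part1 δ m)
  have := ENNReal.summable_toReal htop
  refine this.congr fun n => ?_
  exact ENNReal.toReal_ofReal (mul_nonneg (by positivity) (hp _).le)
end

section
/- Let p : ℕ⁺ → ℝ with p_n ≥ 0 and ∑_{n=1}^∞ p_n = 1, and let a : ℕ⁺ → ℝ with a_n ≥ 0 and ∑_{n=1}^∞ a_n = 1. Let δ be a permutation of the positive integers such that a_{δ(n+1)} ≤ a_{δ(n)} for all n. If ∑_{n=1}^∞ n·p_{δ(n)} = ∞, then there exists a finite-cycle-permutation σ of the positive integers such that the set {n : a_n ≥ ∑_{m ∈ orbit_σ(n)} p_m} is finite (i.e., the guard can defeat the amount distribution a). -/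
open scoped BigOperators ENNReal

namespace Guard

/-- index of the block containing `i` (for `K 0 ≤ i`). -/
def bI (K : ℕ → ℕ) (i : ℕ) : ℕ := Nat.findGreatest (fun j => K j ≤ i) i

/-- forward map: cycle each block `[K j, K (j+1))`. -/
def fB (K : ℕ → ℕ) (i : ℕ) : ℕ :=
  if i < K 0 then i else if i + 1 < K (bI K i + 1) then i + 1 else K (bI K i)

/-- inverse map. -/
def gB (K : ℕ → ℕ) (i : ℕ) : ℕ :=
  if i < K 0 then i else if K (bI K i) = i then K (bI K i + 1) - 1 else i - 1

variable {K : ℕ → ℕ}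

lemma K_bI_le {i : ℕ} (hi : K 0 ≤ i) : K (bI K i) ≤ i :=
  Nat.findGreatest_spec (P := fun j => K j ≤ i) (Nat.zero_le i) hi

lemma lt_K_bI_succ (hK : StrictMono K) {i : ℕ} (hi : K 0 ≤ i) : i < K (bI K i + 1) := by
  by_contra hcon
  push_neg at hcon
  have h1 : bI K i + 1 ≤ i := le_trans hK.le_apply hcon
  have h3 : bI K i + 1 ≤ bI K i := Nat.le_findGreatest (P := fun j => K j ≤ i) h1 hcon
  omega

lemma bI_eq (hK : StrictMono K) {i j : ℕ} (h1 : K j ≤ i) (h2 : i < K (j + 1)) :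
    bI K i = j := by
  have h0 : K 0 ≤ i := le_trans (hK.monotone (Nat.zero_le j)) h1
  have hle : j ≤ bI K i := Nat.le_findGreatest (P := fun j => K j ≤ i)
    (le_trans hK.le_apply h1) h1
  have hlt : K (bI K i) ≤ i := K_bI_le h0
  have : bI K i < j + 1 := hK.lt_iff_lt.mp (lt_of_le_of_lt hlt h2)
  omega

lemma gf (hK : StrictMono K) (i : ℕ) : gB K (fB K i) = i := by
  by_cases hi : i < K 0
  · simp [fB, gB, hi]
  · push_neg at hi
    set j := bI K i with hj
    have h1 : K j ≤ i := K_bI_le hi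
    have h2 : i < K (j + 1) := lt_K_bI_succ hK hi
    by_cases hc : i + 1 < K (j + 1)
    · have hf : fB K i = i + 1 := by
        simp only [fB, if_neg (by omega : ¬ i < K 0), ← hj, if_pos hc]
      have hbi : bI K (i + 1) = j := bI_eq hK (by omega) hc
      rw [hf]
      simp only [gB, if_neg (by omega : ¬ i + 1 < K 0), hbi, if_neg (by omega : ¬ K j = i + 1)]
      omega
    · have heq : K (j + 1) = i + 1 := by omega
      have hf : fB K i = K j := by
        simp only [fB, if_neg (by omega : ¬ i < K 0), ← hj, if_neg hc]
      have hbi : bI K (K j) = j := bI_eq hK le_rfl (hK (by omega))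
      have hK0j : K 0 ≤ K j := hK.monotone (Nat.zero_le j)
      rw [hf]
      simp only [gB, if_neg (by omega : ¬ K j < K 0), hbi, if_pos rfl, heq]
      simp

lemma fg (hK : StrictMono K) (i : ℕ) : fB K (gB K i) = i := by
  by_cases hi : i < K 0
  · simp [fB, gB, hi]
  · push_neg at hi
    set j := bI K i with hj
    have h1 : K j ≤ i := K_bI_le hi
    have h2 : i < K (j + 1) := lt_K_bI_succ hK hi
    have hKjj : K j < K (j + 1) := hK (by omega)
    by_cases hc : K j = i
    · have hK0j : K 0 ≤ K j := hK.monotone (Nat.zero_le j)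
      have hg : gB K i = K (j + 1) - 1 := by
        simp only [gB, if_neg (by omega : ¬ i < K 0), ← hj, if_pos hc]
      have hm1 : K j ≤ K (j + 1) - 1 := by omega
      have hm2 : K (j + 1) - 1 < K (j + 1) := by omega
      have hbi : bI K (K (j + 1) - 1) = j := bI_eq hK hm1 hm2
      rw [hg]
      simp only [fB, if_neg (by omega : ¬ K (j + 1) - 1 < K 0), hbi,
        if_neg (by omega : ¬ K (j + 1) - 1 + 1 < K (j + 1))]
      omega
    · have hlt : K j < i := by omega
      have hK0j : K 0 ≤ K j := hK.monotone (Nat.zero_le j)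
      have hg : gB K i = i - 1 := by
        simp only [gB, if_neg (by omega : ¬ i < K 0), ← hj, if_neg hc]
      have hbi : bI K (i - 1) = j := bI_eq hK (by omega) (by omega)
      rw [hg]
      simp only [fB, if_neg (by omega : ¬ i - 1 < K 0), hbi,
        if_pos (by omega : i - 1 + 1 < K (j + 1))]
      omega

/-- the block-cycling permutation of ℕ. -/
def tau (hK : StrictMono K) : Equiv.Perm ℕ := ⟨fB K, gB K, gf hK, fg hK⟩

lemma tau_mem (hK : StrictMono K) {i j : ℕ} (h1 : K j ≤ i) (h2 : i < K (j + 1)) :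
    K j ≤ tau hK i ∧ tau hK i < K (j + 1) := by
  have hbi : bI K i = j := bI_eq hK h1 h2
  have h0 : K 0 ≤ i := le_trans (hK.monotone (Nat.zero_le j)) h1
  show K j ≤ fB K i ∧ fB K i < K (j+1)
  simp only [fB, if_neg (by omega : ¬ i < K 0), hbi]
  by_cases hc : i + 1 < K (j + 1)
  · rw [if_pos hc]; omega
  · rw [if_neg hc]; exact ⟨le_rfl, hK (by omega)⟩

lemma tau_symm_mem (hK : StrictMono K) {i j : ℕ} (h1 : K j ≤ i) (h2 : i < K (j + 1)) :
    K j ≤ (tau hK).symm i ∧ (tau hK).symm i < K (j + 1) := by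
  have hbi : bI K i = j := bI_eq hK h1 h2
  have h0 : K 0 ≤ i := le_trans (hK.monotone (Nat.zero_le j)) h1
  have hKjj : K j < K (j + 1) := hK (by omega)
  show K j ≤ gB K i ∧ gB K i < K (j+1)
  simp only [gB, if_neg (by omega : ¬ i < K 0), hbi]
  by_cases hc : K j = i
  · rw [if_pos hc]; omega
  · rw [if_neg hc]; omega

lemma tau_zpow_mem (hK : StrictMono K) {i j : ℕ} (h1 : K j ≤ i) (h2 : i < K (j + 1)) (z : ℤ) :
    K j ≤ ((tau hK) ^ z) i ∧ ((tau hK) ^ z) i < K (j + 1) := by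
  induction z using Int.induction_on with
  | zero => simpa using ⟨h1, h2⟩
  | succ n ih =>
      have he : ((tau hK) ^ ((n : ℤ) + 1)) i = tau hK (((tau hK) ^ (n : ℤ)) i) := by
        rw [show ((n : ℤ) + 1) = 1 + (n : ℤ) by ring, zpow_add, zpow_one, Equiv.Perm.mul_apply]
      rw [he]
      exact tau_mem hK ih.1 ih.2
  | pred n ih =>
      have he : ((tau hK) ^ (-(n : ℤ) - 1)) i = (tau hK).symm (((tau hK) ^ (-(n : ℤ))) i) := by
        rw [show (-(n : ℤ) - 1) = (-1) + (-(n : ℤ)) by ring, zpow_add, zpow_neg_one,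
          Equiv.Perm.mul_apply, ← Equiv.Perm.inv_def]
      rw [he]
      exact tau_symm_mem hK ih.1 ih.2

lemma tau_pow_K (hK : StrictMono K) {j t : ℕ} (ht : K j + t < K (j + 1)) :
    ((tau hK) ^ t) (K j) = K j + t := by
  induction t with
  | zero => simp
  | succ n ih =>
      have hn : K j + n < K (j + 1) := by omega
      have he : ((tau hK) ^ (n + 1)) (K j) = tau hK (((tau hK) ^ n) (K j)) := by
        rw [pow_succ', Equiv.Perm.mul_apply]
      rw [he, ih hn]
      show fB K (K j + n) = K j + n + 1
      have hbi : bI K (K j + n) = j := bI_eq hK (by omega) hn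
      have hK0 : K 0 ≤ K j := hK.monotone (Nat.zero_le j)
      simp only [fB, if_neg (by omega : ¬ K j + n < K 0), hbi, if_pos (by omega : K j + n + 1 < K (j+1))]

lemma sameCycle_K (hK : StrictMono K) {m j : ℕ} (h1 : K j ≤ m) (h2 : m < K (j + 1)) :
    (tau hK).SameCycle (K j) m :=
  ⟨(m - K j : ℕ), by rw [zpow_natCast, tau_pow_K hK (by omega)]; omega⟩

lemma orbit_eq (hK : StrictMono K) {i : ℕ} (hi : K 0 ≤ i) :
    {m : ℕ | (tau hK).SameCycle i m} = Set.Ico (K (bI K i)) (K (bI K i + 1)) := by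
  set j := bI K i with hj
  have h1 : K j ≤ i := K_bI_le hi
  have h2 : i < K (j + 1) := lt_K_bI_succ hK hi
  ext m
  constructor
  · rintro ⟨z, rfl⟩
    exact (tau_zpow_mem hK h1 h2 z).imp id id
  · rintro ⟨hm1, hm2⟩
    exact ((sameCycle_K hK h1 h2).symm).trans (sameCycle_K hK hm1 hm2)

lemma orbit_eq_singleton (hK : StrictMono K) {i : ℕ} (hi : i < K 0) :
    {m : ℕ | (tau hK).SameCycle i m} = {i} := by
  have hfix : Function.IsFixedPt (tau hK) i := by
    show fB K i = i
    simp [fB, hi]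
  ext m
  simp only [Set.mem_setOf_eq, Set.mem_singleton_iff]
  constructor
  · rintro ⟨z, rfl⟩
    exact (hfix.perm_zpow z)
  · rintro rfl; exact ⟨0, by simp⟩

end Guard



namespace Guard2

variable {P A : ℕ → ℝ}

/-- tail sum from k. -/
noncomputable def T (P : ℕ → ℝ) (k : ℕ) : ℝ := ∑' n, if k ≤ n then P n else 0

lemma summable_ite (hPs : Summable P) (k : ℕ) : Summable (fun n => if k ≤ n then P n else 0) := by
  have : (fun n => if k ≤ n then P n else 0) = Set.indicator {n | k ≤ n} P := by
    funext n
    simp [Set.indicator_apply, Set.mem_setOf_eq]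
  rw [this]
  exact hPs.indicator _

lemma exists_partial (hP : ∀ n, 0 ≤ P n) (hPs : Summable P) {k : ℕ} (hk : A k < T P k) :
    ∃ L, A k < ∑ i ∈ Finset.Ico k L, P i := by
  have hs := (summable_ite hPs k).hasSum
  have htend := hs.tendsto_sum_nat
  have hev := htend.eventually (lt_mem_nhds hk)
  obtain ⟨L, hL⟩ := hev.exists
  refine ⟨L, ?_⟩
  have : ∑ i ∈ Finset.range L, (if k ≤ i then P i else 0) = ∑ i ∈ Finset.Ico k L, P i := by
    rw [← Finset.sum_filter]
    congr 1
    ext i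
    simp only [Finset.mem_filter, Finset.mem_range, Finset.mem_Ico]
    omega
  rw [← this]
  exact hL

lemma G_cofinal (hP : ∀ n, 0 ≤ P n) (hPs : Summable P) (hA : ∀ n, 0 ≤ A n) (hAs : Summable A)
    (h : ¬ Summable fun n : ℕ => ((n : ℝ) + 1) * P n) (N : ℕ) : ∃ k, N ≤ k ∧ A k < T P k := by
  by_contra hcon
  push_neg at hcon
  set Q : ℕ → ℝ≥0∞ := fun n => ENNReal.ofReal (P n) with hQ
  -- step 1 : the weighted series is infinite
  have step1 : ∑' n : ℕ, ((n : ℝ≥0∞) + 1) * Q n = ⊤ := by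
    by_contra hne
    apply h
    have heq : ∀ n : ℕ, ((n : ℝ≥0∞) + 1) * Q n = ENNReal.ofReal (((n : ℝ) + 1) * P n) := by
      intro n
      rw [ENNReal.ofReal_mul (by positivity : (0:ℝ) ≤ (n : ℝ) + 1)]
      congr 1
      rw [ENNReal.ofReal_add (by positivity) zero_le_one, ENNReal.ofReal_natCast,
        ENNReal.ofReal_one]
    set g : ℕ → NNReal := fun n => Real.toNNReal (((n : ℝ) + 1) * P n) with hg
    have hcoe : ∀ n : ℕ, ENNReal.ofReal (((n : ℝ) + 1) * P n) = (g n : ℝ≥0∞) := fun n => rfl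
    have hne2 : ∑' n, (g n : ℝ≥0∞) ≠ ⊤ := by
      rw [← tsum_congr hcoe, ← tsum_congr heq]
      exact hne
    have hs := NNReal.summable_coe.mpr (ENNReal.tsum_coe_ne_top_iff_summable.mp hne2)
    apply hs.congr
    intro n
    rw [hg]
    have := hP n
    exact Real.coe_toNNReal _ (by positivity)
  -- step 2: Tonelli
  have step2 : ∑' n : ℕ, ((n : ℝ≥0∞) + 1) * Q n = ∑' (k : ℕ) (n : ℕ), (if k ≤ n then Q n else 0) := by
    have hterm : ∀ n : ℕ, ((n : ℝ≥0∞) + 1) * Q n = ∑' k : ℕ, (if k ≤ n then Q n else 0) := by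
      intro n
      rw [tsum_eq_sum (s := Finset.range (n + 1))
        (by intro b hb; rw [if_neg]; simp only [Finset.mem_range] at hb; omega)]
      rw [Finset.sum_congr rfl (fun k hk => if_pos (by simp only [Finset.mem_range] at hk; omega)),
        Finset.sum_const, Finset.card_range, nsmul_eq_mul]
      push_cast
      ring
    rw [tsum_congr hterm, ENNReal.tsum_comm]
  -- tails as ofReal
  have hTof : ∀ k : ℕ, (∑' n : ℕ, if k ≤ n then Q n else 0) = ENNReal.ofReal (T P k) := by
    intro k
    rw [T, ENNReal.ofReal_tsum_of_nonneg (fun n => by by_cases hn : k ≤ n <;> simp [hn, hP n])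
      (summable_ite hPs k)]
    apply tsum_congr
    intro n
    split <;> simp [hQ]
  -- contradiction
  have hbound : ∀ k, ENNReal.ofReal (T P k) ≤
      (if k < N then ENNReal.ofReal (T P k) else 0) + ENNReal.ofReal (A k) := by
    intro k
    by_cases hk : k < N
    · rw [if_pos hk]; exact le_self_add
    · rw [if_neg hk, zero_add]
      exact ENNReal.ofReal_le_ofReal (hcon k (by omega))
  have hfin : (∑' k, ((if k < N then ENNReal.ofReal (T P k) else 0) + ENNReal.ofReal (A k))) < ⊤ := by
    rw [ENNReal.tsum_add]
    apply ENNReal.add_lt_top.mpr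
    constructor
    · rw [tsum_eq_sum (s := Finset.range N)
        (by intro b hb; rw [if_neg]; simp only [Finset.mem_range] at hb; omega)]
      exact ENNReal.sum_lt_top.mpr (fun k _ => by split <;> simp [ENNReal.ofReal_lt_top])
    · rw [← ENNReal.ofReal_tsum_of_nonneg hA hAs]
      exact ENNReal.ofReal_lt_top
  have : (⊤ : ℝ≥0∞) < ⊤ := by
    calc (⊤ : ℝ≥0∞) = ∑' n : ℕ, ((n : ℝ≥0∞) + 1) * Q n := step1.symm
    _ = ∑' (k : ℕ) (n : ℕ), (if k ≤ n then Q n else 0) := step2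
    _ = ∑' k, ENNReal.ofReal (T P k) := tsum_congr hTof
    _ ≤ ∑' k, ((if k < N then ENNReal.ofReal (T P k) else 0) + ENNReal.ofReal (A k)) :=
        ENNReal.tsum_le_tsum hbound
    _ < ⊤ := hfin
  exact absurd this (lt_irrefl _)

lemma exists_K (hP : ∀ n, 0 ≤ P n) (hPs : Summable P) (hA : ∀ n, 0 ≤ A n) (hAs : Summable A)
    (h : ¬ Summable fun n : ℕ => ((n : ℝ) + 1) * P n) :
    ∃ K : ℕ → ℕ, StrictMono K ∧
      ∀ j, A (K j) < ∑ i ∈ Finset.Ico (K j) (K (j + 1)), P i := by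
  have step : ∀ k, A k < T P k →
      ∃ l, k < l ∧ A l < T P l ∧ A k < ∑ i ∈ Finset.Ico k l, P i := by
    intro k hk
    obtain ⟨L, hL⟩ := exists_partial hP hPs hk
    obtain ⟨l, hl1, hl2⟩ := G_cofinal hP hPs hA hAs h (max L (k + 1))
    refine ⟨l, by omega, hl2, lt_of_lt_of_le hL ?_⟩
    apply Finset.sum_le_sum_of_subset_of_nonneg
    · exact Finset.Ico_subset_Ico le_rfl (le_trans (le_max_left _ _) hl1)
    · intros; exact hP _
  obtain ⟨k0, _, hk0⟩ := G_cofinal hP hPs hA hAs h 0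
  choose next hnext1 hnext2 hnext3 using step
  set F : {k : ℕ // A k < T P k} → {k : ℕ // A k < T P k} :=
    fun x => ⟨next x.1 x.2, hnext2 x.1 x.2⟩ with hF
  set K' : ℕ → {k : ℕ // A k < T P k} := fun n => F^[n] ⟨k0, hk0⟩ with hK'
  refine ⟨fun n => (K' n).1, ?_, ?_⟩
  · apply strictMono_nat_of_lt_succ
    intro n
    have hiter : K' (n + 1) = F (K' n) := Function.iterate_succ_apply' F n _
    show (K' n).1 < (K' (n + 1)).1
    rw [hiter]
    exact hnext1 _ _
  · intro j
    have hiter : K' (j + 1) = F (K' j) := Function.iterate_succ_apply' F j _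
    show A (K' j).1 < ∑ i ∈ Finset.Ico (K' j).1 (K' (j + 1)).1, P i
    rw [hiter]
    exact hnext3 _ _

end Guard2


lemma tsum_preimage_set (c : ℕ+ ≃ ℕ) (S : Set ℕ) (f : ℕ+ → ℝ) :
    ∑' m : (c ⁻¹' S), f m = ∑' i : S, f (c.symm i) := by
  have h1 := Equiv.tsum_eq
    (c.subtypeEquiv (fun m => Iff.rfl) : {m : ℕ+ // c m ∈ S} ≃ {i : ℕ // i ∈ S})
    (fun i : {i : ℕ // i ∈ S} => f (c.symm i.1))
  rw [← h1]
  apply tsum_congr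
  intro m
  congr 1
  simp

theorem stmt_10 (p : ℕ+ → ℝ) (hp : ∀ n, 0 ≤ p n) (hpsum : HasSum p 1)
    (a : ℕ+ → ℝ) (ha : ∀ n, 0 ≤ a n) (hasum : HasSum a 1)
    (δ : Equiv.Perm ℕ+) (hδ : ∀ n : ℕ+, a (δ (n + 1)) ≤ a (δ n))
    (h : ¬ Summable fun n : ℕ+ => (n : ℝ) * p (δ n)) :
    ∃ σ : Equiv.Perm ℕ+, FiniteCycles σ ∧
      {n : ℕ+ | cyclePrice σ p n ≤ a n}.Finite := by
  classical
  set e : ℕ+ ≃ ℕ := Equiv.pnatEquivNat with he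
  set c : ℕ+ ≃ ℕ := ((δ : Equiv.Perm ℕ+).symm : ℕ+ ≃ ℕ+).trans e with hc
  have hcsymm : ∀ i, c.symm i = δ (e.symm i) := fun i => rfl
  set P : ℕ → ℝ := fun i => p (c.symm i) with hPdef
  set A : ℕ → ℝ := fun i => a (c.symm i) with hAdef
  have hPnn : ∀ i, 0 ≤ P i := fun i => hp _
  have hAnn : ∀ i, 0 ≤ A i := fun i => ha _
  have hPs : Summable P := by
    have := (Equiv.summable_iff c.symm (f := p)).mpr hpsum.summable
    exact this.congr (fun i => rfl)
  have hAs : Summable A := by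
    have := (Equiv.summable_iff c.symm (f := a)).mpr hasum.summable
    exact this.congr (fun i => rfl)
  have hAanti : Antitone A := by
    apply antitone_nat_of_succ_le
    intro n
    have h1 : e.symm (n + 1) = e.symm n + 1 := rfl
    show a (c.symm (n + 1)) ≤ a (c.symm n)
    rw [hcsymm, hcsymm, h1]
    exact hδ _
  have hns : ¬ Summable fun i : ℕ => ((i : ℝ) + 1) * P i := by
    intro hs
    apply h
    have h2 : Summable ((fun n : ℕ+ => (n : ℝ) * p (δ n)) ∘ e.symm) := by
      apply hs.congr
      intro i
      have h3 : ((e.symm i : ℕ) : ℝ) = (i : ℝ) + 1 := by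
        show ((Nat.succPNat i : ℕ) : ℝ) = (i : ℝ) + 1
        simp [Nat.succPNat]
      show ((i : ℝ) + 1) * P i = ((e.symm i : ℕ) : ℝ) * p (δ (e.symm i))
      rw [h3, hPdef]
      simp only
      rw [hcsymm]
    exact (Equiv.summable_iff e.symm).mp h2
  obtain ⟨K, hK, hKsum⟩ := Guard2.exists_K hPnn hPs hAnn hAs hns
  set τ := Guard.tau hK with hτ
  set M : Equiv.Perm ℕ →* Equiv.Perm ℕ+ := MonoidHom.mk' (fun ρ => c.symm.permCongr ρ)
    (fun ρ1 ρ2 => by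
      ext x
      simp [Equiv.permCongr_apply, Equiv.Perm.mul_apply]) with hM
  set σ := M τ with hσ
  have htrans : ∀ n m : ℕ+, σ.SameCycle n m ↔ τ.SameCycle (c n) (c m) := by
    intro n m
    constructor
    · rintro ⟨z, hz⟩
      refine ⟨z, ?_⟩
      rw [hσ, ← map_zpow M τ z] at hz
      have h4 := congrArg c hz
      simpa [hM, Equiv.permCongr_apply] using h4
    · rintro ⟨z, hz⟩
      refine ⟨z, ?_⟩
      rw [hσ, ← map_zpow M τ z]
      show c.symm ((τ ^ z) (c n)) = m
      rw [hz]
      simp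
  have horb : ∀ n : ℕ+, {m : ℕ+ | σ.SameCycle n m} = c ⁻¹' {m' : ℕ | τ.SameCycle (c n) m'} := by
    intro n
    ext m
    simp [htrans, Set.mem_preimage]
  refine ⟨σ, ?_, ?_⟩
  · intro n
    rw [horb]
    apply Set.Finite.preimage c.injective.injOn
    by_cases hn : c n < K 0
    · rw [Guard.orbit_eq_singleton hK hn]
      exact Set.finite_singleton _
    · rw [Guard.orbit_eq hK (by omega)]
      exact Set.finite_Ico _ _
  · apply Set.Finite.subset (Set.Finite.preimage c.injective.injOn (Set.finite_Iio (K 0)))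
    intro n hn
    simp only [Set.mem_setOf_eq] at hn
    by_contra hcn
    simp only [Set.mem_preimage, Set.mem_Iio, not_lt] at hcn
    set j := Guard.bI K (c n) with hjj
    have hj1 : K j ≤ c n := Guard.K_bI_le hcn
    have hprice : cyclePrice σ p n = ∑ i ∈ Finset.Ico (K j) (K (j + 1)), P i := by
      rw [cyclePrice]
      have hset : {m : ℕ+ | σ.SameCycle n m} = c ⁻¹' ((Finset.Ico (K j) (K (j + 1)) : Finset ℕ) : Set ℕ) := by
        rw [horb, Guard.orbit_eq hK hcn, ← hjj, Finset.coe_Ico]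
      rw [hset, tsum_preimage_set]
      exact Finset.tsum_subtype _ (fun i => p (c.symm i))
    have han : a n = A (c n) := by
      rw [hAdef]
      simp only
      rw [Equiv.symm_apply_apply]
    have hlt : a n < cyclePrice σ p n := by
      rw [hprice, han]
      calc A (c n) ≤ A (K j) := hAanti hj1
      _ < _ := hKsum j
    linarith
end
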